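/- arXiv:2509.17199 — 9 statements merged into one kernel-verified Lean document; each statement's English description precedes it below -/
import Mathlib

section
/- The random series S(b) := ∑_{k=1}^∞ b_k E_k converges almost surely if and only if the series ∑_{k=1}^∞ b_k converges. -/
open MeasureTheory ProbabilityTheory Real Set Filter Topology
open scoped ENNReal NNReal

private lemma exp_lint' (lam c : ℝ) (hlam : 0 < lam) (hc : 0 ≤ c) :
    ∫⁻ x : ℝ, ENNReal.ofReal (Real.exp (-(c * x))) ∂(expMeasure lam)
      = ENNReal.ofReal (lam / (lam + c)) := by
  have hlc : 0 < lam + c := by linarith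
  have hpdf : Measurable (exponentialPDF lam) :=
    (measurable_exponentialPDFReal lam).ennreal_ofReal
  have hf : Measurable fun x : ℝ => ENNReal.ofReal (Real.exp (-(c * x))) :=
    (((measurable_const_mul c).neg).exp).ennreal_ofReal
  have hmeas : expMeasure lam = (volume : Measure ℝ).withDensity (exponentialPDF lam) := rfl
  rw [hmeas, lintegral_withDensity_eq_lintegral_mul _ hpdf hf]
  rw [← lintegral_add_compl
    (fun x : ℝ => (exponentialPDF lam * fun x => ENNReal.ofReal (rexp (-(c * x)))) x)
    (measurableSet_Ici (a := (0:ℝ)))]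
  have h2 : ∫⁻ x in (Ici (0:ℝ))ᶜ,
      (exponentialPDF lam * fun x => ENNReal.ofReal (rexp (-(c * x)))) x = 0 := by
    rw [compl_Ici]
    rw [setLIntegral_congr_fun (g := fun _ => (0:ℝ≥0∞)) measurableSet_Iio
      (fun x (hx : x < 0) => by
        simp [Pi.mul_apply, exponentialPDF_of_neg hx]), lintegral_zero]
  rw [h2, add_zero]
  have h3 : ∫⁻ x in Ici (0:ℝ),
      (exponentialPDF lam * fun x => ENNReal.ofReal (rexp (-(c * x)))) x
      = ∫⁻ x in Ici (0:ℝ), ENNReal.ofReal (lam * rexp (-((lam + c) * x))) := by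
    apply setLIntegral_congr_fun measurableSet_Ici
    refine fun x (hx : 0 ≤ x) => ?_
    rw [Pi.mul_apply, exponentialPDF_of_nonneg hx,
      ← ENNReal.ofReal_mul (by positivity)]
    congr 1
    rw [mul_assoc, ← Real.exp_add]
    ring_nf
  rw [h3]
  have hint : IntegrableOn (fun x : ℝ => lam * rexp (-((lam + c) * x))) (Ici (0:ℝ)) := by
    rw [integrableOn_Ici_iff_integrableOn_Ioi]
    simp_rw [neg_mul_eq_neg_mul]
    exact (exp_neg_integrableOn_Ioi 0 hlc).const_mul lam
  rw [← ofReal_integral_eq_lintegral_ofReal hint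
    (ae_of_all _ (fun x => by positivity))]
  congr 1
  rw [integral_Ici_eq_integral_Ioi, integral_const_mul]
  have := integral_comp_mul_left_Ioi (fun x => rexp (-x)) 0 hlc
  simp only [mul_zero, smul_eq_mul] at this
  rw [this, integral_exp_neg_Ioi 0]
  simp [div_eq_mul_inv]

private lemma exp_mean_lt_top' (lam : ℝ) (hlam : 0 < lam) :
    ∫⁻ x : ℝ, ENNReal.ofReal x ∂(expMeasure lam) < ⊤ := by
  have hpdf : Measurable (exponentialPDF lam) :=
    (measurable_exponentialPDFReal lam).ennreal_ofReal
  have hmeas : expMeasure lam = (volume : Measure ℝ).withDensity (exponentialPDF lam) := rfl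
  rw [hmeas, lintegral_withDensity_eq_lintegral_mul _ hpdf (ENNReal.measurable_ofReal : Measurable fun x : ℝ => ENNReal.ofReal x)]
  rw [← lintegral_add_compl
    (fun x : ℝ => (exponentialPDF lam * fun x => ENNReal.ofReal x) x)
    (measurableSet_Ici (a := (0:ℝ)))]
  have h2 : ∫⁻ x in (Ici (0:ℝ))ᶜ,
      (exponentialPDF lam * fun x => ENNReal.ofReal x) x = 0 := by
    rw [compl_Ici]
    rw [setLIntegral_congr_fun (g := fun _ => (0:ℝ≥0∞)) measurableSet_Iio
      (fun x (hx : x < 0) => by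
        simp [Pi.mul_apply, exponentialPDF_of_neg hx]), lintegral_zero]
  rw [h2, add_zero]
  have hbound : ∀ x : ℝ, 0 ≤ x →
      (exponentialPDF lam * fun x => ENNReal.ofReal x) x
        ≤ ENNReal.ofReal (2 * rexp (-(lam / 2 * x))) := by
    intro x hx
    rw [Pi.mul_apply, exponentialPDF_of_nonneg hx, ← ENNReal.ofReal_mul (by positivity)]
    apply ENNReal.ofReal_le_ofReal
    have key : lam / 2 * x ≤ rexp (lam / 2 * x) := (Real.add_one_le_exp _).trans' (by linarith)
    have h1 : lam * rexp (-(lam * x)) * x = 2 * ((lam/2 * x) * rexp (-(lam/2*x))) * rexp (-(lam/2*x)) := by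
      have : rexp (-(lam/2*x)) * rexp (-(lam/2*x)) = rexp (-(lam*x)) := by
        rw [← Real.exp_add]; ring_nf
      rw [← this]; ring
    rw [h1]
    have h2 : (lam/2*x) * rexp (-(lam/2*x)) ≤ 1 := by
      rw [Real.exp_neg]
      rw [mul_inv_le_iff₀ (exp_pos _)]
      simpa using key
    nlinarith [Real.exp_pos (-(lam/2*x)), mul_nonneg (mul_nonneg (by linarith : (0:ℝ) ≤ lam/2) hx) (Real.exp_pos (-(lam/2*x))).le]
  calc ∫⁻ x in Ici (0:ℝ), (exponentialPDF lam * fun x => ENNReal.ofReal x) x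
      ≤ ∫⁻ x in Ici (0:ℝ), ENNReal.ofReal (2 * rexp (-(lam/2 * x))) := by
        apply setLIntegral_mono' measurableSet_Ici
        exact fun x hx => hbound x hx
    _ < ⊤ := by
        apply IntegrableOn.setLIntegral_lt_top
        rw [integrableOn_Ici_iff_integrableOn_Ioi]
        simp_rw [neg_mul_eq_neg_mul]
        exact (exp_neg_integrableOn_Ioi 0 (by linarith)).const_mul 2

/-- for i.i.d. `Exp(λ)` random variables `(E_k)` and nonnegative reals `(b_k)`
with `sup_k b_k > 0`, the random series `S(b) = ∑ₖ b_k E_k` converges almost surely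
if and only if `∑ₖ b_k` converges. -/
theorem stmt3
    {Ω : Type*} [MeasurableSpace Ω] (P : Measure Ω) [IsProbabilityMeasure P]
    (lam : ℝ) (hlam : 0 < lam)
    (E : ℕ → Ω → ℝ)
    (hEmeas : ∀ k, Measurable (E k))
    (hEexp : ∀ k, Measure.map (E k) P = expMeasure lam)
    (hIndep : iIndepFun E P)
    (b : ℕ → ℝ) (hb : ∀ k, 0 ≤ b k) (hbmax : ∃ k, 0 < b k) :
    (∀ᵐ ω ∂P, Summable fun k : ℕ => b k * E k ω) ↔ Summable b := by
  -- a.e. nonnegativity of the E k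
  have hEnn : ∀ᵐ ω ∂P, ∀ k, 0 ≤ E k ω := by
    rw [ae_all_iff]
    intro k
    have h0 : P (E k ⁻¹' (Iio 0)) = 0 := by
      rw [← Measure.map_apply (hEmeas k) measurableSet_Iio, hEexp k]
      show (volume : Measure ℝ).withDensity (exponentialPDF lam) (Iio 0) = 0
      rw [withDensity_apply _ measurableSet_Iio]
      exact lintegral_exponentialPDF_of_nonpos le_rfl
    rw [ae_iff]
    convert h0 using 2
    ext ω
    simp [not_le, Set.mem_preimage]
  constructor
  · -- a.e. summable → Summable b
    intro hae
    by_contra hns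
    -- partial sums of b tend to infinity
    have hS : Tendsto (fun n => ∑ k ∈ Finset.range n, b k) atTop atTop :=
      (not_summable_iff_tendsto_nat_atTop_of_nonneg hb).mp hns
    set Y : ℕ → Ω → ℝ≥0∞ := fun k ω => ENNReal.ofReal (rexp (-(b k * E k ω))) with hY
    have hYmeas : ∀ k, Measurable (Y k) :=
      fun k => (((hEmeas k).const_mul (b k)).neg.exp).ennreal_ofReal
    have hYindep : iIndepFun Y P :=
      hIndep.comp (fun k x => ENNReal.ofReal (rexp (-(b k * x))))
        (fun k => (((measurable_const_mul (b k)).neg).exp).ennreal_ofReal)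
    have hYint : ∀ k, ∫⁻ ω, Y k ω ∂P = ENNReal.ofReal (lam / (lam + b k)) := by
      intro k
      have : ∫⁻ ω, Y k ω ∂P
          = ∫⁻ x, ENNReal.ofReal (rexp (-(b k * x))) ∂(Measure.map (E k) P) :=
        (lintegral_map ((((measurable_const_mul (b k)).neg).exp).ennreal_ofReal) (hEmeas k)).symm
      rw [this, hEexp k]
      exact exp_lint' lam (b k) hlam (hb k)
    -- product formula
    have hprod : ∀ n, ∫⁻ ω, ∏ k ∈ Finset.range n, Y k ω ∂P
        = ∏ k ∈ Finset.range n, ENNReal.ofReal (lam / (lam + b k)) := by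
      intro n
      induction n with
      | zero => simp
      | succ n ih =>
        rw [Finset.prod_range_succ (f := fun k => ENNReal.ofReal (lam / (lam + b k))), ← ih,
          ← hYint n]
        have hind := hYindep.indepFun_prod_range_succ hYmeas n
        have hmp : Measurable (∏ j ∈ Finset.range n, Y j) := by
          rw [Finset.prod_fn]
          exact Finset.measurable_prod _ (fun k _ => hYmeas k)
        have h := lintegral_mul_eq_lintegral_mul_lintegral_of_indepFun
          (f := ∏ j ∈ Finset.range n, Y j) (g := Y n) hmp (hYmeas n) hind
        simp only [Pi.mul_apply, Finset.prod_apply] at h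
        simp only [Finset.prod_range_succ]
        exact h
    -- integrals tend to zero
    have hub : ∀ n, (∏ k ∈ Finset.range n, lam / (lam + b k))
        ≤ lam / (lam + ∑ k ∈ Finset.range n, b k) := by
      intro n
      induction n with
      | zero => simp [div_self hlam.ne']
      | succ n ih =>
        rw [Finset.prod_range_succ, Finset.sum_range_succ]
        have hsn : 0 ≤ ∑ k ∈ Finset.range n, b k :=
          Finset.sum_nonneg fun k _ => hb k
        have hbn := hb n
        have step : lam / (lam + ∑ k ∈ Finset.range n, b k) * (lam / (lam + b n))
            ≤ lam / (lam + (∑ k ∈ Finset.range n, b k + b n)) := by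
          rw [div_mul_div_comm, div_le_div_iff₀ (by positivity) (by positivity)]
          nlinarith [mul_nonneg hsn hbn]
        have hnn : 0 ≤ lam / (lam + b n) := div_nonneg hlam.le (by linarith)
        calc (∏ k ∈ Finset.range n, lam / (lam + b k)) * (lam / (lam + b n))
            ≤ lam / (lam + ∑ k ∈ Finset.range n, b k) * (lam / (lam + b n)) :=
              mul_le_mul_of_nonneg_right ih hnn
          _ ≤ _ := step
    have hplim : Tendsto (fun n => ∏ k ∈ Finset.range n, lam / (lam + b k)) atTop (𝓝 0) := by
      apply squeeze_zero
        (fun n => Finset.prod_nonneg fun k _ => div_nonneg hlam.le (by linarith [hb k])) hub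
      exact Tendsto.div_atTop tendsto_const_nhds
        (tendsto_atTop_add_const_left _ _ hS)
    have hp0 : Tendsto (fun n => ∏ k ∈ Finset.range n, ENNReal.ofReal (lam / (lam + b k)))
        atTop (𝓝 0) := by
      have := ENNReal.tendsto_ofReal hplim
      rw [ENNReal.ofReal_zero] at this
      refine this.congr fun n => ?_
      exact ENNReal.ofReal_prod_of_nonneg (f := fun k => lam / (lam + b k)) (fun k _ => div_nonneg hlam.le (by linarith [hb k]))
    have hmeasn : ∀ n, Measurable fun ω => ∏ k ∈ Finset.range n, Y k ω :=
      fun n => Finset.measurable_prod _ fun k _ => hYmeas k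
    have hint0 : Tendsto (fun n => ∫⁻ ω, ∏ k ∈ Finset.range n, Y k ω ∂P) atTop (𝓝 0) := by
      simpa only [hprod] using hp0
    have hle := lintegral_liminf_le hmeasn (μ := P) (u := atTop)
    have hzero : ∫⁻ ω, liminf (fun n => ∏ k ∈ Finset.range n, Y k ω) atTop ∂P = 0 :=
      le_antisymm (by rw [hint0.liminf_eq] at hle; exact hle) (zero_le)
    have haezero : ∀ᵐ ω ∂P, liminf (fun n => ∏ k ∈ Finset.range n, Y k ω) atTop = 0 :=
      (lintegral_eq_zero_iff (Measurable.liminf hmeasn)).mp hzero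
    have hpt : ∀ᵐ ω ∂P, liminf (fun n => ∏ k ∈ Finset.range n, Y k ω) atTop
        = ENNReal.ofReal (rexp (-(∑' k, b k * E k ω))) := by
      filter_upwards [hae] with ω hω
      have ht : Tendsto (fun n => ∑ k ∈ Finset.range n, b k * E k ω) atTop
          (𝓝 (∑' k, b k * E k ω)) := hω.hasSum.tendsto_sum_nat
      have heq : ∀ n, ∏ k ∈ Finset.range n, Y k ω
          = ENNReal.ofReal (rexp (-(∑ k ∈ Finset.range n, b k * E k ω))) := by
        intro n
        rw [← ENNReal.ofReal_prod_of_nonneg (fun k _ => (exp_pos _).le)]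
        congr 1
        rw [← Real.exp_sum]
        congr 1
        rw [← Finset.sum_neg_distrib]
      have : Tendsto (fun n => ∏ k ∈ Finset.range n, Y k ω) atTop
          (𝓝 (ENNReal.ofReal (rexp (-(∑' k, b k * E k ω))))) := by
        rw [funext heq]
        exact ENNReal.tendsto_ofReal ((Real.continuous_exp.tendsto _).comp ht.neg)
      exact this.liminf_eq
    haveI : (ae P).NeBot := ae_neBot.mpr (IsProbabilityMeasure.ne_zero P)
    obtain ⟨ω, h1, h2⟩ := (haezero.and hpt).exists
    rw [h1] at h2
    exact absurd (ENNReal.ofReal_eq_zero.mp h2.symm) (exp_pos _).not_ge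
  · -- Summable b → a.e. summable
    intro hSb
    have hM := exp_mean_lt_top' lam hlam
    have hint : ∀ k, ∫⁻ ω, ENNReal.ofReal (b k * E k ω) ∂P
        = ENNReal.ofReal (b k) * ∫⁻ x : ℝ, ENNReal.ofReal x ∂(expMeasure lam) := by
      intro k
      calc ∫⁻ ω, ENNReal.ofReal (b k * E k ω) ∂P
          = ∫⁻ ω, ENNReal.ofReal (b k) * ENNReal.ofReal (E k ω) ∂P := by
            simp_rw [ENNReal.ofReal_mul (hb k)]
        _ = ENNReal.ofReal (b k) * ∫⁻ ω, ENNReal.ofReal (E k ω) ∂P :=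
            lintegral_const_mul _ ((hEmeas k).ennreal_ofReal)
        _ = ENNReal.ofReal (b k) * ∫⁻ x : ℝ, ENNReal.ofReal x ∂(expMeasure lam) := by
            rw [← hEexp k, lintegral_map ENNReal.measurable_ofReal (hEmeas k)]
    have htot : ∫⁻ ω, ∑' k, ENNReal.ofReal (b k * E k ω) ∂P < ⊤ := by
      rw [lintegral_tsum (fun k => (((hEmeas k).const_mul (b k)).ennreal_ofReal).aemeasurable)]
      rw [tsum_congr hint, ENNReal.tsum_mul_right]
      apply ENNReal.mul_lt_top _ hM
      rw [← ENNReal.ofReal_tsum_of_nonneg hb hSb]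
      exact ENNReal.ofReal_lt_top
    have hae := ae_lt_top
      (Measurable.ennreal_tsum fun k => ((hEmeas k).const_mul (b k)).ennreal_ofReal) htot.ne
    filter_upwards [hae, hEnn] with ω hω hωnn
    have hnn : ∀ k, 0 ≤ b k * E k ω := fun k => mul_nonneg (hb k) (hωnn k)
    have hs := ENNReal.summable_toReal hω.ne
    exact hs.congr fun k => ENNReal.toReal_ofReal (hnn k)
end

section
/- The random series I^{(g)} := ∑_{k=0}^∞ g(S_k) E_{k+1} is almost surely finite if and only if the series ∑_{k=1}^∞ g(k) converges. -/
open MeasureTheory ProbabilityTheory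

section Stmt5AuxA
open Finset
lemma stmt5_abel_upper (a Y : ℕ → ℝ) (ha : Antitone a) (ha0 : ∀ k, 0 ≤ a k) (hY : ∀ k, 0 ≤ Y k)
    (c d : ℝ) (hA : ∀ n : ℕ, ∑ k ∈ range n, Y k ≤ c * n + d) (n : ℕ) :
    ∑ k ∈ range n, a k * Y k ≤ c * ∑ k ∈ range n, a k + a 0 * d := by
  have key : ∀ n : ℕ, ∑ k ∈ range n, a k * Y k + a n * (c * n + d - ∑ k ∈ range n, Y k)
      ≤ c * ∑ k ∈ range n, a k + a 0 * d := by
    intro n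
    induction n with
    | zero => simp
    | succ n ih =>
      have hAn := hA (n + 1)
      push_cast at hAn ⊢
      have h1 : a (n+1) * (c * (n+1) + d - ∑ k ∈ range (n+1), Y k)
          ≤ a n * (c * (n+1) + d - ∑ k ∈ range (n+1), Y k) := by
        apply mul_le_mul_of_nonneg_right (ha (Nat.le_succ n))
        push_cast
        linarith
      rw [sum_range_succ, sum_range_succ (f := Y), sum_range_succ (f := a)] at *
      push_cast at h1 ⊢
      nlinarith [ih]
  have slack : 0 ≤ a n * (c * n + d - ∑ k ∈ range n, Y k) :=
    mul_nonneg (ha0 n) (by have := hA n; linarith)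
  linarith [key n]

lemma stmt5_abel_lower (a Y : ℕ → ℝ) (ha : Antitone a) (ha0 : ∀ k, 0 ≤ a k) (hY : ∀ k, 0 ≤ Y k)
    (c d : ℝ) (hA : ∀ n : ℕ, c * n + d ≤ ∑ k ∈ range n, Y k) (n : ℕ) :
    c * ∑ k ∈ range n, a k + a 0 * d ≤ ∑ k ∈ range n, a k * Y k := by
  have key : ∀ n : ℕ, c * ∑ k ∈ range n, a k + a 0 * d
      ≤ ∑ k ∈ range n, a k * Y k - a n * ((∑ k ∈ range n, Y k) - c * n - d) := by
    intro n
    induction n with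
    | zero => simp
    | succ n ih =>
      have hAn := hA (n + 1)
      push_cast at hAn ⊢
      have h1 : a (n+1) * ((∑ k ∈ range (n+1), Y k) - c * (n+1) - d)
          ≤ a n * ((∑ k ∈ range (n+1), Y k) - c * (n+1) - d) := by
        apply mul_le_mul_of_nonneg_right (ha (Nat.le_succ n))
        push_cast
        linarith
      simp only [sum_range_succ] at h1 hAn ⊢
      nlinarith [ih]
  have slack : 0 ≤ a n * ((∑ k ∈ range n, Y k) - c * n - d) :=
    mul_nonneg (ha0 n) (by have := hA n; linarith)
  linarith [key n]

lemma sum_div_block (h : ℕ → ℝ) (N : ℕ) (hN : 0 < N) (m : ℕ) :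
    ∑ k ∈ range (N * m), h (k / N) = N * ∑ j ∈ range m, h j := by
  induction m with
  | zero => simp
  | succ m ih =>
    rw [Nat.mul_succ, Finset.range_eq_Ico, ← Finset.sum_Ico_consecutive _ (Nat.zero_le _)
      (Nat.le_add_right _ _), ← Finset.range_eq_Ico, ih]
    have : ∀ k ∈ Finset.Ico (N * m) (N * m + N), h (k / N) = h m := by
      intro k hk
      rw [Finset.mem_Ico] at hk
      congr 1
      exact Nat.div_eq_of_lt_le (by rw [Nat.mul_comm]; exact hk.1)
        (by rw [Nat.succ_mul, Nat.mul_comm]; omega)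
    rw [Finset.sum_congr rfl this, Finset.sum_const, Nat.card_Ico, sum_range_succ]
    simp only [show N * m + N - N * m = N from by omega, show N + N * m - N * m = N from by omega]
    push_cast
    ring

lemma stmt5_sum_div_block (h : ℕ → ℝ) (N : ℕ) (m : ℕ) :
    ∑ k ∈ range (N * m), h (k / N) = N * ∑ j ∈ range m, h j := by
  induction m with
  | zero => simp
  | succ m ih =>
    rw [Nat.mul_succ, Finset.range_eq_Ico, ← Finset.sum_Ico_consecutive _ (Nat.zero_le _)
      (Nat.le_add_right _ _), ← Finset.range_eq_Ico, ih]
    have : ∀ k ∈ Finset.Ico (N * m) (N * m + N), h (k / N) = h m := by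
      intro k hk
      rw [Finset.mem_Ico] at hk
      congr 1
      exact Nat.div_eq_of_lt_le (by rw [Nat.mul_comm]; exact hk.1)
        (by rw [Nat.succ_mul, Nat.mul_comm]; omega)
    rw [Finset.sum_congr rfl this, Finset.sum_const, Nat.card_Ico, sum_range_succ]
    simp only [show N * m + N - N * m = N from by omega]
    push_cast
    ring

lemma stmt5_summable_div_helper (h : ℕ → ℝ) (h0 : ∀ k, 0 ≤ h k) (hs : Summable h)
    (N : ℕ) (hN : 0 < N) : Summable fun k => h (k / N) := by
  apply summable_of_sum_range_le (c := N * ∑' j, h j) (fun n => h0 _)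
  intro n
  calc ∑ k ∈ range n, h (k / N)
      ≤ ∑ k ∈ range (N * n), h (k / N) :=
        sum_le_sum_of_subset_of_nonneg (Finset.range_mono (Nat.le_mul_of_pos_left n hN))
          (fun i _ _ => h0 _)
    _ = N * ∑ j ∈ range n, h j := stmt5_sum_div_block h N n
    _ ≤ N * ∑' j, h j := by
        apply mul_le_mul_of_nonneg_left (Summable.sum_le_tsum _ (fun i _ => h0 i) hs)
        positivity

lemma stmt5_comp1 (g : ℝ → ℝ) (hgnn : ∀ x, 0 ≤ g x) (hganti : AntitoneOn g (Set.Ici 0))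
    (hsum : Summable (fun k : ℕ => g ((k : ℝ) + 1))) (c : ℝ) (hc : 0 < c) :
    Summable (fun k : ℕ => g (c * k)) := by
  have hhsum : Summable (fun j : ℕ => g j) := by
    rw [← summable_nat_add_iff 1]
    convert hsum using 2 with n
    · rfl
    push_cast
    ring
  set N : ℕ := ⌈1 / c⌉₊ with hNdef
  have hN : 0 < N := Nat.ceil_pos.mpr (by positivity)
  have hcN : 1 ≤ c * N := by
    have h1 : (1 : ℝ) / c ≤ N := Nat.le_ceil _
    rw [div_le_iff₀ hc] at h1
    linarith
  have hd : Summable fun k : ℕ => g ((k / N : ℕ) : ℝ) :=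
    stmt5_summable_div_helper _ (fun k => hgnn _) hhsum N hN
  apply hd.of_nonneg_of_le (fun k => hgnn _)
  intro k
  have h1 : ((k / N : ℕ) : ℝ) * N ≤ k := by exact_mod_cast Nat.div_mul_le_self k N
  have h2 : (0:ℝ) ≤ ((k / N : ℕ) : ℝ) := Nat.cast_nonneg _
  have h3 : (0:ℝ) ≤ (N:ℝ) := Nat.cast_nonneg _
  apply hganti (Set.mem_Ici.mpr h2) (Set.mem_Ici.mpr (by positivity))
  nlinarith [Nat.cast_nonneg (α := ℝ) k]

lemma stmt5_comp2 (g : ℝ → ℝ) (hgnn : ∀ x, 0 ≤ g x) (hganti : AntitoneOn g (Set.Ici 0))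
    (C : ℝ) (hC : 0 < C) (hsum : Summable (fun k : ℕ => g (C * k))) :
    Summable (fun k : ℕ => g ((k : ℝ) + 1)) := by
  set N : ℕ := ⌈C⌉₊ + 1 with hNdef
  have hN : 0 < N := Nat.succ_pos _
  have hCN : C ≤ N := by
    calc C ≤ (⌈C⌉₊ : ℝ) := Nat.le_ceil _
      _ ≤ N := by rw [hNdef]; push_cast; linarith
  have hd : Summable fun k : ℕ => g (C * ((k / N : ℕ) : ℝ)) :=
    stmt5_summable_div_helper _ (fun k => hgnn _) hsum N hN
  have hd1 : Summable fun k : ℕ => g (C * (((k + 1) / N : ℕ) : ℝ)) :=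
    (summable_nat_add_iff 1).mpr hd
  apply hd1.of_nonneg_of_le (fun k => hgnn _)
  intro k
  have h1 : (((k + 1) / N : ℕ) : ℝ) * N ≤ (k : ℝ) + 1 := by
    exact_mod_cast Nat.div_mul_le_self (k + 1) N
  have h2 : (0:ℝ) ≤ (((k + 1) / N : ℕ) : ℝ) := Nat.cast_nonneg _
  apply hganti (Set.mem_Ici.mpr (by positivity)) (Set.mem_Ici.mpr (by positivity))
  nlinarith

end Stmt5AuxA

section Stmt5AuxB
open Real Set Filter
lemma stmt5_expMeasure_eq (r : ℝ) : expMeasure r = volume.withDensity (exponentialPDF r) := rfl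

lemma stmt5_measurable_exponentialPDF (r : ℝ) : Measurable (exponentialPDF r) :=
  (measurable_exponentialPDFReal r).ennreal_ofReal

lemma stmt5_exp_pdf_bound {r : ℝ} (hr : 0 < r) (x : ℝ) :
    exponentialPDF r x * ENNReal.ofReal ‖x‖ ≤ ENNReal.ofReal (4 / r) * exponentialPDF (r/2) x := by
  rcases lt_or_ge x 0 with hx | hx
  · rw [exponentialPDF_of_neg hx]; simp
  · rw [exponentialPDF_of_nonneg hx, exponentialPDF_of_nonneg hx,
      ← ENNReal.ofReal_mul (by positivity), ← ENNReal.ofReal_mul (by positivity)]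
    apply ENNReal.ofReal_le_ofReal
    rw [Real.norm_eq_abs, abs_of_nonneg hx]
    have h1 : r * x / 2 ≤ Real.exp (r * x / 2) := by
      nlinarith [Real.add_one_le_exp (r * x / 2)]
    have h2 : Real.exp (-(r * x)) * Real.exp (r * x / 2) = Real.exp (-(r * x / 2)) := by
      rw [← Real.exp_add]; ring_nf
    have h3 : Real.exp (-(r / 2 * x)) = Real.exp (-(r * x / 2)) := by ring_nf
    have h4 := Real.exp_pos (r * x / 2)
    have h5 := Real.exp_pos (-(r * x))
    have h6 := Real.exp_pos (-(r * x / 2))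
    rw [h3]
    have key : r * x * Real.exp (-(r * x)) ≤ 2 * Real.exp (-(r * x / 2)) := by
      nlinarith
    have h7 : 4 / r * (r / 2 * Real.exp (-(r * x / 2))) = 2 * Real.exp (-(r * x / 2)) := by
      field_simp; ring
    nlinarith
lemma stmt5_integrable_id_expMeasure {r : ℝ} (hr : 0 < r) : Integrable id (expMeasure r) := by
  refine ⟨measurable_id.aestronglyMeasurable, ?_⟩
  rw [hasFiniteIntegral_iff_norm]
  calc ∫⁻ x, ENNReal.ofReal ‖(id x : ℝ)‖ ∂(expMeasure r)
      = ∫⁻ x, exponentialPDF r x * ENNReal.ofReal ‖x‖ ∂volume := by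
        rw [stmt5_expMeasure_eq, lintegral_withDensity_eq_lintegral_mul _ (stmt5_measurable_exponentialPDF r)]
        · rfl
        · exact measurable_id.norm.ennreal_ofReal
    _ ≤ ∫⁻ x, ENNReal.ofReal (4 / r) * exponentialPDF (r/2) x ∂volume :=
        lintegral_mono fun x => stmt5_exp_pdf_bound hr x
    _ = ENNReal.ofReal (4 / r) * 1 := by
        rw [lintegral_const_mul _ (stmt5_measurable_exponentialPDF _),
          lintegral_exponentialPDF_eq_one (by linarith)]
    _ < ⊤ := by simp [ENNReal.ofReal_lt_top]

lemma stmt5_expMeasure_Iio_zero {r : ℝ} : expMeasure r (Iio 0) = 0 := by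
  rw [stmt5_expMeasure_eq, withDensity_apply _ measurableSet_Iio]
  exact lintegral_exponentialPDF_of_nonpos le_rfl

lemma stmt5_expMeasure_Ioi_one_pos {r : ℝ} (hr : 0 < r) : 0 < expMeasure r (Ioi 1) := by
  haveI := isProbabilityMeasure_expMeasure hr
  have hIic : expMeasure r (Iic 1) < 1 := by
    have h1 : (expMeasure r (Iic 1)).toReal = 1 - rexp (-(r * 1)) := by
      have := cdf_expMeasure_eq hr 1
      rw [cdf_eq_real, measureReal_def] at this
      simpa using this
    have h2 : expMeasure r (Iic 1) ≤ 1 := prob_le_one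
    have h3 : (expMeasure r (Iic 1)).toReal < 1 := by
      rw [h1]; have := Real.exp_pos (-(r * 1)); linarith
    rcases lt_or_ge (expMeasure r (Iic 1)) 1 with h | h
    · exact h
    · exfalso
      have : expMeasure r (Iic 1) = 1 := le_antisymm h2 h
      rw [this] at h3; simp at h3
  have hc : expMeasure r (Ioi 1) = 1 - expMeasure r (Iic 1) := by
    have := measure_compl (μ := expMeasure r) (measurableSet_Iic (a := (1:ℝ))) (measure_ne_top _ _)
    rw [Set.compl_Iic] at this
    simpa using this
  rw [hc]
  exact tsub_pos_of_lt hIic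

lemma stmt5_integral_min_one_pos {r : ℝ} (hr : 0 < r) : 0 < ∫ x, min x 1 ∂(expMeasure r) := by
  haveI := isProbabilityMeasure_expMeasure hr
  have hae : ∀ᵐ x ∂(expMeasure r), 0 ≤ x := by
    rw [ae_iff]
    have : {x : ℝ | ¬ 0 ≤ x} = Iio 0 := by ext x; simp
    rw [this]; exact stmt5_expMeasure_Iio_zero
  have hint1 : Integrable (fun x => min x 1) (expMeasure r) := by
    apply Integrable.mono' ((stmt5_integrable_id_expMeasure hr).abs.add (integrable_const 1))
    · exact (measurable_id.min measurable_const).aestronglyMeasurable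
    · filter_upwards with x
      calc ‖min x 1‖ = |min x 1| := rfl
        _ ≤ max |x| |1| := abs_min_le_max_abs_abs
        _ ≤ |x| + 1 := by
          rw [max_le_iff]
          constructor
          · linarith
          · rw [abs_one]; linarith [abs_nonneg x]
  have hint2 : Integrable ((Ioi (1:ℝ)).indicator fun _ => (1:ℝ)) (expMeasure r) := by
    rw [integrable_indicator_iff measurableSet_Ioi]
    exact integrableOn_const (measure_ne_top _ _)
  have hle : (Ioi (1:ℝ)).indicator (fun _ => (1:ℝ)) ≤ᵐ[expMeasure r] fun x => min x 1 := by
    filter_upwards [hae] with x hx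
    by_cases h : x ∈ Ioi (1:ℝ)
    · rw [Set.indicator_of_mem h]
      simp only [mem_Ioi] at h
      rw [min_def]
      split_ifs with h2
      · linarith
      · linarith
    · rw [Set.indicator_of_notMem h]
      simp only [mem_Ioi, not_lt] at h
      simp [le_min_iff]; exact hx
  have : 0 < ∫ x, (Ioi (1:ℝ)).indicator (fun _ => (1:ℝ)) x ∂(expMeasure r) := by
    rw [integral_indicator measurableSet_Ioi, setIntegral_const, smul_eq_mul, mul_one]
    exact ENNReal.toReal_pos (stmt5_expMeasure_Ioi_one_pos hr).ne' (measure_ne_top _ _)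
  calc (0:ℝ) < _ := this
    _ ≤ ∫ x, min x 1 ∂(expMeasure r) := integral_mono_ae hint2 hint1 hle

end Stmt5AuxB

section Stmt5Main
open Real Set Filter




/-- for a decreasing `g : [0,∞) → [0,∞)` with `g(0) > 0`, the random series
`I^{(g)} = ∑ₖ g(S_k) E_{k+1}` is almost surely finite if and only if `∑_{k≥1} g(k)`
converges. -/
theorem stmt5
    {Ω : Type*} [MeasurableSpace Ω] (P : Measure Ω) [IsProbabilityMeasure P]
    (lam : ℝ) (hlam : 0 < lam)
    (g : ℝ → ℝ) (hgnn : ∀ x, 0 ≤ g x) (hganti : AntitoneOn g (Set.Ici 0))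
    (hg0 : 0 < g 0)
    (Z : ℕ → Ω → ℝ) (E : ℕ → Ω → ℝ)
    (hZmeas : ∀ i, Measurable (Z i))
    (hEmeas : ∀ k, Measurable (E k))
    (hZnn : ∀ i, ∀ ω, 0 ≤ Z i ω)
    (hZid : ∀ i, Measure.map (Z i) P = Measure.map (Z 0) P)
    (hZint : Integrable (Z 0) P) (hZmean : 0 < ∫ ω, Z 0 ω ∂P)
    (hEexp : ∀ k, Measure.map (E k) P = expMeasure lam)
    (hIndep : iIndepFun (Sum.elim Z E) P)
    (S : ℕ → Ω → ℝ) (hS : ∀ k ω, S k ω = ∑ i ∈ Finset.range k, Z i ω) :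
    (∀ᵐ ω ∂P, Summable fun k : ℕ => g (S k ω) * E k ω) ↔
      Summable (fun k : ℕ => g ((k : ℝ) + 1)) := by
  -- independence of the Z's and E's
  have hZpair : Pairwise (Function.onFun (IndepFun · · P) Z) := fun i j hij =>
    hIndep.indepFun (show (Sum.inl i : ℕ ⊕ ℕ) ≠ Sum.inl j from fun h => hij (Sum.inl.inj h))
  have hEpair : Pairwise (Function.onFun (IndepFun · · P) E) := fun i j hij =>
    hIndep.indepFun (show (Sum.inr i : ℕ ⊕ ℕ) ≠ Sum.inr j from fun h => hij (Sum.inr.inj h))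
  have hZident : ∀ i, IdentDistrib (Z i) (Z 0) P P := fun i =>
    ⟨(hZmeas i).aemeasurable, (hZmeas 0).aemeasurable, hZid i⟩
  have hEident : ∀ i, IdentDistrib (E i) (E 0) P P := fun i =>
    ⟨(hEmeas i).aemeasurable, (hEmeas 0).aemeasurable, by rw [hEexp i, hEexp 0]⟩
  have hEint : ∀ k, Integrable (E k) P := fun k => by
    have h1 : Integrable id (Measure.map (E k) P) := by
      rw [hEexp k]; exact stmt5_integrable_id_expMeasure hlam
    exact (integrable_map_measure measurable_id.aestronglyMeasurable
      (hEmeas k).aemeasurable).mp h1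
  -- truncated E's
  set f : ℝ → ℝ := fun x => min x 1 with hfdef
  have hfmeas : Measurable f := measurable_id.min measurable_const
  set Y : ℕ → Ω → ℝ := fun k ω => f (E k ω) with hYdef
  have hYpair : Pairwise (Function.onFun (IndepFun · · P) Y) := fun i j hij =>
    (hEpair hij).comp hfmeas hfmeas
  have hYident : ∀ i, IdentDistrib (Y i) (Y 0) P P := fun i => (hEident i).comp hfmeas
  have hYint : Integrable (Y 0) P := by
    apply Integrable.mono' ((hEint 0).abs.add (integrable_const 1))
    · exact (hfmeas.comp (hEmeas 0)).aestronglyMeasurable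
    · filter_upwards with ω
      calc ‖Y 0 ω‖ = |min (E 0 ω) 1| := rfl
        _ ≤ max |E 0 ω| |1| := abs_min_le_max_abs_abs
        _ ≤ |E 0 ω| + 1 := by
            rw [max_le_iff]
            refine ⟨by linarith, by rw [abs_one]; linarith [abs_nonneg (E 0 ω)]⟩
  -- strong laws
  have hSLLNZ := strong_law_ae_real Z hZint hZpair hZident
  have hSLLNE := strong_law_ae_real E (hEint 0) hEpair hEident
  have hSLLNY := strong_law_ae_real Y hYint hYpair hYident
  set μ : ℝ := P[Z 0] with hμdef
  have hμpos : 0 < μ := hZmean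
  set μY : ℝ := P[Y 0] with hμYdef
  have hμYpos : 0 < μY := by
    have h1 : μY = ∫ x, min x 1 ∂(expMeasure lam) := by
      rw [hμYdef, ← hEexp 0,
        integral_map (hEmeas 0).aemeasurable hfmeas.aestronglyMeasurable]
    rw [h1]; exact stmt5_integral_min_one_pos hlam
  -- a.s. nonnegativity of the E's
  have hEnn : ∀ᵐ ω ∂P, ∀ k, 0 ≤ E k ω := by
    rw [ae_all_iff]
    intro k
    rw [ae_iff]
    have h1 : {ω | ¬ 0 ≤ E k ω} = E k ⁻¹' (Iio 0) := by ext ω; simp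
    rw [h1, ← Measure.map_apply (hEmeas k) measurableSet_Iio, hEexp k]
    exact stmt5_expMeasure_Iio_zero
  have hμEnn : 0 ≤ P[E 0] := by
    apply integral_nonneg_of_ae
    filter_upwards [hEnn] with ω hω using hω 0
  have hSnn : ∀ k ω, 0 ≤ S k ω := fun k ω => by
    rw [hS]; exact Finset.sum_nonneg fun i _ => hZnn i ω
  set μE : ℝ := P[E 0] with hμEdef
  clear_value μ μY μE
  constructor
  · -- forward direction
    intro hae
    obtain ⟨ω, hsumω, hZω, hYω, hEnnω⟩ :=
      (hae.and (hSLLNZ.and (hSLLNY.and hEnn))).exists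
    obtain ⟨C0, hC0pos, hC0gt⟩ : ∃ C0 : ℝ, 0 < C0 ∧ μ < C0 := ⟨μ + 1, by linarith, by linarith⟩
    obtain ⟨ρ, hρpos, hρlt⟩ : ∃ ρ : ℝ, 0 < ρ ∧ ρ < μY := ⟨μY / 2, by linarith, by linarith⟩
    -- S k ω ≤ C0 * k eventually
    obtain ⟨M₁, hM₁⟩ := (((hZω.eventually (eventually_le_nhds (hC0gt))).and
      (eventually_ge_atTop 1)).exists_forall_of_atTop)
    have hSupper : ∀ k ≥ M₁, S k ω ≤ C0 * k := by
      intro k hk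
      obtain ⟨h1, h2⟩ := hM₁ k hk
      have hkpos : (0:ℝ) < k := by exact_mod_cast h2
      rw [hS]
      rw [div_le_iff₀ hkpos] at h1
      linarith [h1]
    -- partial sums of Y bounded below
    obtain ⟨M₂, hM₂⟩ := (((hYω.eventually (eventually_ge_nhds (hρlt))).and
      (eventually_ge_atTop 1)).exists_forall_of_atTop)
    have hYnnω : ∀ k, 0 ≤ Y k ω := fun k => le_min (hEnnω k) zero_le_one
    have hYlower : ∀ n : ℕ, ρ * n + (-(ρ * M₂)) ≤ ∑ k ∈ Finset.range n, Y k ω := by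
      intro n
      rcases le_or_gt M₂ n with h | h
      · obtain ⟨h1, h2⟩ := hM₂ n h
        have hnpos : (0:ℝ) < n := by exact_mod_cast h2
        rw [le_div_iff₀ hnpos] at h1
        have : (0:ℝ) ≤ ρ * M₂ := by positivity
        linarith
      · have h1 : (0:ℝ) ≤ ∑ k ∈ Finset.range n, Y k ω :=
          Finset.sum_nonneg fun k _ => hYnnω k
        have h2 : (n:ℝ) ≤ M₂ := by exact_mod_cast h.le
        nlinarith
    obtain ⟨a, hadef⟩ : ∃ a : ℕ → ℝ, a = fun k : ℕ => g (C0 * (k:ℝ)) := ⟨_, rfl⟩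
    have haanti : Antitone a := by
      rw [hadef]
      intro i j hij
      refine hganti (Set.mem_Ici.mpr (mul_nonneg hC0pos.le (Nat.cast_nonneg _)))
        (Set.mem_Ici.mpr (mul_nonneg hC0pos.le (Nat.cast_nonneg _))) ?_
      exact mul_le_mul_of_nonneg_left (by exact_mod_cast hij) hC0pos.le
    have hann : ∀ k, 0 ≤ a k := fun k => by rw [hadef]; exact hgnn _
    -- Summable (a * Y) at ω
    have h1 : Summable fun k => g (S (k + M₁) ω) * E (k + M₁) ω :=
      (summable_nat_add_iff (f := fun k => g (S k ω) * E k ω) M₁).mpr hsumω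
    have h2 : Summable fun k => a (k + M₁) * Y (k + M₁) ω := by
      apply h1.of_nonneg_of_le
        (fun k => mul_nonneg (hann _) (hYnnω _))
      intro k
      have hga : a (k + M₁) ≤ g (S (k + M₁) ω) := by
        rw [hadef]
        apply hganti (Set.mem_Ici.mpr (hSnn _ _))
          (Set.mem_Ici.mpr (mul_nonneg hC0pos.le (Nat.cast_nonneg _)))
        exact hSupper (k + M₁) (Nat.le_add_left _ _)
      have hYE : Y (k + M₁) ω ≤ E (k + M₁) ω := min_le_left _ _
      exact mul_le_mul hga hYE (hYnnω _) (hgnn _)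
    have haY : Summable fun k => a k * Y k ω :=
      (summable_nat_add_iff (f := fun k => a k * Y k ω) M₁).mp h2
    -- bounded partial sums of a
    have hbound : ∀ n : ℕ, ∑ k ∈ Finset.range n, a k
        ≤ ((∑' k, a k * Y k ω) + a 0 * (ρ * M₂)) / ρ := by
      intro n
      have h3 := stmt5_abel_lower a (fun k => Y k ω) haanti hann hYnnω ρ (-(ρ * M₂)) hYlower n
      have h4 : ∑ k ∈ Finset.range n, a k * Y k ω ≤ ∑' k, a k * Y k ω :=
        Summable.sum_le_tsum _ (fun k _ => mul_nonneg (hann _) (hYnnω _)) haY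
      rw [le_div_iff₀ hρpos]
      nlinarith
    have hasum : Summable a := summable_of_sum_range_le hann hbound
    rw [hadef] at hasum
    exact stmt5_comp2 g hgnn hganti C0 hC0pos hasum
  · -- reverse direction
    intro hsum
    obtain ⟨c0, hc0pos, hc0lt⟩ : ∃ c0 : ℝ, 0 < c0 ∧ c0 < μ := ⟨μ / 2, by linarith, by linarith⟩
    have hga : Summable (fun k : ℕ => g (c0 * k)) := stmt5_comp1 g hgnn hganti hsum c0 hc0pos
    obtain ⟨R, hRpos, hRgt⟩ : ∃ R : ℝ, 0 < R ∧ μE < R := ⟨μE + 1, by linarith, by linarith⟩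
    filter_upwards [hSLLNZ, hSLLNE, hEnn] with ω hZω hEω hEnnω
    -- S k ω ≥ c0 * k eventually
    obtain ⟨M₁, hM₁⟩ := (((hZω.eventually (eventually_ge_nhds (hc0lt))).and (eventually_ge_atTop 1)).exists_forall_of_atTop)
    have hSlower : ∀ k ≥ M₁, c0 * k ≤ S k ω := by
      intro k hk
      obtain ⟨h1, h2⟩ := hM₁ k hk
      have hkpos : (0:ℝ) < k := by exact_mod_cast h2
      rw [hS]
      rw [le_div_iff₀ hkpos] at h1
      linarith
    -- partial sums of E bounded above
    obtain ⟨M₂, hM₂⟩ := (((hEω.eventually (eventually_le_nhds (hRgt))).and (eventually_ge_atTop 1)).exists_forall_of_atTop)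
    set d : ℝ := ∑ k ∈ Finset.range M₂, E k ω with hddef
    have hEupper : ∀ n : ℕ, ∑ k ∈ Finset.range n, E k ω ≤ R * n + d := by
      intro n
      rcases le_or_gt M₂ n with h | h
      · obtain ⟨h1, h2⟩ := hM₂ n h
        have hnpos : (0:ℝ) < n := by exact_mod_cast h2
        rw [div_le_iff₀ hnpos] at h1
        have hd0 : 0 ≤ d := Finset.sum_nonneg fun k _ => hEnnω k
        linarith
      · have h1 : ∑ k ∈ Finset.range n, E k ω ≤ d := by
          apply Finset.sum_le_sum_of_subset_of_nonneg
            (Finset.range_mono h.le) (fun k _ _ => hEnnω k)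
        have h2 : (0:ℝ) ≤ R * n := by positivity
        linarith
    obtain ⟨a, hadef⟩ : ∃ a : ℕ → ℝ, a = fun k : ℕ => g (c0 * (k:ℝ)) := ⟨_, rfl⟩
    have haanti : Antitone a := by
      rw [hadef]
      intro i j hij
      refine hganti (Set.mem_Ici.mpr (mul_nonneg hc0pos.le (Nat.cast_nonneg _)))
        (Set.mem_Ici.mpr (mul_nonneg hc0pos.le (Nat.cast_nonneg _))) ?_
      exact mul_le_mul_of_nonneg_left (by exact_mod_cast hij) hc0pos.le
    have hann : ∀ k, 0 ≤ a k := fun k => by rw [hadef]; exact hgnn _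
    have hgasum : Summable a := by rw [hadef]; exact hga
    have haE : Summable fun k => a k * E k ω := by
      apply summable_of_sum_range_le
        (c := R * (∑' k, a k) + a 0 * d) (fun k => mul_nonneg (hann _) (hEnnω _))
      intro n
      have h3 := stmt5_abel_upper a (fun k => E k ω) haanti hann hEnnω R d hEupper n
      have h4 : ∑ k ∈ Finset.range n, a k ≤ ∑' k, a k :=
        Summable.sum_le_tsum _ (fun k _ => hann k) hgasum
      have h5 := mul_le_mul_of_nonneg_left h4 hRpos.le
      linarith
    have htail : Summable fun k => a (k + M₁) * E (k + M₁) ω :=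
      (summable_nat_add_iff (f := fun k => a k * E k ω) M₁).mpr haE
    have htail2 : Summable fun k => g (S (k + M₁) ω) * E (k + M₁) ω := by
      apply htail.of_nonneg_of_le (fun k => mul_nonneg (hgnn _) (hEnnω _))
      intro k
      have hga2 : g (S (k + M₁) ω) ≤ a (k + M₁) := by
        rw [hadef]
        apply hganti (Set.mem_Ici.mpr (mul_nonneg hc0pos.le (Nat.cast_nonneg _)))
          (Set.mem_Ici.mpr (hSnn _ _))
        exact hSlower (k + M₁) (Nat.le_add_left _ _)
      exact mul_le_mul_of_nonneg_right hga2 (hEnnω _)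
    exact (summable_nat_add_iff (f := fun k => g (S k ω) * E k ω) M₁).mp htail2

end Stmt5Main
end

section
/- The random variable I^{(g)} := ∑_{k=0}^∞ g(S_k) E_{k+1} is almost surely finite, for every real u > −λ/g(0) its Laplace transform E[e^{−u I^{(g)}}] is finite, and E[e^{−u I^{(g)}}] = lim_{K→∞} E[ ∏_{k=0}^K λ/(λ + g(S_k) u) ]; in particular I^{(g)} has finite moments of all orders. -/
open MeasureTheory ProbabilityTheory Filter Real Set
open scoped ENNReal NNReal

lemma aux_summable_div {f : ℕ → ℝ} (hf0 : ∀ n, 0 ≤ f n) (hf : Summable f) (N : ℕ)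
    (hN : N ≠ 0) : Summable fun k : ℕ => f (k / N) := by
  haveI : NeZero N := ⟨hN⟩
  have h1 : Summable fun p : ℕ × Fin N => f p.1 := by
    rw [summable_prod_of_nonneg (fun p => hf0 p.1)]
    refine ⟨fun x => summable_of_finite_support (Set.toFinite _), ?_⟩
    have : (fun x : ℕ => ∑' _ : Fin N, f x) = fun x => (N : ℝ) * f x := by
      funext x
      simp [tsum_fintype, Finset.sum_const, nsmul_eq_mul]
    rw [this]
    exact hf.mul_left _
  have := (Nat.divModEquiv N).summable_iff (f := fun p : ℕ × Fin N => f p.1)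
  rw [← this] at h1
  exact h1

lemma aux_exp_Ioi {c : ℝ} (hc : 0 < c) : ∫ x in Ioi (0:ℝ), Real.exp (-(c * x)) = 1 / c := by
  have hderiv : ∀ x ∈ Ioi (0:ℝ), HasDerivAt (fun a => -Real.exp (-(c * a)) / c)
      (Real.exp (-(c * x))) x := by
    intro x _
    have := (ProbabilityTheory.hasDerivAt_neg_exp_mul_exp (r := c) (x := x)).div_const c
    simpa [mul_div_assoc, mul_comm, mul_div_cancel_left₀ _ hc.ne'] using this
  have hcont : ContinuousWithinAt (fun a => -Real.exp (-(c * a)) / c) (Ici 0) 0 :=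
    (Continuous.div_const (continuous_exp.comp (continuous_const.mul continuous_id).neg).neg c).continuousWithinAt
  have hint : IntegrableOn (fun x => Real.exp (-(c * x))) (Ioi (0:ℝ)) := by
    simpa [neg_mul] using exp_neg_integrableOn_Ioi (0:ℝ) hc
  have htend : Tendsto (fun a => -Real.exp (-(c * a)) / c) atTop (nhds 0) := by
    have h1 : Tendsto (fun a : ℝ => c * a) atTop atTop :=
      Tendsto.const_mul_atTop hc tendsto_id
    have h2 : Tendsto (fun a : ℝ => Real.exp (-(c * a))) atTop (nhds 0) :=
      Real.tendsto_exp_neg_atTop_nhds_zero.comp h1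
    simpa using (h2.neg.div_const c)
  have := MeasureTheory.integral_Ioi_of_hasDerivAt_of_tendsto hcont hderiv hint htend
  rw [this]
  simp [neg_div]

lemma aux_expMeasure_eq (lam : ℝ) :
    expMeasure lam = MeasureTheory.volume.withDensity (exponentialPDF lam) := rfl

lemma aux_expMeasure_Iio (lam : ℝ) : expMeasure lam (Set.Iio 0) = 0 := by
  rw [aux_expMeasure_eq, withDensity_apply _ measurableSet_Iio]
  exact ProbabilityTheory.lintegral_exponentialPDF_of_nonpos le_rfl

lemma aux_exp_lintegral {lam b : ℝ} (hlam : 0 < lam) (hb : -lam < b) :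
    ∫⁻ x, ENNReal.ofReal (Real.exp (-(b * x))) ∂(expMeasure lam)
      = ENNReal.ofReal (lam / (lam + b)) := by
  have hcb : 0 < lam + b := by linarith
  have hm : Measurable fun x : ℝ => Real.exp (-(b * x)) := by fun_prop
  rw [aux_expMeasure_eq,
    show exponentialPDF lam = fun x => ENNReal.ofReal (exponentialPDFReal lam x) from rfl,
    lintegral_withDensity_eq_lintegral_mul _ (measurable_exponentialPDFReal lam).ennreal_ofReal
      hm.ennreal_ofReal]
  have hpt : ∀ x : ℝ, ((fun x => ENNReal.ofReal (exponentialPDFReal lam x)) * fun x => ENNReal.ofReal (Real.exp (-(b * x)))) x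
      = Set.indicator (Set.Ici (0:ℝ))
        (fun x => ENNReal.ofReal (lam * Real.exp (-((lam + b) * x)))) x := by
    intro x
    simp only [Pi.mul_apply]
    rw [show ENNReal.ofReal (exponentialPDFReal lam x)
        = ENNReal.ofReal (if 0 ≤ x then lam * Real.exp (-(lam * x)) else 0) from
      exponentialPDF_eq lam x]
    simp only [Set.indicator_apply, Set.mem_Ici]
    by_cases hx : 0 ≤ x
    · rw [if_pos hx, if_pos hx, ← ENNReal.ofReal_mul (by positivity)]
      congr 1
      rw [mul_assoc, ← Real.exp_add]
      ring_nf
    · rw [if_neg hx, if_neg hx]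
      simp
  simp only [hpt]
  rw [lintegral_indicator measurableSet_Ici]
  have hint : IntegrableOn (fun x => lam * Real.exp (-((lam + b) * x))) (Set.Ici (0:ℝ)) := by
    rw [integrableOn_Ici_iff_integrableOn_Ioi]
    have h1 : IntegrableOn (fun x => Real.exp (-((lam + b) * x))) (Set.Ioi (0:ℝ)) := by
      have := exp_neg_integrableOn_Ioi (0:ℝ) hcb
      simpa [neg_mul] using this.congr_fun (fun x _ => by ring_nf) measurableSet_Ioi
    exact h1.const_mul lam
  rw [← ofReal_integral_eq_lintegral_ofReal hint
      (Filter.Eventually.of_forall fun x => by positivity)]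
  congr 1
  rw [MeasureTheory.integral_Ici_eq_integral_Ioi, MeasureTheory.integral_const_mul,
    aux_exp_Ioi hcb]
  field_simp

lemma aux_exp_integrable {lam b : ℝ} (hlam : 0 < lam) (hb : -lam < b) :
    Integrable (fun x => Real.exp (-(b * x))) (expMeasure lam) := by
  have hm : Measurable fun x : ℝ => Real.exp (-(b * x)) := by fun_prop
  refine ⟨hm.aestronglyMeasurable, ?_⟩
  show ∫⁻ x, ‖Real.exp (-(b * x))‖₊ ∂(expMeasure lam) < ⊤
  calc ∫⁻ x, ‖Real.exp (-(b * x))‖₊ ∂(expMeasure lam)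
      = ∫⁻ x, ENNReal.ofReal (Real.exp (-(b * x))) ∂(expMeasure lam) := by
        congr 1; funext x; exact Real.enorm_eq_ofReal (Real.exp_pos _).le
    _ = ENNReal.ofReal (lam / (lam + b)) := aux_exp_lintegral hlam hb
    _ < ⊤ := ENNReal.ofReal_lt_top

lemma aux_exp_integral {lam b : ℝ} (hlam : 0 < lam) (hb : -lam < b) :
    ∫ x, Real.exp (-(b * x)) ∂(expMeasure lam) = lam / (lam + b) := by
  have hcb : 0 < lam + b := by linarith
  rw [MeasureTheory.integral_eq_lintegral_of_nonneg_ae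
      (Filter.Eventually.of_forall fun x => (Real.exp_pos _).le)
      (by fun_prop : Measurable fun x : ℝ => Real.exp (-(b * x))).aestronglyMeasurable,
    aux_exp_lintegral hlam hb, ENNReal.toReal_ofReal (by positivity)]


set_option maxHeartbeats 1000000 in
lemma aux_key {Ω : Type*} [MeasurableSpace Ω] (P : Measure Ω) [IsProbabilityMeasure P]
    (lam : ℝ) (hlam : 0 < lam)
    (gm : ℝ → ℝ) (hgm_meas : Measurable gm) (hgm_nn : ∀ s, 0 ≤ gm s)
    (Z : ℕ → Ω → ℝ) (E : ℕ → Ω → ℝ)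
    (hZmeas : ∀ i, Measurable (Z i)) (hEmeas : ∀ k, Measurable (E k))
    (hEexp : ∀ k, Measure.map (E k) P = expMeasure lam)
    (hIndep : iIndepFun (Sum.elim Z E) P)
    (S : ℕ → Ω → ℝ) (hS : ∀ k ω, S k ω = ∑ i ∈ Finset.range k, Z i ω)
    (u eps : ℝ) (heps : 0 < eps) (hden : ∀ s : ℝ, eps ≤ lam + gm s * u)
    (K : ℕ) :
    Integrable (fun ω => ∏ k ∈ Finset.range (K+1), lam / (lam + gm (S k ω) * u)) P ∧
    Integrable (fun ω => Real.exp (-(u * ∑ k ∈ Finset.range (K+1), gm (S k ω) * E k ω))) P ∧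
    ∫ ω, Real.exp (-(u * ∑ k ∈ Finset.range (K+1), gm (S k ω) * E k ω)) ∂P
      = ∫ ω, ∏ k ∈ Finset.range (K+1), lam / (lam + gm (S k ω) * u) ∂P := by
  classical
  have hSmeas : ∀ k, Measurable (S k) := by
    intro k
    have : S k = fun ω => ∑ i ∈ Finset.range k, Z i ω := funext fun ω => hS k ω
    rw [this]
    exact Finset.measurable_sum _ fun i _ => hZmeas i
  have hgmS : ∀ k, Measurable fun ω => gm (S k ω) := fun k => hgm_meas.comp (hSmeas k)
  have hden_pos : ∀ s : ℝ, 0 < lam + gm s * u := fun s => lt_of_lt_of_le heps (hden s)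
  have hcb : ∀ s : ℝ, -lam < u * gm s := by
    intro s
    have h := hden_pos s
    have : gm s * u = u * gm s := mul_comm _ _
    linarith
  have hElim_meas : ∀ i : ℕ ⊕ ℕ, Measurable (Sum.elim Z E i) := by
    rintro (i | i)
    · exact hZmeas i
    · exact hEmeas i
  haveI : IsProbabilityMeasure (expMeasure lam) := isProbabilityMeasure_expMeasure hlam
  -- the interpolating family
  set T : ℕ → Ω → ℝ := fun j ω =>
    (∏ k ∈ Finset.range j, Real.exp (-(u * (gm (S k ω) * E k ω)))) *
      ∏ k ∈ Finset.Ico j (K+1), lam / (lam + gm (S k ω) * u) with hT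
  have hTmeas : ∀ j, Measurable (T j) := by
    intro j
    apply Measurable.mul
    · exact Finset.measurable_prod _ fun k _ => (((hgmS k).mul (hEmeas k)).const_mul u).neg.exp
    · exact Finset.measurable_prod _ fun k _ =>
        (measurable_const.div ((((hgmS k)).mul_const u).const_add lam))
  have hfac_pos : ∀ k ω, 0 < lam / (lam + gm (S k ω) * u) :=
    fun k ω => div_pos hlam (hden_pos _)
  have hfac_le : ∀ k ω, lam / (lam + gm (S k ω) * u) ≤ lam / eps :=
    fun k ω => div_le_div_of_nonneg_left hlam.le heps (hden _)
  have hT0int : Integrable (T 0) P := by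
    apply Integrable.mono' (integrable_const ((lam / eps) ^ (K+1))) (hTmeas 0).aestronglyMeasurable
    refine Filter.Eventually.of_forall fun ω => ?_
    have h1 : (0:ℝ) ≤ T 0 ω := by
      rw [hT]
      simp only [Finset.range_zero, Finset.prod_empty, one_mul]
      exact Finset.prod_nonneg fun k _ => (hfac_pos k ω).le
    rw [Real.norm_of_nonneg h1, hT]
    simp only [Finset.range_zero, Finset.prod_empty, one_mul]
    calc ∏ k ∈ Finset.Ico 0 (K+1), lam / (lam + gm (S k ω) * u)
        ≤ ∏ _k ∈ Finset.Ico 0 (K+1), lam / eps :=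
          Finset.prod_le_prod (fun k _ => (hfac_pos k ω).le) (fun k _ => hfac_le k ω)
      _ = (lam / eps) ^ (K+1) := by rw [Finset.prod_const, Nat.card_Ico, Nat.sub_zero]
  -- the inductive step
  have hstep : ∀ j, j ≤ K → Integrable (T j) P →
      Integrable (T (j+1)) P ∧ ∫ ω, T (j+1) ω ∂P = ∫ ω, T j ω ∂P := by
    intro j hjK hTj
    set Sfin : Finset (ℕ ⊕ ℕ) :=
      (Finset.range (K+1)).image Sum.inl ∪ (Finset.range j).image Sum.inr with hSfin
    have hmemZ : ∀ i, i < K + 1 → Sum.inl i ∈ Sfin := fun i h =>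
      Finset.mem_union_left _ (Finset.mem_image_of_mem _ (Finset.mem_range.mpr h))
    have hmemE : ∀ k, k < j → Sum.inr k ∈ Sfin := fun k h =>
      Finset.mem_union_right _ (Finset.mem_image_of_mem _ (Finset.mem_range.mpr h))
    have hdisj : Disjoint Sfin ({Sum.inr j} : Finset (ℕ ⊕ ℕ)) := by
      rw [Finset.disjoint_singleton_right, hSfin]
      simp
    have hindfin := hIndep.indepFun_finset Sfin {Sum.inr j} hdisj hElim_meas
    -- package into a nicer pair of functions
    set F : (↥Sfin → ℝ) → (ℕ → ℝ) × (ℕ → ℝ) := fun v =>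
      (fun i => if h : Sum.inl i ∈ Sfin then v ⟨Sum.inl i, h⟩ else 0,
       fun k => if h : Sum.inr k ∈ Sfin then v ⟨Sum.inr k, h⟩ else 0) with hF
    have hFmeas : Measurable F := by
      apply Measurable.prod
      · apply measurable_pi_lambda
        intro i
        by_cases h : Sum.inl i ∈ Sfin
        · simp only [hF, dif_pos h]
          exact measurable_pi_apply _
        · simp only [hF, dif_neg h]
          exact measurable_const
      · apply measurable_pi_lambda
        intro k
        by_cases h : Sum.inr k ∈ Sfin
        · simp only [hF, dif_pos h]
          exact measurable_pi_apply _
        · simp only [hF, dif_neg h]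
          exact measurable_const
    set Gev : (↥({Sum.inr j} : Finset (ℕ ⊕ ℕ)) → ℝ) → ℝ :=
      fun v => v ⟨Sum.inr j, Finset.mem_singleton_self _⟩ with hGev
    have hGmeas : Measurable Gev := measurable_pi_apply _
    set X : Ω → (ℕ → ℝ) × (ℕ → ℝ) :=
      F ∘ (fun a (i : ↥Sfin) => Sum.elim Z E ↑i a) with hX
    have hXmeas : Measurable X :=
      hFmeas.comp (measurable_pi_lambda _ fun i => hElim_meas ↑i)
    have hindXE : IndepFun X (E j) P := by
      have h2 := hindfin.comp hFmeas hGmeas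
      exact h2
    have hX1 : ∀ ω i, i < K + 1 → (X ω).1 i = Z i ω := by
      intro ω i h
      simp only [hX, hF, Function.comp_apply]
      rw [dif_pos (hmemZ i h)]
      rfl
    have hX2 : ∀ ω k, k < j → (X ω).2 k = E k ω := by
      intro ω k h
      simp only [hX, hF, Function.comp_apply]
      rw [dif_pos (hmemE k h)]
      rfl
    have hsfX : ∀ ω k, k ≤ K + 1 → (∑ i ∈ Finset.range k, (X ω).1 i) = S k ω := by
      intro ω k hk
      rw [hS]
      exact Finset.sum_congr rfl fun i hi =>
        hX1 ω i (lt_of_lt_of_le (Finset.mem_range.mp hi) hk)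
    -- the function φ on the product space
    set A : (ℕ → ℝ) × (ℕ → ℝ) → ℝ := fun w =>
      ∏ k ∈ Finset.range j, Real.exp (-(u * (gm (∑ i ∈ Finset.range k, w.1 i) * w.2 k))) with hA
    set c : (ℕ → ℝ) × (ℕ → ℝ) → ℝ := fun w => gm (∑ i ∈ Finset.range j, w.1 i) with hc
    set B : (ℕ → ℝ) × (ℕ → ℝ) → ℝ := fun w =>
      ∏ k ∈ Finset.Ico (j+1) (K+1), lam / (lam + gm (∑ i ∈ Finset.range k, w.1 i) * u) with hB
    set φ : ((ℕ → ℝ) × (ℕ → ℝ)) × ℝ → ℝ := fun p =>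
      A p.1 * (Real.exp (-((u * c p.1) * p.2)) * B p.1) with hφ
    set ψ : (ℕ → ℝ) × (ℕ → ℝ) → ℝ := fun w =>
      (A w * B w) * (lam / (lam + u * c w)) with hψ
    have hsum_meas : ∀ k : ℕ, Measurable fun w : (ℕ → ℝ) × (ℕ → ℝ) =>
        ∑ i ∈ Finset.range k, w.1 i := fun k =>
      Finset.measurable_sum _ fun i _ => (measurable_pi_apply i).comp measurable_fst
    have hAmeas : Measurable A :=
      Finset.measurable_prod _ fun k _ =>
        (((hgm_meas.comp (hsum_meas k)).mul
          ((measurable_pi_apply k).comp measurable_snd)).const_mul u).neg.exp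
    have hcmeas : Measurable c := hgm_meas.comp (hsum_meas j)
    have hBmeas : Measurable B :=
      Finset.measurable_prod _ fun k _ =>
        measurable_const.div (((hgm_meas.comp (hsum_meas k)).mul_const u).const_add lam)
    have hφmeas : Measurable φ :=
      ((hAmeas.comp measurable_fst).mul
        (((((hcmeas.comp measurable_fst).const_mul u).mul measurable_snd).neg.exp).mul
          (hBmeas.comp measurable_fst)))
    have hA_nn : ∀ w, 0 ≤ A w := fun w => Finset.prod_nonneg fun k _ => (Real.exp_pos _).le
    have hB_nn : ∀ w, 0 ≤ B w := fun w =>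
      Finset.prod_nonneg fun k _ => (div_pos hlam (hden_pos _)).le
    have hφ_nn : ∀ p, 0 ≤ φ p := fun p =>
      mul_nonneg (hA_nn _) (mul_nonneg (Real.exp_pos _).le (hB_nn _))
    have hbw : ∀ w : (ℕ → ℝ) × (ℕ → ℝ), -lam < u * c w := fun w => hcb _
    have hφw_eq : ∀ w : (ℕ → ℝ) × (ℕ → ℝ),
        (fun y => φ (w, y)) = fun y => (A w * B w) * Real.exp (-((u * c w) * y)) := by
      intro w
      funext y
      simp only [hφ]
      ring
    have hinner_int : ∀ w, Integrable (fun y => φ (w, y)) (expMeasure lam) := by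
      intro w
      rw [hφw_eq w]
      exact (aux_exp_integrable hlam (hbw w)).const_mul _
    have hinner_val : ∀ w, ∫ y, φ (w, y) ∂(expMeasure lam) = ψ w := by
      intro w
      rw [hφw_eq w, MeasureTheory.integral_const_mul, aux_exp_integral hlam (hbw w)]
    have hψmeas : Measurable ψ :=
      (hAmeas.mul hBmeas).mul
        (measurable_const.div ((hcmeas.const_mul u).const_add lam))
    have hψX : ∀ ω, ψ (X ω) = T j ω := by
      intro ω
      have hAX : A (X ω) =
          ∏ k ∈ Finset.range j, Real.exp (-(u * (gm (S k ω) * E k ω))) := by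
        apply Finset.prod_congr rfl
        intro k hk
        have hkj := Finset.mem_range.mp hk
        rw [hsfX ω k (by omega), hX2 ω k hkj]
      have hBX : B (X ω) =
          ∏ k ∈ Finset.Ico (j+1) (K+1), lam / (lam + gm (S k ω) * u) := by
        apply Finset.prod_congr rfl
        intro k hk
        have := Finset.mem_Ico.mp hk
        rw [hsfX ω k (by omega)]
      have hcX : c (X ω) = gm (S j ω) := by
        simp only [hc]
        rw [hsfX ω j (by omega)]
      show (A (X ω) * B (X ω)) * (lam / (lam + u * c (X ω))) = T j ω
      rw [hAX, hBX, hcX]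
      simp only [hT]
      have hIco : ∏ k ∈ Finset.Ico j (K+1), lam / (lam + gm (S k ω) * u)
          = (lam / (lam + gm (S j ω) * u)) *
            ∏ k ∈ Finset.Ico (j+1) (K+1), lam / (lam + gm (S k ω) * u) :=
        Finset.prod_eq_prod_Ico_succ_bot (by omega) _
      rw [hIco, mul_comm u (gm (S j ω))]
      ring
    have hψ_int : Integrable ψ (P.map X) := by
      rw [integrable_map_measure hψmeas.aestronglyMeasurable hXmeas.aemeasurable]
      have : ψ ∘ X = T j := funext hψX
      rw [this]
      exact hTj
    have hφint : Integrable φ ((P.map X).prod (expMeasure lam)) := by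
      haveI : IsProbabilityMeasure (P.map X) := Measure.isProbabilityMeasure_map hXmeas.aemeasurable
      rw [integrable_prod_iff hφmeas.aestronglyMeasurable]
      refine ⟨Filter.Eventually.of_forall hinner_int, ?_⟩
      have heq : (fun w => ∫ y, ‖φ (w, y)‖ ∂(expMeasure lam)) = ψ := by
        funext w
        rw [← hinner_val w]
        apply integral_congr_ae
        exact Filter.Eventually.of_forall fun y => Real.norm_of_nonneg (hφ_nn _)
      rw [heq]
      exact hψ_int
    have hpair : P.map (fun ω => (X ω, E j ω)) = (P.map X).prod (expMeasure lam) := by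
      rw [← hEexp j]
      exact (indepFun_iff_map_prod_eq_prod_map_map hXmeas.aemeasurable
        (hEmeas j).aemeasurable).mp hindXE
    have hTj1φ : ∀ ω, T (j+1) ω = φ (X ω, E j ω) := by
      intro ω
      have hAX : A (X ω) =
          ∏ k ∈ Finset.range j, Real.exp (-(u * (gm (S k ω) * E k ω))) := by
        apply Finset.prod_congr rfl
        intro k hk
        have hkj := Finset.mem_range.mp hk
        rw [hsfX ω k (by omega), hX2 ω k hkj]
      have hBX : B (X ω) =
          ∏ k ∈ Finset.Ico (j+1) (K+1), lam / (lam + gm (S k ω) * u) := by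
        apply Finset.prod_congr rfl
        intro k hk
        have := Finset.mem_Ico.mp hk
        rw [hsfX ω k (by omega)]
      have hcX : c (X ω) = gm (S j ω) := by
        simp only [hc]
        rw [hsfX ω j (by omega)]
      show T (j+1) ω = A (X ω) * (Real.exp (-((u * c (X ω)) * E j ω)) * B (X ω))
      rw [hAX, hBX, hcX]
      simp only [hT]
      rw [Finset.prod_range_succ,
        show u * gm (S j ω) * E j ω = u * (gm (S j ω) * E j ω) from mul_assoc _ _ _]
      ring
    have hmp : AEMeasurable (fun ω => (X ω, E j ω)) P :=
      (hXmeas.prodMk (hEmeas j)).aemeasurable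
    have hTj1_int : Integrable (T (j+1)) P := by
      have h1 : Integrable φ (P.map (fun ω => (X ω, E j ω))) := by
        rw [hpair]; exact hφint
      have h2 := (integrable_map_measure hφmeas.aestronglyMeasurable hmp).mp h1
      have : φ ∘ (fun ω => (X ω, E j ω)) = T (j+1) := by
        funext ω
        exact (hTj1φ ω).symm
      rwa [this] at h2
    refine ⟨hTj1_int, ?_⟩
    calc ∫ ω, T (j+1) ω ∂P = ∫ ω, φ (X ω, E j ω) ∂P := by
          apply integral_congr_ae
          exact Filter.Eventually.of_forall hTj1φ
      _ = ∫ p, φ p ∂(P.map (fun ω => (X ω, E j ω))) :=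
          (integral_map hmp hφmeas.aestronglyMeasurable).symm
      _ = ∫ p, φ p ∂((P.map X).prod (expMeasure lam)) := by rw [hpair]
      _ = ∫ w, ∫ y, φ (w, y) ∂(expMeasure lam) ∂(P.map X) := integral_prod φ hφint
      _ = ∫ w, ψ w ∂(P.map X) := by
          apply integral_congr_ae
          exact Filter.Eventually.of_forall hinner_val
      _ = ∫ ω, ψ (X ω) ∂P := integral_map hXmeas.aemeasurable hψmeas.aestronglyMeasurable
      _ = ∫ ω, T j ω ∂P := by
          apply integral_congr_ae
          exact Filter.Eventually.of_forall fun ω => hψX ω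
  have hind : ∀ j, j ≤ K + 1 → Integrable (T j) P ∧ ∫ ω, T j ω ∂P = ∫ ω, T 0 ω ∂P := by
    intro j
    induction j with
    | zero => exact fun _ => ⟨hT0int, rfl⟩
    | succ n ih =>
      intro hn
      obtain ⟨i1, i2⟩ := ih (by omega)
      obtain ⟨s1, s2⟩ := hstep n (by omega) i1
      exact ⟨s1, s2.trans i2⟩
  obtain ⟨hK1int, hK1eq⟩ := hind (K+1) le_rfl
  obtain ⟨h0int, -⟩ := hind 0 (by omega)
  have hT0 : T 0 = fun ω => ∏ k ∈ Finset.range (K+1), lam / (lam + gm (S k ω) * u) := by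
    funext ω
    simp only [hT, Finset.range_zero, Finset.prod_empty, one_mul, ← Finset.range_eq_Ico]
  have hTK : T (K+1) = fun ω =>
      Real.exp (-(u * ∑ k ∈ Finset.range (K+1), gm (S k ω) * E k ω)) := by
    funext ω
    simp only [hT, Finset.Ico_self, Finset.prod_empty, mul_one]
    rw [← Real.exp_sum]
    congr 1
    rw [Finset.mul_sum]
    simp
  refine ⟨by rw [← hT0]; exact h0int, by rw [← hTK]; exact hK1int, ?_⟩
  rw [← hT0, ← hTK]
  exact hK1eq

set_option maxHeartbeats 1000000 in
/-- for a bounded strictly decreasing `g : [0,∞) → [0,∞)` with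
`∑_{k≥1} g(k) < ∞` and jumps bounded away from `0`, the random variable
`I^{(g)} = ∑ₖ g(S_k) E_{k+1}` is a.s. finite, for every real `u > -λ/g(0)` its Laplace
transform is finite and equals `lim_K E[∏_{k=0}^K λ/(λ + g(S_k) u)]`; in particular
`I^{(g)}` has finite moments of all orders. -/
theorem stmt6
    {Ω : Type*} [MeasurableSpace Ω] (P : Measure Ω) [IsProbabilityMeasure P]
    (lam : ℝ) (hlam : 0 < lam)
    (g : ℝ → ℝ) (hgnn : ∀ x, 0 ≤ g x) (hganti : StrictAntiOn g (Set.Ici 0))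
    (hgbdd : BddAbove (g '' Set.Ici 0))
    (hgsum : Summable fun k : ℕ => g ((k : ℝ) + 1))
    (delta : ℝ) (hdelta : 0 < delta)
    (Z : ℕ → Ω → ℝ) (E : ℕ → Ω → ℝ)
    (hZmeas : ∀ i, Measurable (Z i))
    (hEmeas : ∀ k, Measurable (E k))
    (hZnn : ∀ i, ∀ ω, 0 ≤ Z i ω)
    (hZdelta : ∀ i, ∀ᵐ ω ∂P, delta < Z i ω)
    (hZid : ∀ i, Measure.map (Z i) P = Measure.map (Z 0) P)
    (hEexp : ∀ k, Measure.map (E k) P = expMeasure lam)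
    (hIndep : iIndepFun (Sum.elim Z E) P)
    (S : ℕ → Ω → ℝ) (hS : ∀ k ω, S k ω = ∑ i ∈ Finset.range k, Z i ω)
    (Ig : Ω → ℝ) (hIg : ∀ ω, Ig ω = ∑' k : ℕ, g (S k ω) * E k ω) :
    (∀ᵐ ω ∂P, Summable fun k : ℕ => g (S k ω) * E k ω) ∧
    (∀ u : ℝ, -lam / g 0 < u →
      Integrable (fun ω => Real.exp (-(u * Ig ω))) P ∧
      Tendsto (fun K : ℕ => ∫ ω, ∏ k ∈ Finset.range (K + 1), lam / (lam + g (S k ω) * u) ∂P)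
        atTop (nhds (∫ ω, Real.exp (-(u * Ig ω)) ∂P))) ∧
    ∀ m : ℕ, Integrable (fun ω => Ig ω ^ m) P := by
  classical
  have hg0 : 0 < g 0 :=
    lt_of_le_of_lt (hgnn 1)
      (hganti (Set.mem_Ici.mpr le_rfl) (Set.mem_Ici.mpr zero_le_one) zero_lt_one)
  set gm : ℝ → ℝ := fun s => g (max s 0) with hgm_def
  have hgm_anti : Antitone gm := fun a b hab =>
    hganti.antitoneOn (Set.mem_Ici.mpr (le_max_right a 0)) (Set.mem_Ici.mpr (le_max_right b 0))
      (max_le_max hab le_rfl)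
  have hgm_meas : Measurable gm := hgm_anti.measurable
  have hgm_nn : ∀ s, 0 ≤ gm s := fun s => hgnn _
  have hgm_le : ∀ s, gm s ≤ g 0 :=
    fun s => hganti.antitoneOn (Set.mem_Ici.mpr le_rfl) (Set.mem_Ici.mpr (le_max_right s 0))
      (le_max_right s 0)
  have hSnn : ∀ k ω, 0 ≤ S k ω := fun k ω => by
    rw [hS]; exact Finset.sum_nonneg fun i _ => hZnn i ω
  have hgmS_eq : ∀ k ω, gm (S k ω) = g (S k ω) := fun k ω => by
    show g (max (S k ω) 0) = g (S k ω)
    rw [max_eq_left (hSnn k ω)]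
  have hSmeas : ∀ k, Measurable (S k) := by
    intro k
    have : S k = fun ω => ∑ i ∈ Finset.range k, Z i ω := funext fun ω => hS k ω
    rw [this]
    exact Finset.measurable_sum _ fun i _ => hZmeas i
  have hgmS : ∀ k, Measurable fun ω => gm (S k ω) := fun k => hgm_meas.comp (hSmeas k)
  have hEnn : ∀ᵐ ω ∂P, ∀ k, 0 ≤ E k ω := by
    rw [ae_all_iff]
    intro k
    have hmap : P.map (E k) (Set.Iio 0) = 0 := by rw [hEexp k]; exact aux_expMeasure_Iio lam
    rw [Measure.map_apply (hEmeas k) measurableSet_Iio] at hmap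
    rw [ae_iff]
    convert hmap using 2
    ext ω
    simp [not_le]
  -- summable bound on g (S k)
  set N : ℕ := max 1 ⌈1 / delta⌉₊ with hN
  have hNpos : 0 < (N:ℝ) := by
    have : 1 ≤ N := le_max_left _ _
    exact_mod_cast lt_of_lt_of_le zero_lt_one (by exact_mod_cast this)
  have hNge : 1 / delta ≤ (N : ℝ) :=
    le_trans (Nat.le_ceil _) (Nat.cast_le.mpr (le_max_right _ _))
  have hg_nat : Summable (fun n : ℕ => g (n : ℝ)) := by
    have h1 : Summable (fun n : ℕ => g (((n + 1 : ℕ) : ℝ))) := by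
      have : (fun n : ℕ => g (((n + 1 : ℕ) : ℝ))) = fun n : ℕ => g ((n : ℝ) + 1) := by
        funext n; push_cast; ring_nf
      rw [this]; exact hgsum
    exact (summable_nat_add_iff 1).mp h1
  set bnd : ℕ → ℝ := fun k => g ((k / N : ℕ) : ℝ) with hbnd
  have hbnd_sum : Summable bnd := aux_summable_div (fun n => hgnn _) hg_nat N (by omega)
  have hbnd_nn : ∀ k, 0 ≤ bnd k := fun k => hgnn _
  set Btot : ℝ := ∑' k, bnd k with hBtot
  have hZae : ∀ᵐ ω ∂P, ∀ i, delta < Z i ω := ae_all_iff.mpr hZdelta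
  have hgS_le_bnd : ∀ ω, (∀ i, delta < Z i ω) → ∀ k, gm (S k ω) ≤ bnd k := by
    intro ω hω k
    have h1 : ((k / N : ℕ) : ℝ) ≤ S k ω := by
      have h2 : 1 ≤ delta * N := by
        rw [div_le_iff₀ hdelta] at hNge
        linarith [hNge]
      calc ((k / N : ℕ) : ℝ) ≤ (k : ℝ) / (N : ℝ) := Nat.cast_div_le
        _ ≤ delta * k := by
            rw [div_le_iff₀ hNpos]
            nlinarith [Nat.cast_nonneg (α := ℝ) k]
        _ ≤ S k ω := by
            rw [hS]
            calc delta * k = ∑ _i ∈ Finset.range k, delta := by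
                  rw [Finset.sum_const, Finset.card_range, nsmul_eq_mul]; ring
              _ ≤ ∑ i ∈ Finset.range k, Z i ω := Finset.sum_le_sum fun i _ => (hω i).le
    calc gm (S k ω) ≤ gm ((k / N : ℕ) : ℝ) := hgm_anti h1
      _ = bnd k := by
          show g (max ((k / N : ℕ) : ℝ) 0) = _
          rw [max_eq_left (Nat.cast_nonneg _)]
  have hgsum_bound : ∀ᵐ ω ∂P, ∀ K : ℕ, ∑ k ∈ Finset.range K, gm (S k ω) ≤ Btot := by
    filter_upwards [hZae] with ω hω K
    calc ∑ k ∈ Finset.range K, gm (S k ω) ≤ ∑ k ∈ Finset.range K, bnd k :=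
          Finset.sum_le_sum fun k _ => hgS_le_bnd ω hω k
      _ ≤ Btot := hbnd_sum.sum_le_tsum _ (fun i _ => hbnd_nn i)
  -- denominators
  have hdiv : ∀ u : ℝ, -lam / g 0 < u →
      0 < lam + g 0 * min u 0 ∧ ∀ s : ℝ, lam + g 0 * min u 0 ≤ lam + gm s * u := by
    intro u hu
    have hlg : -lam < u * g 0 := by
      rw [div_lt_iff₀ hg0] at hu
      linarith
    constructor
    · rcases le_or_gt 0 u with h | h
      · rw [min_eq_right h]; linarith
      · rw [min_eq_left h.le]; nlinarith
    · intro s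
      rcases le_or_gt 0 u with h | h
      · rw [min_eq_right h]; nlinarith [hgm_nn s]
      · rw [min_eq_left h.le]; nlinarith [hgm_le s]
  have key : ∀ u : ℝ, -lam / g 0 < u → ∀ K : ℕ,
      Integrable (fun ω => ∏ k ∈ Finset.range (K+1), lam / (lam + gm (S k ω) * u)) P ∧
      Integrable (fun ω => Real.exp (-(u * ∑ k ∈ Finset.range (K+1), gm (S k ω) * E k ω))) P ∧
      ∫ ω, Real.exp (-(u * ∑ k ∈ Finset.range (K+1), gm (S k ω) * E k ω)) ∂P
        = ∫ ω, ∏ k ∈ Finset.range (K+1), lam / (lam + gm (S k ω) * u) ∂P :=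
    fun u hu K => aux_key P lam hlam gm hgm_meas hgm_nn Z E hZmeas hEmeas hEexp hIndep S hS
      u _ (hdiv u hu).1 (hdiv u hu).2 K
  -- uniform bound on the products
  have hprod_bound : ∀ u : ℝ, -lam / g 0 < u → ∀ᵐ ω ∂P, ∀ K : ℕ,
      ∏ k ∈ Finset.range (K+1), lam / (lam + gm (S k ω) * u)
        ≤ Real.exp (max 0 (-u) / (lam + g 0 * min u 0) * Btot) := by
    intro u hu
    obtain ⟨heps, hden⟩ := hdiv u hu
    have hden_pos : ∀ s : ℝ, 0 < lam + gm s * u := fun s => lt_of_lt_of_le heps (hden s)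
    filter_upwards [hgsum_bound] with ω hω K
    have hfac : ∀ k : ℕ, lam / (lam + gm (S k ω) * u)
        ≤ Real.exp (max 0 (-u) / (lam + g 0 * min u 0) * gm (S k ω)) := by
      intro k
      rcases le_or_gt 0 u with h | h
      · have h1 : lam / (lam + gm (S k ω) * u) ≤ 1 := by
          rw [div_le_one (hden_pos _)]
          nlinarith [hgm_nn (S k ω)]
        have h2 : max 0 (-u) = 0 := max_eq_left (by linarith)
        rw [h2]
        simpa using h1
      · have h2 : max 0 (-u) = -u := max_eq_right (by linarith)
        rw [h2]
        have hx : 0 ≤ (-u) / (lam + g 0 * min u 0) * gm (S k ω) :=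
          mul_nonneg (div_nonneg (by linarith) heps.le) (hgm_nn _)
        have h3 : lam / (lam + gm (S k ω) * u)
            ≤ 1 + (-u) / (lam + g 0 * min u 0) * gm (S k ω) := by
          rw [div_le_iff₀ (hden_pos _)]
          have h4 := hden (S k ω)
          have h5 := hgm_nn (S k ω)
          have h6 : (-u) / (lam + g 0 * min u 0) * (lam + g 0 * min u 0) = -u :=
            div_mul_cancel₀ _ (ne_of_gt heps)
          nlinarith [mul_nonneg (mul_nonneg (div_nonneg (by linarith : (0:ℝ) ≤ -u) heps.le)
            h5) (sub_nonneg.mpr h4)]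
        refine h3.trans ?_
        rw [add_comm]
        exact Real.add_one_le_exp _
    calc ∏ k ∈ Finset.range (K+1), lam / (lam + gm (S k ω) * u)
        ≤ ∏ k ∈ Finset.range (K+1),
            Real.exp (max 0 (-u) / (lam + g 0 * min u 0) * gm (S k ω)) :=
          Finset.prod_le_prod (fun k _ => (div_pos hlam (hden_pos _)).le) (fun k _ => hfac k)
      _ = Real.exp (∑ k ∈ Finset.range (K+1),
            max 0 (-u) / (lam + g 0 * min u 0) * gm (S k ω)) := (Real.exp_sum _ _).symm
      _ ≤ Real.exp (max 0 (-u) / (lam + g 0 * min u 0) * Btot) := by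
          apply Real.exp_le_exp.mpr
          rw [← Finset.mul_sum]
          exact mul_le_mul_of_nonneg_left (hω (K+1))
            (div_nonneg (le_max_left _ _) heps.le)
  -- expected value bound
  have hintb : ∀ u : ℝ, (hu : -lam / g 0 < u) → ∀ K : ℕ,
      ∫ ω, Real.exp (-(u * ∑ k ∈ Finset.range (K+1), gm (S k ω) * E k ω)) ∂P
        ≤ Real.exp (max 0 (-u) / (lam + g 0 * min u 0) * Btot) := by
    intro u hu K
    obtain ⟨hPint, hEint, hEq⟩ := key u hu K
    rw [hEq]
    have hb : ∀ᵐ ω ∂P, ∏ k ∈ Finset.range (K+1), lam / (lam + gm (S k ω) * u)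
        ≤ Real.exp (max 0 (-u) / (lam + g 0 * min u 0) * Btot) :=
      (hprod_bound u hu).mono fun ω h => h K
    calc ∫ ω, ∏ k ∈ Finset.range (K+1), lam / (lam + gm (S k ω) * u) ∂P
        ≤ ∫ _ω, Real.exp (max 0 (-u) / (lam + g 0 * min u 0) * Btot) ∂P :=
          integral_mono_ae hPint (integrable_const _) hb
      _ = Real.exp (max 0 (-u) / (lam + g 0 * min u 0) * Btot) := by
          simp [measure_univ]
  -- the partial sums
  set AK : ℕ → Ω → ℝ := fun K ω => ∑ k ∈ Finset.range (K+1), gm (S k ω) * E k ω with hAK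
  have hAKmeas : ∀ K, Measurable (AK K) :=
    fun K => Finset.measurable_sum _ fun k _ => (hgmS k).mul (hEmeas k)
  have hAKmono : ∀ᵐ ω ∂P, Monotone fun K => AK K ω := by
    filter_upwards [hEnn] with ω hω
    intro a b hab
    apply Finset.sum_le_sum_of_subset_of_nonneg (Finset.range_subset_range.mpr (by omega))
    intro k _ _
    exact mul_nonneg (hgm_nn _) (hω k)
  -- almost sure summability
  have hsummable : ∀ᵐ ω ∂P, Summable fun k : ℕ => gm (S k ω) * E k ω := by
    set u₀ : ℝ := -(lam / (2 * g 0)) with hu₀def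
    have hu₀ : -lam / g 0 < u₀ := by
      rw [hu₀def, neg_div, neg_lt_neg_iff, div_lt_div_iff₀ (by positivity) hg0]
      nlinarith
    have hu₀neg : u₀ < 0 := by rw [hu₀def]; simp; positivity
    set Mu : ℝ := Real.exp (max 0 (-u₀) / (lam + g 0 * min u₀ 0) * Btot) with hMu
    set fK : ℕ → Ω → ℝ≥0∞ := fun K ω => ENNReal.ofReal (Real.exp (-(u₀ * AK K ω))) with hfK
    have hfmeas : ∀ K, Measurable (fK K) :=
      fun K => (((hAKmeas K).const_mul u₀).neg.exp).ennreal_ofReal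
    have hfmono : ∀ᵐ ω ∂P, Monotone fun K => fK K ω := by
      filter_upwards [hAKmono] with ω hω a b hab
      apply ENNReal.ofReal_le_ofReal
      apply Real.exp_le_exp.mpr
      have := hω hab
      nlinarith
    have hle : ∫⁻ ω, ⨆ K, fK K ω ∂P ≤ ENNReal.ofReal Mu := by
      rw [lintegral_iSup' (fun K => (hfmeas K).aemeasurable) hfmono]
      apply iSup_le
      intro K
      have hEint : Integrable (fun ω => Real.exp (-(u₀ * AK K ω))) P := (key u₀ hu₀ K).2.1
      have hnn : 0 ≤ᵐ[P] fun ω => Real.exp (-(u₀ * AK K ω)) :=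
        Filter.Eventually.of_forall fun ω => (Real.exp_pos _).le
      have heq : ∫⁻ ω, fK K ω ∂P = ENNReal.ofReal (∫ ω, Real.exp (-(u₀ * AK K ω)) ∂P) :=
        (ofReal_integral_eq_lintegral_ofReal hEint hnn).symm
      rw [heq]
      exact ENNReal.ofReal_le_ofReal (hintb u₀ hu₀ K)
    have hsup_lt : ∀ᵐ ω ∂P, (⨆ K, fK K ω) < ⊤ := by
      apply ae_lt_top (Measurable.iSup hfmeas)
      exact ne_of_lt (lt_of_le_of_lt hle ENNReal.ofReal_lt_top)
    filter_upwards [hsup_lt, hEnn] with ω hω hE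
    apply summable_of_sum_range_le
      (c := Real.log ((⨆ K, fK K ω).toReal) / (-u₀))
      (fun n => mul_nonneg (hgm_nn _) (hE n))
    intro n
    have h1 : ∑ k ∈ Finset.range n, gm (S k ω) * E k ω ≤ AK n ω :=
      Finset.sum_le_sum_of_subset_of_nonneg (Finset.range_subset_range.mpr (by omega))
        (fun k _ _ => mul_nonneg (hgm_nn _) (hE k))
    have h2 : fK n ω ≤ ⨆ K, fK K ω := le_iSup (fun K => fK K ω) n
    have hC : Real.exp (-(u₀ * AK n ω)) ≤ (⨆ K, fK K ω).toReal := by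
      have h3 := ENNReal.toReal_mono hω.ne h2
      rwa [hfK, ENNReal.toReal_ofReal (Real.exp_pos _).le] at h3
    have hCpos : 0 < (⨆ K, fK K ω).toReal := lt_of_lt_of_le (Real.exp_pos _) hC
    have h3 : -(u₀ * AK n ω) ≤ Real.log ((⨆ K, fK K ω).toReal) :=
      (Real.le_log_iff_exp_le hCpos).mpr hC
    have h4 : AK n ω ≤ Real.log ((⨆ K, fK K ω).toReal) / (-u₀) := by
      rw [le_div_iff₀ (by linarith : (0:ℝ) < -u₀)]
      nlinarith
    linarith
  -- convergence of partial sums to Ig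
  have hIg_gm : ∀ ω, Ig ω = ∑' k, gm (S k ω) * E k ω := fun ω => by
    rw [hIg ω]
    exact tsum_congr fun k => by rw [hgmS_eq]
  have htendsto : ∀ᵐ ω ∂P, Tendsto (fun K => AK K ω) atTop (nhds (Ig ω)) := by
    filter_upwards [hsummable] with ω hω
    rw [hIg_gm ω]
    have h2 := hω.hasSum.tendsto_sum_nat.comp (tendsto_add_atTop_nat 1)
    exact h2
  have hIg_aem : AEMeasurable Ig P :=
    aemeasurable_of_tendsto_metrizable_ae' (fun K => (hAKmeas K).aemeasurable) htendsto
  have hIg_nn : ∀ᵐ ω ∂P, 0 ≤ Ig ω := by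
    filter_upwards [htendsto, hEnn] with ω h1 h2
    refine ge_of_tendsto h1 (Filter.Eventually.of_forall fun K => ?_)
    exact Finset.sum_nonneg fun k _ => mul_nonneg (hgm_nn _) (h2 k)
  have hexp_aesm : ∀ u : ℝ, AEStronglyMeasurable (fun ω => Real.exp (-(u * Ig ω))) P :=
    fun u => (Real.measurable_exp.comp_aemeasurable
      ((hIg_aem.const_mul u).neg)).aestronglyMeasurable
  -- part 2
  have hpart2 : ∀ u : ℝ, -lam / g 0 < u →
      Integrable (fun ω => Real.exp (-(u * Ig ω))) P ∧
      Tendsto (fun K : ℕ => ∫ ω, ∏ k ∈ Finset.range (K + 1), lam / (lam + g (S k ω) * u) ∂P)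
        atTop (nhds (∫ ω, Real.exp (-(u * Ig ω)) ∂P)) := by
    intro u hu
    have hgoalfun : (fun K : ℕ =>
        ∫ ω, ∏ k ∈ Finset.range (K + 1), lam / (lam + g (S k ω) * u) ∂P)
        = fun K => ∫ ω, Real.exp (-(u * AK K ω)) ∂P := by
      funext K
      have h1 : (fun ω => ∏ k ∈ Finset.range (K+1), lam / (lam + g (S k ω) * u))
          = fun ω => ∏ k ∈ Finset.range (K+1), lam / (lam + gm (S k ω) * u) :=
        funext fun ω => Finset.prod_congr rfl fun k _ => by rw [hgmS_eq]
      rw [h1, ← (key u hu K).2.2]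
    have httexp : ∀ᵐ ω ∂P, Tendsto (fun K => Real.exp (-(u * AK K ω))) atTop
        (nhds (Real.exp (-(u * Ig ω)))) := by
      filter_upwards [htendsto] with ω hω
      exact (Real.continuous_exp.tendsto _).comp ((hω.const_mul u).neg)
    rcases le_or_gt 0 u with hup | hun
    · have hFint : Integrable (fun ω => Real.exp (-(u * Ig ω))) P := by
        apply Integrable.mono' (integrable_const 1) (hexp_aesm u)
        filter_upwards [hIg_nn] with ω hω
        rw [Real.norm_of_nonneg (Real.exp_pos _).le]
        apply Real.exp_le_one_iff.mpr
        nlinarith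
      refine ⟨hFint, ?_⟩
      rw [hgoalfun]
      apply integral_tendsto_of_tendsto_of_antitone (fun K => (key u hu K).2.1) hFint ?_ httexp
      filter_upwards [hAKmono] with ω hω a b hab
      apply Real.exp_le_exp.mpr
      have := hω hab
      nlinarith
    · set FK : ℕ → Ω → ℝ≥0∞ := fun K ω => ENNReal.ofReal (Real.exp (-(u * AK K ω))) with hFK
      have hFmeas : ∀ K, Measurable (FK K) :=
        fun K => (((hAKmeas K).const_mul u).neg.exp).ennreal_ofReal
      have hFmono : ∀ᵐ ω ∂P, Monotone fun K => FK K ω := by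
        filter_upwards [hAKmono] with ω hω a b hab
        apply ENNReal.ofReal_le_ofReal
        apply Real.exp_le_exp.mpr
        have := hω hab
        nlinarith
      have hFtt : ∀ᵐ ω ∂P, Tendsto (fun K => FK K ω) atTop
          (nhds (ENNReal.ofReal (Real.exp (-(u * Ig ω))))) := by
        filter_upwards [httexp] with ω hω
        exact (ENNReal.continuous_ofReal.tendsto _).comp hω
      have hlim : Tendsto (fun K => ∫⁻ ω, FK K ω ∂P) atTop
          (nhds (∫⁻ ω, ENNReal.ofReal (Real.exp (-(u * Ig ω))) ∂P)) :=
        lintegral_tendsto_of_tendsto_of_monotone (fun K => (hFmeas K).aemeasurable) hFmono hFtt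
      have hFKle : ∀ K, ∫⁻ ω, FK K ω ∂P
          ≤ ENNReal.ofReal (Real.exp (max 0 (-u) / (lam + g 0 * min u 0) * Btot)) := by
        intro K
        have hEint : Integrable (fun ω => Real.exp (-(u * AK K ω))) P := (key u hu K).2.1
        have hnn : 0 ≤ᵐ[P] fun ω => Real.exp (-(u * AK K ω)) :=
          Filter.Eventually.of_forall fun ω => (Real.exp_pos _).le
        have heq : ∫⁻ ω, FK K ω ∂P = ENNReal.ofReal (∫ ω, Real.exp (-(u * AK K ω)) ∂P) :=
          (ofReal_integral_eq_lintegral_ofReal hEint hnn).symm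
        rw [heq]
        exact ENNReal.ofReal_le_ofReal (hintb u hu K)
      have hlimle : ∫⁻ ω, ENNReal.ofReal (Real.exp (-(u * Ig ω))) ∂P
          ≤ ENNReal.ofReal (Real.exp (max 0 (-u) / (lam + g 0 * min u 0) * Btot)) :=
        le_of_tendsto hlim (Filter.Eventually.of_forall hFKle)
      have hFint : Integrable (fun ω => Real.exp (-(u * Ig ω))) P := by
        refine ⟨hexp_aesm u, ?_⟩
        show ∫⁻ ω, ‖Real.exp (-(u * Ig ω))‖₊ ∂P < ⊤
        have heq2 : ∫⁻ ω, (‖Real.exp (-(u * Ig ω))‖₊ : ℝ≥0∞) ∂P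
            = ∫⁻ ω, ENNReal.ofReal (Real.exp (-(u * Ig ω))) ∂P := by
          congr 1
          funext ω
          exact Real.enorm_eq_ofReal (Real.exp_pos _).le
        rw [heq2]
        exact lt_of_le_of_lt hlimle ENNReal.ofReal_lt_top
      refine ⟨hFint, ?_⟩
      rw [hgoalfun]
      exact integral_tendsto_of_tendsto_of_monotone (fun K => (key u hu K).2.1) hFint
        (by filter_upwards [hAKmono] with ω hω a b hab;
            exact Real.exp_le_exp.mpr (by nlinarith [hω hab])) httexp
  -- conclusion
  refine ⟨?_, fun u hu => hpart2 u hu, ?_⟩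
  · filter_upwards [hsummable] with ω hω
    have heq : (fun k : ℕ => g (S k ω) * E k ω) = fun k => gm (S k ω) * E k ω :=
      funext fun k => by rw [hgmS_eq]
    rw [heq]
    exact hω
  · intro m
    have heps0 : (0:ℝ) < lam / (2 * g 0) := by positivity
    have hu0 : -lam / g 0 < -(lam / (2 * g 0)) := by
      rw [neg_div, neg_lt_neg_iff, div_lt_div_iff₀ (by positivity) hg0]
      nlinarith
    have hint0 := (hpart2 (-(lam / (2 * g 0))) hu0).1
    apply Integrable.mono'
      (hint0.const_mul ((m.factorial : ℝ) / (lam / (2 * g 0)) ^ m))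
      ((hIg_aem.pow_const m).aestronglyMeasurable)
    filter_upwards [hIg_nn] with ω hω
    rw [Real.norm_of_nonneg (pow_nonneg hω m)]
    set e0 : ℝ := lam / (2 * g 0) with he0
    have h1 : (e0 * Ig ω) ^ m / (m.factorial : ℝ) ≤ Real.exp (e0 * Ig ω) :=
      Real.pow_div_factorial_le_exp _ (mul_nonneg heps0.le hω) m
    have h2 : Real.exp (-(-e0 * Ig ω)) = Real.exp (e0 * Ig ω) := by ring_nf
    have hfac : (0:ℝ) < (m.factorial : ℝ) := by exact_mod_cast Nat.factorial_pos m
    rw [div_le_iff₀ hfac, mul_pow] at h1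
    have h3 : Ig ω ^ m ≤ (m.factorial : ℝ) / e0 ^ m * Real.exp (e0 * Ig ω) := by
      rw [div_mul_eq_mul_div, le_div_iff₀ (by positivity : (0:ℝ) < e0 ^ m)]
      nlinarith
    calc Ig ω ^ m ≤ (m.factorial : ℝ) / e0 ^ m * Real.exp (e0 * Ig ω) := h3
      _ = (m.factorial : ℝ) / e0 ^ m * Real.exp (-(-e0 * Ig ω)) := by rw [h2]
      _ = (m.factorial : ℝ) / e0 ^ m * Real.exp (-(-e0 * Ig ω)) := rfl
end

section
/- If (c̃_j)_{j≥0} is a real sequence with ∑_{j=0}^∞ |c̃_j| < ∞ satisfying s (1 − q^{−j}) c̃_j = ∑_{k=1}^j q^{−k} p_k c̃_{j−k} for every j ≥ 1, then the series φ(x) := ∑_{j=0}^∞ c̃_j e^{−λ s q^{−j} x} converges absolutely for every x > 0, φ is differentiable on (0,∞), the series ∑_{k=1}^∞ p_k ( q^{−k} φ(q^{−k} x) − φ(x) ) converges absolutely for every x > 0, and φ′(x) = λ ∑_{k=1}^∞ p_k ( q^{−k} φ(q^{−k} x) − φ(x) ) for every x > 0. -/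
open Real

/-- if an absolutely summable real sequence `(c̃_j)` satisfies the coefficient
recurrence `s(1-q^{-j}) c̃_j = ∑_{k=1}^j q^{-k} p_k c̃_{j-k}` for all `j ≥ 1`, then the
generalized Dirichlet series `φ(x) = ∑_j c̃_j e^{-λ s q^{-j} x}` converges absolutely for
`x > 0`, `φ` is differentiable on `(0,∞)`, the pantograph series converges absolutely, and
`φ'(x) = λ ∑_{k≥1} p_k (q^{-k} φ(q^{-k} x) - φ(x))` for every `x > 0`. -/
theorem stmt9
    (lam q : ℝ) (hlam : 0 < lam) (hq0 : 0 < q) (hq1 : q < 1)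
    (p : ℕ → ℝ) (hpnn : ∀ k, 1 ≤ k → 0 ≤ p k)
    (hpsum : Summable fun k : ℕ => p (k + 1))
    (s : ℝ) (hs : s = ∑' k : ℕ, p (k + 1)) (hs0 : 0 < s) (hs1 : s ≤ 1)
    (ct : ℕ → ℝ) (hctsum : Summable fun j : ℕ => |ct j|)
    (hrec : ∀ j : ℕ, 1 ≤ j → s * (1 - q ^ (-(j : ℤ))) * ct j =
      ∑ k ∈ Finset.Icc 1 j, q ^ (-(k : ℤ)) * p k * ct (j - k))
    (φ : ℝ → ℝ) (hφ : ∀ x : ℝ, φ x = ∑' j : ℕ, ct j * Real.exp (-(lam * s * q ^ (-(j : ℤ)) * x))) :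
    (∀ x : ℝ, 0 < x →
      Summable fun j : ℕ => |ct j * Real.exp (-(lam * s * q ^ (-(j : ℤ)) * x))|) ∧
    (∀ x : ℝ, 0 < x →
      Summable fun k : ℕ =>
        |p (k + 1) * (q ^ (-((k : ℤ) + 1)) * φ (q ^ (-((k : ℤ) + 1)) * x) - φ x)|) ∧
    ∀ x : ℝ, 0 < x →
      HasDerivAt φ
        (lam * ∑' k : ℕ, p (k + 1) * (q ^ (-((k : ℤ) + 1)) * φ (q ^ (-((k : ℤ) + 1)) * x) - φ x))
        x := by
  have hqz : ∀ n : ℤ, 0 < q ^ n := fun n => zpow_pos hq0 n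
  have hq1' : ∀ j : ℕ, 1 ≤ q ^ (-(j : ℤ)) := by
    intro j
    rw [zpow_neg, zpow_natCast, one_le_inv_iff₀]
    exact ⟨pow_pos hq0 j, pow_le_one₀ hq0.le hq1.le⟩
  have key : ∀ a t : ℝ, 0 < a → t * Real.exp (-(a * t)) ≤ a⁻¹ := by
    intro a t ha
    have hexp : a * t ≤ Real.exp (a * t) := by nlinarith [Real.add_one_le_exp (a * t)]
    have hpos := Real.exp_pos (a * t)
    rw [Real.exp_neg, ← div_eq_mul_inv, div_le_iff₀ hpos]
    have h1 : a⁻¹ * (a * t) ≤ a⁻¹ * Real.exp (a * t) :=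
      mul_le_mul_of_nonneg_left hexp (inv_nonneg.2 ha.le)
    have h2 : a⁻¹ * (a * t) = t := by field_simp
    linarith
  -- Part 1
  have habs : ∀ x : ℝ, 0 < x →
      Summable fun j : ℕ => |ct j * Real.exp (-(lam * s * q ^ (-(j : ℤ)) * x))| := by
    intro x hx
    apply Summable.of_nonneg_of_le (fun j => abs_nonneg _) _ hctsum
    intro j
    rw [abs_mul, abs_of_pos (Real.exp_pos _)]
    have hpos : 0 < lam * s * q ^ (-(j : ℤ)) * x :=
      mul_pos (mul_pos (mul_pos hlam hs0) (hqz _)) hx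
    have h1 : Real.exp (-(lam * s * q ^ (-(j : ℤ)) * x)) ≤ 1 := by
      rw [← Real.exp_zero]
      apply Real.exp_le_exp.2
      linarith
    nlinarith [abs_nonneg (ct j)]
  -- bound on φ
  set C : ℝ := ∑' j : ℕ, |ct j| with hC
  have hCnn : 0 ≤ C := tsum_nonneg fun j => abs_nonneg _
  have hφle : ∀ y : ℝ, 0 < y → |φ y| ≤ C * Real.exp (-(lam * s * y)) := by
    intro y hy
    rw [hφ y]
    have h1 : Summable fun j : ℕ => ‖ct j * Real.exp (-(lam * s * q ^ (-(j : ℤ)) * y))‖ := by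
      simpa only [Real.norm_eq_abs] using habs y hy
    have h2 : |∑' j : ℕ, ct j * Real.exp (-(lam * s * q ^ (-(j : ℤ)) * y))|
        ≤ ∑' j : ℕ, |ct j * Real.exp (-(lam * s * q ^ (-(j : ℤ)) * y))| := by
      simpa only [Real.norm_eq_abs] using norm_tsum_le_tsum_norm h1
    refine h2.trans ?_
    have h3 : ∀ j : ℕ, |ct j * Real.exp (-(lam * s * q ^ (-(j : ℤ)) * y))|
        ≤ |ct j| * Real.exp (-(lam * s * y)) := by
      intro j
      rw [abs_mul, abs_of_pos (Real.exp_pos _)]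
      have h4 : lam * s * y ≤ lam * s * q ^ (-(j : ℤ)) * y := by
        nlinarith [hq1' j, mul_pos (mul_pos hlam hs0) hy]
      have h5 : Real.exp (-(lam * s * q ^ (-(j : ℤ)) * y)) ≤ Real.exp (-(lam * s * y)) := by
        apply Real.exp_le_exp.2; linarith
      exact mul_le_mul_of_nonneg_left h5 (abs_nonneg _)
    refine (Summable.tsum_le_tsum h3 (habs y hy) (hctsum.mul_right _)).trans_eq ?_
    rw [tsum_mul_right]
  have hφsc : ∀ x : ℝ, 0 < x → ∀ t : ℝ, 1 ≤ t → t * |φ (t * x)| ≤ C * (lam * s * x)⁻¹ := by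
    intro x hx t ht
    have h0t : 0 < t := lt_of_lt_of_le one_pos ht
    have h1 := hφle (t * x) (mul_pos h0t hx)
    have h2 : t * |φ (t * x)| ≤ t * (C * Real.exp (-(lam * s * (t * x)))) :=
      mul_le_mul_of_nonneg_left h1 h0t.le
    have hlsx : 0 < lam * s * x := mul_pos (mul_pos hlam hs0) hx
    have h3 : t * Real.exp (-(lam * s * x * t)) ≤ (lam * s * x)⁻¹ := key _ _ hlsx
    have h4 : -(lam * s * (t * x)) = -(lam * s * x * t) := by ring
    rw [h4] at h2
    calc t * |φ (t * x)| ≤ t * (C * Real.exp (-(lam * s * x * t))) := h2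
      _ = C * (t * Real.exp (-(lam * s * x * t))) := by ring
      _ ≤ C * (lam * s * x)⁻¹ := mul_le_mul_of_nonneg_left h3 hCnn
  -- Part 2
  have hpant : ∀ x : ℝ, 0 < x → Summable fun k : ℕ =>
      |p (k + 1) * (q ^ (-((k : ℤ) + 1)) * φ (q ^ (-((k : ℤ) + 1)) * x) - φ x)| := by
    intro x hx
    apply Summable.of_nonneg_of_le (fun k => abs_nonneg _) _
      (hpsum.mul_right (C * (lam * s * x)⁻¹ + C))
    intro k
    have hcast : (-((k : ℤ) + 1)) = -(((k + 1 : ℕ)) : ℤ) := by push_cast; ring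
    have ht1 : 1 ≤ q ^ (-((k : ℤ) + 1)) := by rw [hcast]; exact hq1' (k + 1)
    have hb1 : q ^ (-((k : ℤ) + 1)) * |φ (q ^ (-((k : ℤ) + 1)) * x)| ≤ C * (lam * s * x)⁻¹ :=
      hφsc x hx _ ht1
    have hb2 : |φ x| ≤ C := by
      have h1 := hφle x hx
      have h2 : Real.exp (-(lam * s * x)) ≤ 1 := by
        rw [← Real.exp_zero]
        apply Real.exp_le_exp.2
        nlinarith [mul_pos (mul_pos hlam hs0) hx]
      nlinarith
    have hpk : 0 ≤ p (k + 1) := hpnn (k + 1) (by omega)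
    rw [abs_mul, abs_of_nonneg hpk]
    have h5 : |q ^ (-((k : ℤ) + 1)) * φ (q ^ (-((k : ℤ) + 1)) * x) - φ x|
        ≤ C * (lam * s * x)⁻¹ + C := by
      refine (abs_sub _ _).trans ?_
      have h6 : |q ^ (-((k : ℤ) + 1)) * φ (q ^ (-((k : ℤ) + 1)) * x)|
          = q ^ (-((k : ℤ) + 1)) * |φ (q ^ (-((k : ℤ) + 1)) * x)| := by
        rw [abs_mul, abs_of_pos (hqz _)]
      rw [h6]
      exact add_le_add hb1 hb2
    exact mul_le_mul_of_nonneg_left h5 hpk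
  refine ⟨habs, hpant, ?_⟩
  -- Part 3
  intro x hx
  have hlsx : 0 < lam * s * x := mul_pos (mul_pos hlam hs0) hx
  set F : ℕ × ℕ → ℝ := fun kj =>
    p (kj.1 + 1) * q ^ (-((kj.1 : ℤ) + 1)) * ct kj.2 *
      Real.exp (-(lam * s * q ^ (-(((kj.2 + kj.1 + 1 : ℕ)) : ℤ)) * x)) with hF
  have hsplit : ∀ j k : ℕ, q ^ (-(((j + k + 1 : ℕ)) : ℤ)) = q ^ (-(j : ℤ)) * q ^ (-((k : ℤ) + 1)) := by
    intro j k
    rw [← zpow_add₀ hq0.ne']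
    congr 1
    push_cast
    ring
  have hbnd : ∀ kj : ℕ × ℕ, |F kj| ≤ p (kj.1 + 1) * ((lam * s * x)⁻¹ * |ct kj.2|) := by
    rintro ⟨k, j⟩
    simp only [hF]
    have h1 : q ^ (-((k : ℤ) + 1)) ≤ q ^ (-(((j + k + 1 : ℕ)) : ℤ)) := by
      rw [hsplit j k]
      nlinarith [hq1' j, (hqz (-((k : ℤ) + 1))).le]
    have h2 : q ^ (-(((j + k + 1 : ℕ)) : ℤ)) *
        Real.exp (-(lam * s * q ^ (-(((j + k + 1 : ℕ)) : ℤ)) * x)) ≤ (lam * s * x)⁻¹ := by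
      have h := key (lam * s * x) (q ^ (-(((j + k + 1 : ℕ)) : ℤ))) hlsx
      have harg : -(lam * s * x * q ^ (-(((j + k + 1 : ℕ)) : ℤ)))
          = -(lam * s * q ^ (-(((j + k + 1 : ℕ)) : ℤ)) * x) := by ring
      rwa [harg] at h
    have h3 : q ^ (-((k : ℤ) + 1)) *
        Real.exp (-(lam * s * q ^ (-(((j + k + 1 : ℕ)) : ℤ)) * x)) ≤ (lam * s * x)⁻¹ :=
      le_trans (mul_le_mul_of_nonneg_right h1 (Real.exp_pos _).le) h2
    have hpk : 0 ≤ p (k + 1) := hpnn (k + 1) (by omega)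
    rw [abs_mul, abs_mul, abs_mul, abs_of_nonneg hpk, abs_of_pos (hqz _),
      abs_of_pos (Real.exp_pos _)]
    calc p (k + 1) * q ^ (-((k : ℤ) + 1)) * |ct j| *
          Real.exp (-(lam * s * q ^ (-(((j + k + 1 : ℕ)) : ℤ)) * x))
        = p (k + 1) * ((q ^ (-((k : ℤ) + 1)) *
            Real.exp (-(lam * s * q ^ (-(((j + k + 1 : ℕ)) : ℤ)) * x))) * |ct j|) := by ring
      _ ≤ p (k + 1) * ((lam * s * x)⁻¹ * |ct j|) := by
          apply mul_le_mul_of_nonneg_left _ hpk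
          exact mul_le_mul_of_nonneg_right h3 (abs_nonneg _)
  have hFsum : Summable F := by
    apply Summable.of_abs
    apply Summable.of_nonneg_of_le (fun kj => abs_nonneg _) hbnd
    exact Summable.mul_of_nonneg (f := fun k : ℕ => p (k + 1))
      (g := fun j : ℕ => (lam * s * x)⁻¹ * |ct j|) hpsum (hctsum.mul_left _)
      (Pi.le_def.2 fun k => hpnn (k + 1) (by omega))
      (Pi.le_def.2 fun j => mul_nonneg (inv_nonneg.2 hlsx.le) (abs_nonneg _))
  have hinner : ∀ k : ℕ, (∑' j : ℕ, F (k, j))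
      = p (k + 1) * q ^ (-((k : ℤ) + 1)) * φ (q ^ (-((k : ℤ) + 1)) * x) := by
    intro k
    rw [hφ, ← tsum_mul_left]
    refine tsum_congr fun j => ?_
    simp only [hF]
    have harg : -(lam * s * q ^ (-(j : ℤ)) * (q ^ (-((k : ℤ) + 1)) * x))
        = -(lam * s * q ^ (-(((j + k + 1 : ℕ)) : ℤ)) * x) := by
      rw [hsplit j k]; ring
    rw [harg]
    ring
  set i : ℕ × ℕ → ℕ × ℕ := fun kj => (kj.2 + kj.1 + 1, kj.1 + 1) with hi
  have hinj : Function.Injective i := by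
    rintro ⟨k, j⟩ ⟨k', j'⟩ h
    simp only [hi, Prod.mk.injEq] at h ⊢
    omega
  set H : ℕ × ℕ → ℝ := fun mk =>
    if 1 ≤ mk.2 ∧ mk.2 ≤ mk.1 then
      q ^ (-(mk.2 : ℤ)) * p mk.2 * ct (mk.1 - mk.2) *
        Real.exp (-(lam * s * q ^ (-(mk.1 : ℤ)) * x))
    else 0 with hH
  have hHi : ∀ kj : ℕ × ℕ, H (i kj) = F kj := by
    rintro ⟨k, j⟩
    simp only [hH, hi, hF]
    rw [if_pos (by constructor <;> omega)]
    have h1 : j + k + 1 - (k + 1) = j := by omega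
    rw [h1]
    have hc : (-(((k + 1 : ℕ)) : ℤ)) = -((k : ℤ) + 1) := by push_cast; ring
    rw [hc]
    ring
  have hrange : ∀ mk : ℕ × ℕ, mk ∉ Set.range i → H mk = 0 := by
    rintro ⟨m, k⟩ hmk
    simp only [hH]
    rw [if_neg]
    rintro ⟨h1, h2⟩
    exact hmk ⟨(k - 1, m - k), by simp only [hi, Prod.mk.injEq]; omega⟩
  have hHsum : Summable H := by
    rw [← hinj.summable_iff hrange]
    exact hFsum.congr fun kj => (hHi kj).symm
  have hEq2a : ∑' kj : ℕ × ℕ, F kj = ∑' mk : ℕ × ℕ, H mk := by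
    rw [← hinj.tsum_eq (Function.support_subset_iff'.2 hrange)]
    exact tsum_congr fun kj => (hHi kj).symm
  have hsupp : ∀ m : ℕ, ∀ k ∉ Finset.Icc 1 m, H (m, k) = 0 := by
    intro m k hk
    simp only [Finset.mem_Icc, not_and, not_le] at hk
    simp only [hH]
    rw [if_neg]
    rintro ⟨h1, h2⟩
    exact absurd (hk h1) (not_lt.2 h2)
  have hfiber : ∀ m : ℕ, (∑' k : ℕ, H (m, k))
      = s * (1 - q ^ (-(m : ℤ))) * ct m * Real.exp (-(lam * s * q ^ (-(m : ℤ)) * x)) := by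
    intro m
    rw [tsum_eq_sum (hsupp m)]
    have hterm : ∀ k ∈ Finset.Icc 1 m, H (m, k)
        = q ^ (-(k : ℤ)) * p k * ct (m - k) * Real.exp (-(lam * s * q ^ (-(m : ℤ)) * x)) := by
      intro k hk
      simp only [hH]
      rw [if_pos (Finset.mem_Icc.1 hk)]
    rw [Finset.sum_congr rfl hterm, ← Finset.sum_mul]
    rcases Nat.eq_zero_or_pos m with hm | hm
    · subst hm
      simp
    · rw [← hrec m hm]
  have hEq2 : ∑' kj : ℕ × ℕ, F kj
      = ∑' m : ℕ, s * (1 - q ^ (-(m : ℤ))) * ct m *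
          Real.exp (-(lam * s * q ^ (-(m : ℤ)) * x)) := by
    rw [hEq2a, Summable.tsum_prod' hHsum (fun m => summable_of_ne_finset_zero (hsupp m))]
    exact tsum_congr hfiber
  have hS1 : Summable fun m : ℕ => ct m * Real.exp (-(lam * s * q ^ (-(m : ℤ)) * x)) :=
    (habs x hx).of_abs
  have hSA : Summable fun m : ℕ =>
      q ^ (-(m : ℤ)) * ct m * Real.exp (-(lam * s * q ^ (-(m : ℤ)) * x)) := by
    apply Summable.of_abs
    apply Summable.of_nonneg_of_le (fun m => abs_nonneg _) _ (hctsum.mul_left (lam * s * x)⁻¹)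
    intro m
    rw [abs_mul, abs_mul, abs_of_pos (hqz _), abs_of_pos (Real.exp_pos _)]
    have h1 : q ^ (-(m : ℤ)) * Real.exp (-(lam * s * q ^ (-(m : ℤ)) * x)) ≤ (lam * s * x)⁻¹ := by
      have h := key (lam * s * x) (q ^ (-(m : ℤ))) hlsx
      have harg : -(lam * s * x * q ^ (-(m : ℤ))) = -(lam * s * q ^ (-(m : ℤ)) * x) := by ring
      rwa [harg] at h
    calc q ^ (-(m : ℤ)) * |ct m| * Real.exp (-(lam * s * q ^ (-(m : ℤ)) * x))
        = (q ^ (-(m : ℤ)) * Real.exp (-(lam * s * q ^ (-(m : ℤ)) * x))) * |ct m| := by ring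
      _ ≤ (lam * s * x)⁻¹ * |ct m| := mul_le_mul_of_nonneg_right h1 (abs_nonneg _)
  have hEq3 : (∑' m : ℕ, s * (1 - q ^ (-(m : ℤ))) * ct m *
        Real.exp (-(lam * s * q ^ (-(m : ℤ)) * x)))
      = s * φ x - s * ∑' m : ℕ, q ^ (-(m : ℤ)) * ct m *
          Real.exp (-(lam * s * q ^ (-(m : ℤ)) * x)) := by
    have h1 : ∀ m : ℕ, s * (1 - q ^ (-(m : ℤ))) * ct m *
          Real.exp (-(lam * s * q ^ (-(m : ℤ)) * x))
        = s * (ct m * Real.exp (-(lam * s * q ^ (-(m : ℤ)) * x)))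
          - s * (q ^ (-(m : ℤ)) * ct m * Real.exp (-(lam * s * q ^ (-(m : ℤ)) * x))) :=
      fun m => by ring
    rw [tsum_congr h1, Summable.tsum_sub (hS1.mul_left s) (hSA.mul_left s), tsum_mul_left, tsum_mul_left,
      ← hφ x]
  have hT1 : Summable fun k : ℕ =>
      p (k + 1) * q ^ (-((k : ℤ) + 1)) * φ (q ^ (-((k : ℤ) + 1)) * x) := by
    have h1 : Summable fun k : ℕ => ∑' j : ℕ, F (k, j) :=
      ⟨∑' kj : ℕ × ℕ, F kj, hFsum.hasSum.prod_fiberwise fun k => (hFsum.prod_factor k).hasSum⟩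
    exact h1.congr hinner
  have hT2 : Summable fun k : ℕ => p (k + 1) * φ x := hpsum.mul_right (φ x)
  have hTval : (∑' k : ℕ, p (k + 1) * (q ^ (-((k : ℤ) + 1)) * φ (q ^ (-((k : ℤ) + 1)) * x) - φ x))
      = (∑' kj : ℕ × ℕ, F kj) - s * φ x := by
    have h1 : ∀ k : ℕ,
        p (k + 1) * (q ^ (-((k : ℤ) + 1)) * φ (q ^ (-((k : ℤ) + 1)) * x) - φ x)
          = p (k + 1) * q ^ (-((k : ℤ) + 1)) * φ (q ^ (-((k : ℤ) + 1)) * x)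
            - p (k + 1) * φ x := fun k => by ring
    rw [tsum_congr h1, Summable.tsum_sub hT1 hT2, tsum_mul_right, ← hs]
    congr 1
    rw [Summable.tsum_prod' hFsum (fun k => hFsum.prod_factor k)]
    exact tsum_congr fun k => (hinner k).symm
  have hTfinal : (∑' k : ℕ,
        p (k + 1) * (q ^ (-((k : ℤ) + 1)) * φ (q ^ (-((k : ℤ) + 1)) * x) - φ x))
      = -(s * ∑' m : ℕ, q ^ (-(m : ℤ)) * ct m *
          Real.exp (-(lam * s * q ^ (-(m : ℤ)) * x))) := by
    rw [hTval, hEq2, hEq3]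
    ring
  -- derivative
  have hder : HasDerivAt (fun z => ∑' j : ℕ, ct j * Real.exp (-(lam * s * q ^ (-(j : ℤ)) * z)))
      (∑' j : ℕ, ct j * (Real.exp (-(lam * s * q ^ (-(j : ℤ)) * x)) *
        -(lam * s * q ^ (-(j : ℤ))))) x := by
    apply hasDerivAt_tsum_of_isPreconnected (u := fun j : ℕ => |ct j| * (2 / x))
      (hctsum.mul_right _) isOpen_Ioi isPreconnected_Ioi
      (g' := fun j y => ct j * (Real.exp (-(lam * s * q ^ (-(j : ℤ)) * y)) *
        -(lam * s * q ^ (-(j : ℤ)))))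
      (t := Set.Ioi (x / 2)) (y₀ := x) ?_ ?_ ?_ ?_ ?_
    · intro j y hy
      have h1 : HasDerivAt (fun z : ℝ => -(lam * s * q ^ (-(j : ℤ)) * z))
          (-(lam * s * q ^ (-(j : ℤ)))) y := by
        have h0 := ((hasDerivAt_id y).const_mul (lam * s * q ^ (-(j : ℤ)))).neg
        rw [mul_one] at h0
        exact h0
      exact h1.exp.const_mul (ct j)
    · intro j y hy
      have hc : 0 < lam * s * q ^ (-(j : ℤ)) := mul_pos (mul_pos hlam hs0) (hqz _)
      have hyx : x / 2 < y := hy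
      have h1 : Real.exp (-(lam * s * q ^ (-(j : ℤ)) * y))
          ≤ Real.exp (-(x / 2 * (lam * s * q ^ (-(j : ℤ))))) := by
        apply Real.exp_le_exp.2
        nlinarith
      have h2 : lam * s * q ^ (-(j : ℤ)) *
          Real.exp (-(x / 2 * (lam * s * q ^ (-(j : ℤ))))) ≤ (x / 2)⁻¹ :=
        key (x / 2) _ (by linarith)
      have h4 : Real.exp (-(lam * s * q ^ (-(j : ℤ)) * y)) * (lam * s * q ^ (-(j : ℤ)))
          ≤ 2 / x := by
        have h5 := mul_le_mul_of_nonneg_right h1 hc.le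
        have h6 : (x / 2)⁻¹ = 2 / x := by
          rw [inv_div]
        nlinarith
      rw [Real.norm_eq_abs, abs_mul, abs_mul, abs_neg, abs_of_pos (Real.exp_pos _),
        abs_of_pos hc]
      exact mul_le_mul_of_nonneg_left h4 (abs_nonneg _)
    · exact Set.mem_Ioi.2 (by linarith)
    · exact (habs x hx).of_abs
    · exact Set.mem_Ioi.2 (by linarith)
  have hφfun : φ = fun z => ∑' j : ℕ, ct j * Real.exp (-(lam * s * q ^ (-(j : ℤ)) * z)) :=
    funext hφ
  rw [← hφfun] at hder
  have hfinal : (∑' j : ℕ, ct j * (Real.exp (-(lam * s * q ^ (-(j : ℤ)) * x)) *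
        -(lam * s * q ^ (-(j : ℤ)))))
      = lam * ∑' k : ℕ,
          p (k + 1) * (q ^ (-((k : ℤ) + 1)) * φ (q ^ (-((k : ℤ) + 1)) * x) - φ x) := by
    rw [hTfinal]
    have h5 : ∀ j : ℕ, ct j * (Real.exp (-(lam * s * q ^ (-(j : ℤ)) * x)) *
          -(lam * s * q ^ (-(j : ℤ))))
        = (-(lam * s)) * (q ^ (-(j : ℤ)) * ct j *
            Real.exp (-(lam * s * q ^ (-(j : ℤ)) * x))) := fun j => by ring
    rw [tsum_congr h5, tsum_mul_left]
    ring
  exact hfinal ▸ hder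
end

section
/- If (c̃_j)_{j≥0} is a real sequence with ∑_{j=0}^∞ |c̃_j| < ∞ satisfying s (1 − q^{−j}) c̃_j = ∑_{k=1}^j q^{−k} p_k c̃_{j−k} for every j ≥ 1, then ∑_{j=0}^∞ c̃_j = 0. -/
/-- if an absolutely summable real sequence `(c̃_j)` satisfies the coefficient
recurrence `s(1-q^{-j}) c̃_j = ∑_{k=1}^j q^{-k} p_k c̃_{j-k}` for all `j ≥ 1`, then
`∑_j c̃_j = 0`. -/
theorem stmt10
    (lam q : ℝ) (hlam : 0 < lam) (hq0 : 0 < q) (hq1 : q < 1)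
    (p : ℕ → ℝ) (hpnn : ∀ k, 1 ≤ k → 0 ≤ p k)
    (hpsum : Summable fun k : ℕ => p (k + 1))
    (s : ℝ) (hs : s = ∑' k : ℕ, p (k + 1)) (hs0 : 0 < s) (hs1 : s ≤ 1)
    (ct : ℕ → ℝ) (hctsum : Summable fun j : ℕ => |ct j|)
    (hrec : ∀ j : ℕ, 1 ≤ j → s * (1 - q ^ (-(j : ℤ))) * ct j =
      ∑ k ∈ Finset.Icc 1 j, q ^ (-(k : ℤ)) * p k * ct (j - k)) :
    ∑' j : ℕ, ct j = 0 := by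
  have hqne : q ≠ 0 := ne_of_gt hq0
  -- b j = q^j * ct j
  set b : ℕ → ℝ := fun j => q ^ j * ct j with hb
  -- P k : shifted p with P 0 = 0
  set P : ℕ → ℝ := fun k => if k = 0 then 0 else p k with hP
  have hPsum : Summable P := by
    rw [← summable_nat_add_iff 1]
    simpa [hP] using hpsum
  have hPtsum : ∑' k, P k = s := by
    rw [Summable.tsum_eq_zero_add hPsum]
    simpa [hP] using hs.symm
  have hbabs : Summable fun j => |b j| := by
    apply Summable.of_nonneg_of_le (fun j => abs_nonneg _) _ hctsum
    intro j
    rw [hb, abs_mul, abs_pow, abs_of_pos hq0]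
    calc q ^ j * |ct j| ≤ 1 * |ct j| := by
          apply mul_le_mul_of_nonneg_right _ (abs_nonneg _)
          exact pow_le_one₀ (le_of_lt hq0) (le_of_lt hq1)
      _ = |ct j| := one_mul _
  have hbs : Summable b := hbabs.of_abs
  have hcts : Summable ct := hctsum.of_abs
  -- multiplied recurrence, valid for all j
  have key : ∀ j : ℕ, s * b j - s * ct j =
      ∑ k ∈ Finset.range (j + 1), P k * b (j - k) := by
    intro j
    rcases Nat.eq_zero_or_pos j with hj | hj
    · subst hj; simp [hb, hP]
    · have h := hrec j hj
      have hmul := congrArg (fun x => q ^ j * x) h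
      have hqj : q ^ (-(j : ℤ)) = (q ^ j)⁻¹ := by
        rw [zpow_neg, zpow_natCast]
      have hLHS : q ^ j * (s * (1 - q ^ (-(j : ℤ))) * ct j) = s * b j - s * ct j := by
        rw [hqj, hb]
        field_simp
      have hRHS : q ^ j * (∑ k ∈ Finset.Icc 1 j, q ^ (-(k : ℤ)) * p k * ct (j - k)) =
          ∑ k ∈ Finset.range (j + 1), P k * b (j - k) := by
        rw [Finset.mul_sum]
        rw [show Finset.range (j + 1) = Finset.Icc 0 j by
          rw [Finset.range_eq_Ico]; rfl]
        rw [← Finset.sum_subset (Finset.Icc_subset_Icc_left (Nat.zero_le 1))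
          (fun x hx hx' => by
            have : x = 0 := by
              simp only [Finset.mem_Icc] at hx hx'
              omega
            simp [this, hP])]
        apply Finset.sum_congr rfl
        intro k hk
        simp only [Finset.mem_Icc] at hk
        have hk1 : 1 ≤ k := hk.1
        have hkj : k ≤ j := hk.2
        have : P k = p k := by simp [hP]; omega
        rw [this, hb]
        have hqk : q ^ (-(k : ℤ)) = (q ^ k)⁻¹ := by
          rw [zpow_neg, zpow_natCast]
        rw [hqk]
        have hpow : q ^ j = q ^ k * q ^ (j - k) := by
          rw [← pow_add]
          congr 1
          omega
        rw [hpow]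
        field_simp
      rw [← hLHS, ← hRHS, hmul]
  -- sum over all j
  have hsum1 : Summable fun j => s * b j := hbs.mul_left s
  have hsum2 : Summable fun j => s * ct j := hcts.mul_left s
  have hT : ∑' j, (s * b j - s * ct j) = s * (∑' j, b j) - s * (∑' j, ct j) := by
    rw [Summable.tsum_sub hsum1 hsum2, tsum_mul_left, tsum_mul_left]
  have hCauchy : ((∑' k, P k) * ∑' j, b j) =
      ∑' j, ∑ k ∈ Finset.range (j + 1), P k * b (j - k) := by
    apply tsum_mul_tsum_eq_tsum_sum_range_of_summable_norm
    · simpa [Real.norm_eq_abs] using hPsum.abs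
    · simpa [Real.norm_eq_abs] using hbabs
  have : s * (∑' j, b j) - s * (∑' j, ct j) = s * (∑' j, b j) := by
    rw [← hT, tsum_congr key, ← hCauchy, hPtsum]
  have h0 : s * (∑' j, ct j) = 0 := by linarith
  exact (mul_eq_zero.mp h0).resolve_left (ne_of_gt hs0)
end

section
/- The sequence defined by c_0 = 1 and c_j = q^{−1} c_{j−1} / (1 − q^{−j}) for j ≥ 1 satisfies c_j = (−1)^j q^{j(j−1)/2} / ∏_{i=1}^j (1 − q^i) for every j ≥ 0, and moreover ∑_{j=0}^∞ c_j q^j = ∏_{i=1}^∞ (1 − q^i), i.e. ∑_{j=0}^∞ (−1)^j q^{j(j+1)/2} / ∏_{i=1}^j (1 − q^i) = ∏_{i=1}^∞ (1 − q^i). -/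
open Filter Finset

private lemma tri_succ (j : ℕ) : (j + 1) * j / 2 = j * (j - 1) / 2 + j := by
  have h1 := Finset.sum_range_id (j + 1)
  have h2 := Finset.sum_range_id j
  rw [Finset.sum_range_succ, h2] at h1
  simpa using h1.symm

set_option maxHeartbeats 1600000 in
/-- the recurrence `c_0 = 1`, `c_j = q^{-1} c_{j-1}/(1 - q^{-j})` is solved by
`c_j = (-1)^j q^{j(j-1)/2} / ∏_{i=1}^j (1-q^i)`, and `∑_j c_j q^j = ∏_{i=1}^∞ (1-q^i)`,
i.e. `∑_j (-1)^j q^{j(j+1)/2}/∏_{i=1}^j (1-q^i) = (q;q)_∞`. -/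
theorem stmt11
    (q : ℝ) (hq0 : 0 < q) (hq1 : q < 1)
    (c : ℕ → ℝ) (hc0 : c 0 = 1)
    (hc : ∀ j : ℕ, 1 ≤ j → c j = q⁻¹ * c (j - 1) / (1 - q ^ (-(j : ℤ)))) :
    (∀ j : ℕ, c j = (-1 : ℝ) ^ j * q ^ (j * (j - 1) / 2) /
      ∏ i ∈ Finset.range j, (1 - q ^ (i + 1))) ∧
    (∑' j : ℕ, c j * q ^ j = ∏' i : ℕ, (1 - q ^ (i + 1))) ∧
    (∑' j : ℕ, (-1 : ℝ) ^ j * q ^ (j * (j + 1) / 2) / ∏ i ∈ Finset.range j, (1 - q ^ (i + 1)) =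
      ∏' i : ℕ, (1 - q ^ (i + 1))) := by
  have hqle : (0:ℝ) ≤ q := hq0.le
  have hq1' : (0:ℝ) < 1 - q := by linarith
  -- basic facts on the factors
  have hgpos : ∀ i : ℕ, 0 < 1 - q ^ (i + 1) := by
    intro i
    have : q ^ (i + 1) < 1 := pow_lt_one₀ hqle hq1 (Nat.succ_ne_zero i)
    linarith
  have hgle : ∀ i : ℕ, q ^ (i + 1) ≤ q := by
    intro i
    calc q ^ (i + 1) ≤ q ^ 1 := pow_le_pow_of_le_one hqle hq1.le (by omega)
    _ = q := pow_one q
  have hglb : ∀ i : ℕ, 1 - q ≤ 1 - q ^ (i + 1) := fun i => by have := hgle i; linarith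
  -- summability of the logs
  have hlognp : ∀ i : ℕ, Real.log (1 - q ^ (i + 1)) ≤ 0 := fun i =>
    Real.log_nonpos (hgpos i).le (by have := pow_nonneg hqle (i + 1); linarith)
  have hLsum : Summable (fun i : ℕ => Real.log (1 - q ^ (i + 1))) := by
    rw [← summable_neg_iff]
    apply Summable.of_nonneg_of_le
      (fun i => by linarith [hlognp i])
      (fun i => ?_)
      (((summable_geometric_of_lt_one hqle hq1).mul_left q).mul_right (1 - q)⁻¹)
    · have h1 : -Real.log (1 - q ^ (i + 1)) = Real.log (1 - q ^ (i + 1))⁻¹ := by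
        rw [Real.log_inv]
      rw [h1]
      have h2 : Real.log (1 - q ^ (i + 1))⁻¹ ≤ (1 - q ^ (i + 1))⁻¹ - 1 :=
        Real.log_le_sub_one_of_pos (inv_pos.2 (hgpos i))
      have h3 : (1 - q ^ (i + 1))⁻¹ - 1 = q ^ (i + 1) / (1 - q ^ (i + 1)) := by
        rw [eq_div_iff (hgpos i).ne', sub_mul, inv_mul_cancel₀ (hgpos i).ne']
        ring
      have h4 : q ^ (i + 1) / (1 - q ^ (i + 1)) ≤ q ^ (i + 1) / (1 - q) :=
        div_le_div_of_nonneg_left (pow_nonneg hqle _) hq1' (hglb i)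
      have h5 : q ^ (i + 1) / (1 - q) = q * q ^ i * (1 - q)⁻¹ := by
        rw [pow_succ]; ring
      linarith [h2, h4.trans_eq h5, h3 ▸ h2]
  -- the infinite product
  have hK : HasProd (fun i : ℕ => 1 - q ^ (i + 1)) (∏' i : ℕ, (1 - q ^ (i + 1))) :=
    (Real.multipliable_of_summable_log hgpos hLsum).hasProd
  set K : ℝ := ∏' i : ℕ, (1 - q ^ (i + 1)) with hKdef
  have hKexp : K = Real.exp (∑' i : ℕ, Real.log (1 - q ^ (i + 1))) := by
    have := Real.rexp_tsum_eq_tprod hgpos hLsum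
    exact this.symm
  have hKpos : 0 < K := hKexp ▸ Real.exp_pos _
  -- partial products are bounded below by K
  have hPK : ∀ N : ℕ, K ≤ ∏ i ∈ Finset.range N, (1 - q ^ (i + 1)) := by
    intro N
    have h1 : ∏ i ∈ Finset.range N, (1 - q ^ (i + 1))
        = Real.exp (∑ i ∈ Finset.range N, Real.log (1 - q ^ (i + 1))) := by
      rw [Real.exp_sum]
      exact Finset.prod_congr rfl (fun i _ => (Real.exp_log (hgpos i)).symm)
    have h2 : ∑' i : ℕ, Real.log (1 - q ^ (i + 1))
        ≤ ∑ i ∈ Finset.range N, Real.log (1 - q ^ (i + 1)) := by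
      have h3 := Summable.sum_le_tsum (f := fun i : ℕ => -Real.log (1 - q ^ (i + 1)))
        (Finset.range N)
        (fun i _ => by simpa using neg_nonneg.2 (hlognp i))
        hLsum.neg
      rw [tsum_neg] at h3
      simp only [Finset.sum_neg_distrib] at h3
      linarith
    rw [h1, hKexp]
    exact Real.exp_le_exp.2 h2
  have hPpos : ∀ N : ℕ, 0 < ∏ i ∈ Finset.range N, (1 - q ^ (i + 1)) :=
    fun N => Finset.prod_pos (fun i _ => hgpos i)
  -- closed form
  have hcj : ∀ j : ℕ, c j = (-1 : ℝ) ^ j * q ^ (j * (j - 1) / 2) /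
      ∏ i ∈ Finset.range j, (1 - q ^ (i + 1)) := by
    intro j
    induction j with
    | zero => simp [hc0]
    | succ j ih =>
      have hrec := hc (j + 1) (by omega)
      simp only [Nat.add_sub_cancel] at hrec
      have hzp : q ^ (-(((j : ℕ) + 1 : ℕ) : ℤ)) = (q ^ (j + 1) : ℝ)⁻¹ := by
        rw [zpow_neg, zpow_natCast]
      rw [hzp] at hrec
      have hqj : (0:ℝ) < q ^ (j + 1) := pow_pos hq0 _
      have hne : (1:ℝ) - (q ^ (j + 1))⁻¹ ≠ 0 := by
        have : (q ^ (j + 1))⁻¹ > 1 := by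
          rw [gt_iff_lt, lt_inv_comm₀ one_pos hqj]
          simpa using pow_lt_one₀ hqle hq1 (Nat.succ_ne_zero j)
        linarith
      rw [hrec, ih, Finset.prod_range_succ]
      simp only [Nat.add_sub_cancel]
      rw [tri_succ j]
      have hPne : (∏ i ∈ Finset.range j, (1 - q ^ (i + 1))) ≠ 0 := (hPpos j).ne'
      have hgne : (1 - q ^ (j + 1)) ≠ 0 := (hgpos j).ne'
      have hqq : q * q ^ j = q ^ (j + 1) := (pow_succ' q j).symm
      have hne3 : q ^ (j + 1) - 1 ≠ 0 := fun h => hgne (by linarith)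
      field_simp
      ring
  -- summability of the power series
  have habs : ∀ j : ℕ, |c j| ≤ K⁻¹ := by
    intro j
    rw [hcj j, abs_div, abs_mul, abs_pow, abs_pow, abs_neg, abs_one, one_pow, one_mul,
      abs_of_nonneg hqle, abs_of_pos (hPpos j)]
    have h1 : q ^ (j * (j - 1) / 2) ≤ 1 := pow_le_one₀ hqle hq1.le
    have h2 := hPK j
    rw [div_le_iff₀ (hPpos j)]
    calc q ^ (j * (j - 1) / 2) ≤ 1 := h1
    _ ≤ K⁻¹ * K := by rw [inv_mul_cancel₀ hKpos.ne']
    _ ≤ K⁻¹ * ∏ i ∈ Finset.range j, (1 - q ^ (i + 1)) := by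
        exact mul_le_mul_of_nonneg_left h2 (inv_nonneg.2 hKpos.le)
  have hsum : ∀ x : ℝ, 0 ≤ x → x < 1 → Summable (fun j : ℕ => c j * x ^ j) := by
    intro x hx0 hx1
    apply Summable.of_abs
    apply Summable.of_nonneg_of_le (fun j => abs_nonneg _) (fun j => ?_)
      ((summable_geometric_of_lt_one hx0 hx1).mul_left K⁻¹)
    rw [abs_mul, abs_pow, abs_of_nonneg hx0]
    exact mul_le_mul_of_nonneg_right (habs j) (pow_nonneg hx0 j)
  -- the recurrence in product form
  have hrec2 : ∀ j : ℕ, c (j + 1) * (1 - q ^ (j + 1)) = -(q ^ j * c j) := by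
    intro j
    rw [hcj (j + 1), hcj j, Finset.prod_range_succ]
    simp only [Nat.add_sub_cancel]
    rw [tri_succ j]
    have hPne : (∏ i ∈ Finset.range j, (1 - q ^ (i + 1))) ≠ 0 := (hPpos j).ne'
    have hgne : (1 - q ^ (j + 1)) ≠ 0 := (hgpos j).ne'
    field_simp
    ring
  -- functional equation
  have key : ∀ x : ℝ, 0 ≤ x → x < 1 →
      (∑' j : ℕ, c j * x ^ j) = (1 - x) * ∑' j : ℕ, c j * (q * x) ^ j := by
    intro x hx0 hx1
    have hy0 : 0 ≤ q * x := mul_nonneg hqle hx0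
    have hy1 : q * x < 1 := by nlinarith
    have S1 := hsum x hx0 hx1
    have S2 := hsum (q * x) hy0 hy1
    have Sa : Summable (fun j : ℕ => c (j + 1) * (q * x) ^ (j + 1)) :=
      S2.comp_injective (add_left_injective 1)
    have Sb : Summable (fun j : ℕ => x * (c j * (q * x) ^ j)) := S2.mul_left x
    have hterm : ∀ j : ℕ, c (j + 1) * x ^ (j + 1)
        = c (j + 1) * (q * x) ^ (j + 1) - x * (c j * (q * x) ^ j) := by
      intro j
      linear_combination (x ^ (j + 1)) * hrec2 j
    rw [Summable.tsum_eq_zero_add S1, Summable.tsum_eq_zero_add S2]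
    calc c 0 * x ^ 0 + ∑' j : ℕ, c (j + 1) * x ^ (j + 1)
        = 1 + ∑' j : ℕ, (c (j + 1) * (q * x) ^ (j + 1) - x * (c j * (q * x) ^ j)) := by
          rw [hc0]; simp only [pow_zero, mul_one]
          congr 1
          exact tsum_congr hterm
      _ = 1 + ((∑' j : ℕ, c (j + 1) * (q * x) ^ (j + 1)) - ∑' j : ℕ, x * (c j * (q * x) ^ j)) := by
          rw [Summable.tsum_sub Sa Sb]
      _ = 1 + ((∑' j : ℕ, c (j + 1) * (q * x) ^ (j + 1)) - x * ∑' j : ℕ, c j * (q * x) ^ j) := by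
          rw [tsum_mul_left]
      _ = (1 - x) * (c 0 * (q * x) ^ 0 + ∑' j : ℕ, c (j + 1) * (q * x) ^ (j + 1)) := by
          rw [Summable.tsum_eq_zero_add S2, hc0]
          simp only [pow_zero, mul_one]
          ring
  -- iteration of the functional equation
  have hqpow : ∀ N : ℕ, 0 ≤ q ^ (N + 1) ∧ q ^ (N + 1) < 1 := fun N =>
    ⟨pow_nonneg hqle _, pow_lt_one₀ hqle hq1 (Nat.succ_ne_zero N)⟩
  have hiter : ∀ N : ℕ, (∑' j : ℕ, c j * q ^ j)
      = (∏ i ∈ Finset.range N, (1 - q ^ (i + 1))) * ∑' j : ℕ, c j * (q ^ (N + 1)) ^ j := by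
    intro N
    induction N with
    | zero => simp
    | succ N ih =>
      rw [ih, Finset.prod_range_succ]
      rw [key (q ^ (N + 1)) (hqpow N).1 (hqpow N).2]
      rw [show q * q ^ (N + 1) = q ^ (N + 1 + 1) from (pow_succ' q (N + 1)).symm]
      ring
  -- tail bound
  have htail : ∀ N : ℕ, |(∑' j : ℕ, c j * (q ^ (N + 1)) ^ j) - 1|
      ≤ K⁻¹ * (1 - q)⁻¹ * q ^ (N + 1) := by
    intro N
    set y := q ^ (N + 1) with hydef
    have hy0 : 0 ≤ y := (hqpow N).1
    have hy1 : y < 1 := (hqpow N).2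
    have hyq : y ≤ q := hgle N
    have S2 := hsum y hy0 hy1
    have h1 : (∑' j : ℕ, c j * y ^ j) - 1 = ∑' j : ℕ, c (j + 1) * y ^ (j + 1) := by
      rw [Summable.tsum_eq_zero_add S2, hc0]; simp
    rw [h1]
    have hb : Summable (fun j : ℕ => K⁻¹ * (y * y ^ j)) :=
      ((summable_geometric_of_lt_one hy0 hy1).mul_left y).mul_left K⁻¹
    have hle : ∀ j : ℕ, |c (j + 1) * y ^ (j + 1)| ≤ K⁻¹ * (y * y ^ j) := by
      intro j
      rw [abs_mul, abs_pow, abs_of_nonneg hy0, pow_succ']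
      exact mul_le_mul_of_nonneg_right (habs (j + 1))
        (mul_nonneg hy0 (pow_nonneg hy0 j))
    have hnorm : Summable (fun j : ℕ => |c (j + 1) * y ^ (j + 1)|) :=
      Summable.of_nonneg_of_le (fun j => abs_nonneg _) hle hb
    have hnn : Summable fun j : ℕ => ‖c (j + 1) * y ^ (j + 1)‖ := by
      simp only [Real.norm_eq_abs]; exact hnorm
    calc |∑' j : ℕ, c (j + 1) * y ^ (j + 1)| ≤ ∑' j : ℕ, |c (j + 1) * y ^ (j + 1)| := by
          simpa only [Real.norm_eq_abs] using norm_tsum_le_tsum_norm hnn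
      _ ≤ ∑' j : ℕ, K⁻¹ * (y * y ^ j) := Summable.tsum_le_tsum hle hnorm hb
      _ = K⁻¹ * (y * (1 - y)⁻¹) := by
          rw [tsum_mul_left, tsum_mul_left, tsum_geometric_of_lt_one hy0 hy1]
      _ ≤ K⁻¹ * (y * (1 - q)⁻¹) := by
          have h2 : (1 - y)⁻¹ ≤ (1 - q)⁻¹ := by
            apply inv_anti₀ hq1'
            linarith
          exact mul_le_mul_of_nonneg_left
            (mul_le_mul_of_nonneg_left h2 hy0) (inv_nonneg.2 hKpos.le)
      _ = K⁻¹ * (1 - q)⁻¹ * y := by ring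
  -- limit of the tails
  have hlim : Tendsto (fun N : ℕ => ∑' j : ℕ, c j * (q ^ (N + 1)) ^ j) atTop (nhds 1) := by
    have h0 : Tendsto (fun N : ℕ => (∑' j : ℕ, c j * (q ^ (N + 1)) ^ j) - 1) atTop (nhds 0) := by
      apply squeeze_zero_norm (fun N => by
        simpa [Real.norm_eq_abs] using htail N)
      have h1 : Tendsto (fun N : ℕ => q ^ (N + 1)) atTop (nhds 0) := by
        simpa [Function.comp_def] using
          ((tendsto_pow_atTop_nhds_zero_of_lt_one hqle hq1).comp (tendsto_add_atTop_nat 1))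
      simpa using h1.const_mul (K⁻¹ * (1 - q)⁻¹)
    simpa using h0.add_const 1
  -- conclusion for the sum
  have hmain : (∑' j : ℕ, c j * q ^ j) = K := by
    have h1 : Tendsto (fun N : ℕ => (∏ i ∈ Finset.range N, (1 - q ^ (i + 1))) *
        ∑' j : ℕ, c j * (q ^ (N + 1)) ^ j) atTop (nhds (K * 1)) :=
      hK.tendsto_prod_nat.mul hlim
    have h2 : (fun N : ℕ => (∏ i ∈ Finset.range N, (1 - q ^ (i + 1))) *
        ∑' j : ℕ, c j * (q ^ (N + 1)) ^ j) = fun _ : ℕ => ∑' j : ℕ, c j * q ^ j :=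
      funext fun N => (hiter N).symm
    rw [h2] at h1
    rw [mul_one] at h1
    exact tendsto_nhds_unique tendsto_const_nhds h1
  refine ⟨hcj, hmain, ?_⟩
  rw [← hmain]
  apply tsum_congr
  intro j
  rw [hcj j]
  rw [show j * (j + 1) / 2 = j * (j - 1) / 2 + j from by rw [Nat.mul_comm]; exact tri_succ j]
  rw [pow_add]
  ring
end

section
/- The random series I_q := ∑_{k=0}^∞ q^{S_k} E_{k+1} has finite expectation given by E[I_q] = 1 / ( λ (1 − E[q^{Z_1}]) ), where E[q^{Z_1}] < 1. -/
open MeasureTheory ProbabilityTheory Real Set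

lemma expMean {lam : ℝ} (hlam : 0 < lam) :
    ∫⁻ x, ENNReal.ofReal x ∂(expMeasure lam) = ENNReal.ofReal (1 / lam) := by
  have hmeas : Measurable (gammaPDF 1 lam) :=
    ENNReal.measurable_ofReal.comp (measurable_gammaPDFReal 1 lam)
  rw [expMeasure, gammaMeasure,
    lintegral_withDensity_eq_lintegral_mul _ hmeas ENNReal.measurable_ofReal]
  simp only [Pi.mul_apply]
  have hsplit := lintegral_add_compl
    (fun x => (gammaPDF 1 lam x * ENNReal.ofReal x)) (μ := volume) (measurableSet_Ici (a := (0:ℝ)))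
  rw [← hsplit]
  have h0 : ∫⁻ x in (Ici (0:ℝ))ᶜ, gammaPDF 1 lam x * ENNReal.ofReal x = 0 := by
    rw [compl_Ici]
    rw [setLIntegral_congr_fun measurableSet_Iio
      (fun x (hx : x < 0) => by rw [gammaPDF_of_neg hx, zero_mul])]
    simp
  rw [h0, add_zero]
  have hIoi : ∫⁻ x in Ici (0:ℝ), gammaPDF 1 lam x * ENNReal.ofReal x
      = ∫⁻ x in Ioi (0:ℝ), ENNReal.ofReal (lam * Real.exp (-(lam * x)) * x) := by
    rw [← setLIntegral_congr (Ioi_ae_eq_Ici (a := (0:ℝ)))]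
    refine setLIntegral_congr_fun measurableSet_Ioi (fun x hx => ?_)
    have hx0 : (0:ℝ) ≤ x := le_of_lt hx
    rw [gammaPDF_of_nonneg hx0, Real.Gamma_one]
    rw [← ENNReal.ofReal_mul (by positivity)]
    congr 1
    rw [rpow_one]
    norm_num
  rw [hIoi]
  have hint : IntegrableOn (fun x => lam * Real.exp (-(lam * x)) * x) (Ioi (0:ℝ)) := by
    have h := integrableOn_rpow_mul_exp_neg_mul_rpow (s := 1) (p := 1) (b := lam)
      (by norm_num) (by norm_num) hlam
    simp only [rpow_one] at h
    have h2 : IntegrableOn (fun x : ℝ => x * Real.exp (-lam * x)) (Ioi (0:ℝ)) := h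
    have := (h2.const_mul lam)
    exact this.congr (ae_of_all _ fun x => by ring_nf)
  rw [← ofReal_integral_eq_lintegral_ofReal hint]
  · congr 1
    have : ∫ x in Ioi (0:ℝ), lam * Real.exp (-(lam * x)) * x
        = lam * ∫ x in Ioi (0:ℝ), x ^ ((2:ℝ) - 1) * Real.exp (-(lam * x)) := by
      rw [← integral_const_mul]
      refine setIntegral_congr_fun measurableSet_Ioi (fun x hx => ?_)
      norm_num [rpow_one]
      ring
    rw [this, integral_rpow_mul_exp_neg_mul_Ioi (by norm_num) hlam, Real.Gamma_two, mul_one]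
    rw [show ((2:ℝ)) = ((2:ℕ):ℝ) by norm_num, rpow_natCast]
    field_simp
  · filter_upwards [self_mem_ae_restrict measurableSet_Ioi] with x hx
    have : (0:ℝ) < x := hx
    positivity

abbrev MixType : ℕ ⊕ ℕ → Type := Sum.elim (fun _ => ℕ) (fun _ => ℝ)

noncomputable def mixMS : ∀ i, MeasurableSpace (MixType i)
  | .inl _ => show MeasurableSpace ℕ from inferInstance
  | .inr _ => show MeasurableSpace ℝ from inferInstance

def mixFam {Ω : Type*} (Z : ℕ → Ω → ℕ) (E : ℕ → Ω → ℝ) : ∀ i, Ω → MixType i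
  | .inl i => Z i
  | .inr k => E k

/-- the random series `I_q = ∑ₖ q^{S_k} E_{k+1}` has finite expectation
`E[I_q] = 1/(λ(1 - E[q^{Z_1}]))`, where `E[q^{Z_1}] < 1`. -/
theorem stmt14
    {Ω : Type*} [MeasurableSpace Ω] (P : Measure Ω) [IsProbabilityMeasure P]
    (lam q : ℝ) (hlam : 0 < lam) (hq0 : 0 < q) (hq1 : q < 1)
    (Z : ℕ → Ω → ℕ) (E : ℕ → Ω → ℝ)
    (hZmeas : ∀ i, Measurable (Z i))
    (hEmeas : ∀ k, Measurable (E k))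
    (hZid : ∀ i, Measure.map (Z i) P = Measure.map (Z 0) P)
    (hEexp : ∀ k, Measure.map (E k) P = expMeasure lam)
    (hIndep : iIndepFun (m := mixMS) (mixFam Z E) P)
    (s : ℝ) (hs : s = (P {ω | 1 ≤ Z 0 ω}).toReal) (hspos : 0 < s)
    (S : ℕ → Ω → ℕ) (hS : ∀ k ω, S k ω = ∑ i ∈ Finset.range k, Z i ω)
    (Iq : Ω → ℝ) (hIq : ∀ ω, Iq ω = ∑' k : ℕ, q ^ S k ω * E k ω) :
    (∫ ω, q ^ Z 0 ω ∂P) < 1 ∧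
    Integrable Iq P ∧
    ∫ ω, Iq ω ∂P = 1 / (lam * (1 - ∫ ω, q ^ Z 0 ω ∂P)) := by
  classical
  -- the ℝ≥0∞-valued family
  set φ : ∀ i, MixType i → ENNReal := fun i => match i with
    | .inl _ => fun n : ℕ => ENNReal.ofReal (q ^ n)
    | .inr _ => fun x : ℝ => ENNReal.ofReal x
    with hφ
  set X : ∀ _ : ℕ ⊕ ℕ, Ω → ENNReal := fun i => φ i ∘ mixFam Z E i with hX
  have hφmeas : ∀ i, Measurable[mixMS i] (φ i) := by
    rintro (i | k)
    · exact measurable_from_nat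
    · exact ENNReal.measurable_ofReal
  have hXindep : iIndepFun (m := fun _ => (inferInstance : MeasurableSpace ENNReal)) X P :=
    hIndep.comp φ hφmeas
  have hXmeas : ∀ i, Measurable (X i) := by
    rintro (i | k)
    · exact measurable_from_nat.comp (hZmeas i)
    · exact ENNReal.measurable_ofReal.comp (hEmeas k)
  set m' : ENNReal := ∫⁻ ω, ENNReal.ofReal (q ^ Z 0 ω) ∂P with hm'
  -- identical distribution of the Z's
  have hZint : ∀ i, ∫⁻ ω, X (.inl i) ω ∂P = m' := by
    intro i
    have h1 : ∫⁻ ω, X (.inl i) ω ∂P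
        = ∫⁻ n, ENNReal.ofReal (q ^ n) ∂(Measure.map (Z i) P) := by
      rw [lintegral_map measurable_from_nat (hZmeas i)]; rfl
    have h2 : ∫⁻ ω, ENNReal.ofReal (q ^ Z 0 ω) ∂P
        = ∫⁻ n, ENNReal.ofReal (q ^ n) ∂(Measure.map (Z 0) P) := by
      rw [lintegral_map measurable_from_nat (hZmeas 0)]
    rw [h1, hZid i, hm', h2]
  have hEint : ∀ k, ∫⁻ ω, X (.inr k) ω ∂P = ENNReal.ofReal (1 / lam) := by
    intro k
    have h1 : ∫⁻ ω, X (.inr k) ω ∂P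
        = ∫⁻ x, ENNReal.ofReal x ∂(Measure.map (E k) P) := by
      rw [lintegral_map ENNReal.measurable_ofReal (hEmeas k)]; rfl
    rw [h1, hEexp k, expMean hlam]
  -- the embedding of the Z-indices
  set e : ℕ ↪ ℕ ⊕ ℕ := ⟨Sum.inl, Sum.inl_injective⟩ with he
  have hprodS : ∀ k ω, ENNReal.ofReal (q ^ S k ω)
      = ∏ j ∈ (Finset.range k).map e, X j ω := by
    intro k ω
    rw [Finset.prod_map, hS k ω]
    have : ∀ j ∈ Finset.range k, X (e j) ω = ENNReal.ofReal (q ^ Z j ω) := fun j _ => rfl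
    rw [Finset.prod_congr rfl this, ← ENNReal.ofReal_prod_of_nonneg
      (fun j _ => pow_nonneg hq0.le _)]
    congr 1
    exact (Finset.prod_pow_eq_pow_sum _ _ _).symm
  -- lintegral of products over initial segments
  have hprodint : ∀ k, ∫⁻ ω, ∏ j ∈ (Finset.range k).map e, X j ω ∂P = m' ^ k := by
    intro k
    induction k with
    | zero => simp
    | succ k ih =>
      have hnot : (Sum.inl k : ℕ ⊕ ℕ) ∉ (Finset.range k).map e := by
        simp [he, Finset.mem_map]
      have hindep := hXindep.indepFun_finsetProd_of_notMem hXmeas hnot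
      have hPmeas : Measurable (∏ j ∈ (Finset.range k).map e, X j) := by
        rw [Finset.prod_fn]; exact Finset.measurable_prod _ fun j _ => hXmeas j
      have hmul := lintegral_mul_eq_lintegral_mul_lintegral_of_indepFun
        hPmeas (hXmeas (.inl k)) hindep (μ := P)
      have hset : (Finset.range (k+1)).map e = insert (Sum.inl k) ((Finset.range k).map e) := by
        rw [Finset.range_add_one, Finset.map_insert]; rfl
      have heq : ∀ ω, ∏ j ∈ (Finset.range (k+1)).map e, X j ω
          = ((∏ j ∈ (Finset.range k).map e, X j) * X (.inl k)) ω := by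
        intro ω
        rw [hset, Finset.prod_insert hnot]
        simp [Finset.prod_apply, mul_comm]
      rw [lintegral_congr heq, hmul]
      have : ∫⁻ ω, (∏ j ∈ (Finset.range k).map e, X j) ω ∂P = m' ^ k := by
        rw [← ih]; exact lintegral_congr fun ω => by simp [Finset.prod_apply]
      rw [this, hZint k, pow_succ]
  -- lintegral of each term
  have hLk : ∀ k, ∫⁻ ω, ENNReal.ofReal (q ^ S k ω) * ENNReal.ofReal (E k ω) ∂P
      = m' ^ k * ENNReal.ofReal (1 / lam) := by
    intro k
    have hnot : (Sum.inr k : ℕ ⊕ ℕ) ∉ (Finset.range k).map e := by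
      simp [he, Finset.mem_map]
    have hindep := hXindep.indepFun_finsetProd_of_notMem hXmeas hnot
    have hPmeas : Measurable (∏ j ∈ (Finset.range k).map e, X j) := by
      rw [Finset.prod_fn]; exact Finset.measurable_prod _ fun j _ => hXmeas j
    have hmul := lintegral_mul_eq_lintegral_mul_lintegral_of_indepFun
      hPmeas (hXmeas (.inr k)) hindep (μ := P)
    have heq : ∀ ω, ENNReal.ofReal (q ^ S k ω) * ENNReal.ofReal (E k ω)
        = ((∏ j ∈ (Finset.range k).map e, X j) * X (.inr k)) ω := by
      intro ω
      rw [hprodS k ω]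
      simp [Finset.prod_apply]
      rfl
    rw [lintegral_congr heq, hmul]
    have h1 : ∫⁻ ω, (∏ j ∈ (Finset.range k).map e, X j) ω ∂P = m' ^ k := by
      rw [← hprodint k]; exact lintegral_congr fun ω => by simp [Finset.prod_apply]
    rw [h1, hEint k]
  -- m' < 1
  have hAmeas : MeasurableSet {ω | 1 ≤ Z 0 ω} := by
    have : {ω | 1 ≤ Z 0 ω} = Z 0 ⁻¹' {n | 1 ≤ n} := rfl
    rw [this]; exact (hZmeas 0) (measurableSet_le measurable_const measurable_id)
  have hPA0 : P {ω | 1 ≤ Z 0 ω} ≠ 0 := by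
    intro h
    rw [hs, h] at hspos; simp at hspos
  have hm'lt : m' < 1 := by
    set A := {ω | 1 ≤ Z 0 ω}
    have hsplit := lintegral_add_compl (fun ω => ENNReal.ofReal (q ^ Z 0 ω)) (μ := P) hAmeas
    have h1 : ∫⁻ ω in A, ENNReal.ofReal (q ^ Z 0 ω) ∂P ≤ ENNReal.ofReal q * P A := by
      calc ∫⁻ ω in A, ENNReal.ofReal (q ^ Z 0 ω) ∂P
          ≤ ∫⁻ _ in A, ENNReal.ofReal q ∂P := by
            refine setLIntegral_mono' hAmeas fun ω hω => ?_
            refine ENNReal.ofReal_le_ofReal ?_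
            calc q ^ Z 0 ω ≤ q ^ 1 := pow_le_pow_of_le_one hq0.le hq1.le hω
            _ = q := pow_one q
        _ = ENNReal.ofReal q * P A := by rw [setLIntegral_const]
    have h2 : ∫⁻ ω in Aᶜ, ENNReal.ofReal (q ^ Z 0 ω) ∂P ≤ P Aᶜ := by
      calc ∫⁻ ω in Aᶜ, ENNReal.ofReal (q ^ Z 0 ω) ∂P
          ≤ ∫⁻ _ in Aᶜ, 1 ∂P := by
            refine setLIntegral_mono' hAmeas.compl fun ω _ => ?_
            rw [show (1:ENNReal) = ENNReal.ofReal 1 by simp]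
            exact ENNReal.ofReal_le_ofReal (pow_le_one₀ hq0.le hq1.le)
        _ = P Aᶜ := by rw [setLIntegral_const, one_mul]
    have hlt : ENNReal.ofReal q * P A < 1 * P A := by
      refine ENNReal.mul_lt_mul_left hPA0 (measure_ne_top P A) ?_
      exact ENNReal.ofReal_lt_one.mpr hq1
    calc m' = ∫⁻ ω in A, ENNReal.ofReal (q ^ Z 0 ω) ∂P
          + ∫⁻ ω in Aᶜ, ENNReal.ofReal (q ^ Z 0 ω) ∂P := hsplit.symm
      _ ≤ ENNReal.ofReal q * P A + P Aᶜ := add_le_add h1 h2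
      _ < 1 * P A + P Aᶜ := ENNReal.add_lt_add_right (measure_ne_top P Aᶜ) hlt
      _ = P A + P Aᶜ := by rw [one_mul]
      _ = 1 := by rw [measure_add_measure_compl hAmeas, measure_univ]
  -- the real expectation m and its relation to m'
  have hZ0sm : AEStronglyMeasurable (fun ω => q ^ Z 0 ω) P :=
    (measurable_from_nat.comp (hZmeas 0) : Measurable fun ω => q ^ Z 0 ω).aestronglyMeasurable
  have hmint : Integrable (fun ω => q ^ Z 0 ω) P := by
    refine Integrable.mono' (integrable_const (1:ℝ)) hZ0sm (ae_of_all _ fun ω => ?_)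
    rw [Real.norm_eq_abs, abs_of_nonneg (pow_nonneg hq0.le _)]
    exact pow_le_one₀ hq0.le hq1.le
  set m : ℝ := ∫ ω, q ^ Z 0 ω ∂P with hmdef
  have hmnn : 0 ≤ m := integral_nonneg fun ω => pow_nonneg hq0.le _
  have hofm : ENNReal.ofReal m = m' :=
    ofReal_integral_eq_lintegral_ofReal hmint (ae_of_all _ fun ω => pow_nonneg hq0.le _)
  have hmlt1 : m < 1 := by
    have : ENNReal.ofReal m < ENNReal.ofReal 1 := by rw [hofm, ENNReal.ofReal_one]; exact hm'lt
    exact (ENNReal.ofReal_lt_ofReal_iff_of_nonneg hmnn).mp this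
  -- a.e. nonnegativity of the E's
  have hEnn : ∀ k, ∀ᵐ ω ∂P, 0 ≤ E k ω := by
    intro k
    rw [ae_iff]
    have : {ω | ¬ 0 ≤ E k ω} = E k ⁻¹' (Iio 0) := by ext ω; simp [not_le]
    rw [this, ← Measure.map_apply (hEmeas k) measurableSet_Iio, hEexp k]
    rw [expMeasure, gammaMeasure, withDensity_apply _ measurableSet_Iio]
    exact lintegral_gammaPDF_of_nonpos le_rfl
  have hEnnall : ∀ᵐ ω ∂P, ∀ k, 0 ≤ E k ω := ae_all_iff.mpr hEnn
  -- the ℝ≥0∞-valued series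
  set ℓ : Ω → ENNReal := fun ω => ∑' k, ENNReal.ofReal (q ^ S k ω) * ENNReal.ofReal (E k ω)
    with hℓ
  have hSmeas : ∀ k, Measurable (S k) := by
    intro k
    have : S k = fun ω => ∑ i ∈ Finset.range k, Z i ω := funext fun ω => hS k ω
    rw [this]
    exact Finset.measurable_sum _ fun i _ => hZmeas i
  have htermmeas : ∀ k, Measurable fun ω =>
      ENNReal.ofReal (q ^ S k ω) * ENNReal.ofReal (E k ω) := by
    intro k
    exact Measurable.mul
      ((measurable_from_nat (f := fun n : ℕ => ENNReal.ofReal (q ^ n))).comp (hSmeas k))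
      (ENNReal.measurable_ofReal.comp (hEmeas k))
  have hℓmeas : Measurable ℓ := Measurable.ennreal_tsum htermmeas
  set L : ENNReal := (1 - m')⁻¹ * ENNReal.ofReal (1 / lam) with hLdef
  have hℓint : ∫⁻ ω, ℓ ω ∂P = L := by
    rw [hℓ]
    rw [lintegral_tsum fun k => (htermmeas k).aemeasurable]
    have : ∀ k : ℕ, ∫⁻ ω, ENNReal.ofReal (q ^ S k ω) * ENNReal.ofReal (E k ω) ∂P
        = m' ^ k * ENNReal.ofReal (1 / lam) := hLk
    rw [tsum_congr this, ENNReal.tsum_mul_right, ENNReal.tsum_geometric]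
  have hLlt : L < ⊤ := by
    refine ENNReal.mul_lt_top ?_ ENNReal.ofReal_lt_top
    rw [ENNReal.inv_lt_top]
    exact tsub_pos_of_lt hm'lt
  have hfin : ∀ᵐ ω ∂P, ℓ ω < ⊤ := by
    refine ae_lt_top hℓmeas ?_
    rw [hℓint]; exact hLlt.ne
  -- a.e. identification of Iq with toReal ∘ ℓ
  have hae : ∀ᵐ ω ∂P, ENNReal.ofReal (Iq ω) = ℓ ω ∧ 0 ≤ Iq ω := by
    filter_upwards [hEnnall, hfin] with ω hE hf
    have hterm : ∀ k, 0 ≤ q ^ S k ω * E k ω := fun k =>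
      mul_nonneg (pow_nonneg hq0.le _) (hE k)
    have hof : ∀ k, ENNReal.ofReal (q ^ S k ω * E k ω)
        = ENNReal.ofReal (q ^ S k ω) * ENNReal.ofReal (E k ω) := fun k =>
      ENNReal.ofReal_mul (pow_nonneg hq0.le _)
    have hsum : Summable fun k => q ^ S k ω * E k ω := by
      have h1 : Summable fun k => (ENNReal.ofReal (q ^ S k ω * E k ω)).toReal := by
        apply ENNReal.summable_toReal
        rw [tsum_congr hof]
        exact hf.ne
      refine h1.congr fun k => ?_
      rw [ENNReal.toReal_ofReal (hterm k)]
    have : ENNReal.ofReal (Iq ω) = ℓ ω := by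
      rw [hIq ω, ENNReal.ofReal_tsum_of_nonneg hterm hsum, hℓ, tsum_congr hof]
    exact ⟨this, by rw [hIq ω]; exact tsum_nonneg hterm⟩
  have haeq : Iq =ᵐ[P] fun ω => (ℓ ω).toReal := by
    filter_upwards [hae, hfin] with ω ⟨h1, h2⟩ hf
    rw [← h1, ENNReal.toReal_ofReal h2]
  have hIqsm : AEStronglyMeasurable Iq P :=
    (hℓmeas.ennreal_toReal.aestronglyMeasurable).congr haeq.symm
  have hIqlint : ∫⁻ ω, ENNReal.ofReal (Iq ω) ∂P = L := by
    rw [← hℓint]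
    refine lintegral_congr_ae ?_
    filter_upwards [hae] with ω ⟨h1, _⟩ using h1
  have hIqnn : ∀ᵐ ω ∂P, 0 ≤ Iq ω := by
    filter_upwards [hae] with ω ⟨_, h2⟩ using h2
  have hIqInt : Integrable Iq P := by
    refine ⟨hIqsm, ?_⟩
    rw [HasFiniteIntegral]
    have : ∫⁻ ω, ‖Iq ω‖ₑ ∂P = L := by
      rw [← hIqlint]
      refine lintegral_congr_ae ?_
      filter_upwards [hIqnn] with ω h
      rw [Real.enorm_eq_ofReal h]
    rw [this]; exact hLlt
  refine ⟨hmlt1, hIqInt, ?_⟩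
  -- the value of the integral
  rw [integral_eq_lintegral_of_nonneg_ae hIqnn hIqsm, hIqlint]
  rw [hLdef, ← hofm, ← ENNReal.ofReal_one, ← ENNReal.ofReal_sub 1 hmnn]
  rw [ENNReal.toReal_mul, ENNReal.toReal_inv, ENNReal.toReal_ofReal (by linarith),
    ENNReal.toReal_ofReal (by positivity)]
  rw [one_div, one_div, ← mul_inv, mul_comm (1-m) lam]
end

section
/- If ∑_{k=1}^∞ g(k) < ∞, then the random series I^{(g)} := ∑_{k=0}^∞ g(S_k) E_{k+1} is almost surely finite and its law is absolutely continuous with respect to Lebesgue measure; indeed I^{(g)} = g(0) E_1 + Λ where Λ := ∑_{k=1}^∞ g(S_k) E_{k+1} is independent of E_1. -/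
open MeasureTheory ProbabilityTheory

lemma aux_tsum_toReal {a : ℕ → ℝ} (h : ∀ n, 0 ≤ a n) :
    ∑' n, a n = (∑' n, ENNReal.ofReal (a n)).toReal := by
  by_cases hs : Summable a
  · rw [← ENNReal.ofReal_tsum_of_nonneg h hs, ENNReal.toReal_ofReal (tsum_nonneg h)]
  · rw [tsum_eq_zero_of_not_summable hs]
    have htop : ∑' n, ENNReal.ofReal (a n) = ⊤ := by
      by_contra hne
      exact hs ((ENNReal.summable_toReal hne).congr fun n => ENNReal.toReal_ofReal (h n))
    simp [htop]

lemma aux_summable_of_ne_top {a : ℕ → ℝ} (h : ∀ n, 0 ≤ a n)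
    (hfin : (∑' n, ENNReal.ofReal (a n)) ≠ ⊤) : Summable a :=
  (ENNReal.summable_toReal hfin).congr fun n => ENNReal.toReal_ofReal (h n)

lemma aux_tsum_div (N : ℕ) (hN : N ≠ 0) (c : ℕ → ENNReal) :
    ∑' k : ℕ, c (k / N) = N * ∑' j : ℕ, c j := by
  haveI : NeZero N := ⟨hN⟩
  have h := Equiv.tsum_eq (Nat.divModEquiv N) (fun p : ℕ × Fin N => c p.1)
  have hl : ∑' k : ℕ, c (k / N) = ∑' p : ℕ × Fin N, c p.1 := by
    rw [← h]; rfl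
  rw [hl, ENNReal.tsum_prod (f := fun j (_ : Fin N) => c j)]
  have : ∀ j : ℕ, ∑' _ : Fin N, c j = (N : ENNReal) * c j := by
    intro j
    rw [tsum_fintype]
    simp [Finset.sum_const, mul_comm]
  simp_rw [this, ENNReal.tsum_mul_left]

/-- if `∑_{k≥1} g(k) < ∞` then `I^{(g)} = ∑ₖ g(S_k) E_{k+1}` is a.s. finite
and its law is absolutely continuous with respect to Lebesgue measure; indeed
`I^{(g)} = g(0) E_1 + Λ` where `Λ = ∑_{k≥1} g(S_k) E_{k+1}` is independent of `E_1`. -/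
theorem stmt18
    {Ω : Type*} [MeasurableSpace Ω] (P : Measure Ω) [IsProbabilityMeasure P]
    (lam : ℝ) (hlam : 0 < lam)
    (g : ℝ → ℝ) (hgnn : ∀ x, 0 ≤ g x) (hganti : AntitoneOn g (Set.Ici 0))
    (hg0 : 0 < g 0)
    (hgsum : Summable fun k : ℕ => g ((k : ℝ) + 1))
    (Z : ℕ → Ω → ℝ) (E : ℕ → Ω → ℝ)
    (hZmeas : ∀ i, Measurable (Z i))
    (hEmeas : ∀ k, Measurable (E k))
    (hZnn : ∀ i, ∀ ω, 0 ≤ Z i ω)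
    (hZid : ∀ i, Measure.map (Z i) P = Measure.map (Z 0) P)
    (hZint : Integrable (Z 0) P) (hZmean : 0 < ∫ ω, Z 0 ω ∂P)
    (hEexp : ∀ k, Measure.map (E k) P = expMeasure lam)
    (hIndep : iIndepFun (Sum.elim Z E) P)
    (S : ℕ → Ω → ℝ) (hS : ∀ k ω, S k ω = ∑ i ∈ Finset.range k, Z i ω)
    (Ig : Ω → ℝ) (hIg : ∀ ω, Ig ω = ∑' k : ℕ, g (S k ω) * E k ω)
    (L : Ω → ℝ) (hL : ∀ ω, L ω = ∑' k : ℕ, g (S (k + 1) ω) * E (k + 1) ω) :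
    (∀ᵐ ω ∂P, Summable fun k : ℕ => g (S k ω) * E k ω) ∧
    (∀ᵐ ω ∂P, Ig ω = g 0 * E 0 ω + L ω) ∧
    IndepFun L (E 0) P ∧
    (Measure.map Ig P).AbsolutelyContinuous (volume : Measure ℝ) := by
  classical
  have hSEmeas : ∀ j : ℕ ⊕ ℕ, Measurable (Sum.elim Z E j) := by
    rintro (i | k)
    · exact hZmeas i
    · exact hEmeas k
  set m : ℝ := ∫ ω, Z 0 ω ∂P with hm
  have hgmanti : Antitone (fun x : ℝ => g (max x 0)) := fun x y hxy =>
    hganti (Set.mem_Ici.mpr (le_max_right x 0)) (Set.mem_Ici.mpr (le_max_right y 0))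
      (max_le_max hxy le_rfl)
  have hgmmeas : Measurable (fun x : ℝ => g (max x 0)) := hgmanti.measurable
  have hSnn : ∀ k ω, 0 ≤ S k ω := fun k ω => by
    rw [hS]; exact Finset.sum_nonneg fun i _ => hZnn i ω
  have hgmS : ∀ k ω, g (max (S k ω) 0) = g (S k ω) := fun k ω => by
    rw [max_eq_left (hSnn k ω)]
  have hSmeas : ∀ k, Measurable (S k) := fun k => by
    have hh : S k = fun ω => ∑ i ∈ Finset.range k, Z i ω := funext fun ω => hS k ω
    rw [hh]; exact Finset.measurable_sum _ fun i _ => hZmeas i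
  -- E nonneg a.e.
  have hEnnae : ∀ k, ∀ᵐ ω ∂P, 0 ≤ E k ω := by
    intro k
    have h0 : P (E k ⁻¹' Set.Iio 0) = 0 := by
      have hmap : Measure.map (E k) P (Set.Iio 0) = P (E k ⁻¹' Set.Iio 0) :=
        Measure.map_apply (hEmeas k) measurableSet_Iio
      rw [← hmap, hEexp k]
      have hexp : expMeasure lam (Set.Iio 0) = ∫⁻ y in Set.Iio 0, exponentialPDF lam y := by
        rw [expMeasure, gammaMeasure, withDensity_apply _ measurableSet_Iio]; rfl
      rw [hexp, lintegral_exponentialPDF_of_nonpos le_rfl]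
    rw [ae_iff]
    convert h0 using 2
    ext ω; simp [not_le]
  have hEnnall : ∀ᵐ ω ∂P, ∀ k, 0 ≤ E k ω := ae_all_iff.mpr hEnnae
  -- the constant C
  set C : ENNReal := ∫⁻ x : ℝ, ENNReal.ofReal x ∂(expMeasure lam) with hCdef
  have hEint : ∀ k, ∫⁻ ω, ENNReal.ofReal (E k ω) ∂P = C := by
    intro k
    rw [hCdef, ← hEexp k, lintegral_map ENNReal.measurable_ofReal (hEmeas k)]
  have hCfin : C ≠ ⊤ := by
    have hpdfmeas : Measurable (exponentialPDF lam) :=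
      (measurable_exponentialPDFReal lam).ennreal_ofReal
    have hCeq : C = ∫⁻ x, exponentialPDF lam x * ENNReal.ofReal x ∂volume := by
      rw [hCdef]
      show (∫⁻ x, ENNReal.ofReal x ∂(volume.withDensity (exponentialPDF lam))) = _
      rw [lintegral_withDensity_eq_lintegral_mul volume hpdfmeas ENNReal.measurable_ofReal]
      rfl
    have hbound : ∀ x : ℝ, exponentialPDF lam x * ENNReal.ofReal x ≤
        (Set.Ioi (0:ℝ)).indicator
          (fun x => ENNReal.ofReal (lam * (x * Real.exp (-(lam * x))))) x := by
      intro x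
      rcases le_or_gt x 0 with hx | hx
      · have hz : ENNReal.ofReal x = 0 := ENNReal.ofReal_eq_zero.mpr hx
        simp only [hz, mul_zero]
        exact zero_le
      · rw [Set.indicator_of_mem (Set.mem_Ioi.mpr hx), exponentialPDF_of_nonneg hx.le,
          ← ENNReal.ofReal_mul (by positivity : (0:ℝ) ≤ lam * Real.exp (-(lam * x)))]
        exact ENNReal.ofReal_le_ofReal (le_of_eq (by ring))
    have hint : IntegrableOn (fun x : ℝ => lam * (x * Real.exp (-(lam * x)))) (Set.Ioi 0)
        volume := by
      have h1 : IntegrableOn (fun x : ℝ => x ^ (1:ℝ) * Real.exp (-lam * x ^ (1:ℝ)))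
          (Set.Ioi 0) volume :=
        integrableOn_rpow_mul_exp_neg_mul_rpow (by norm_num) one_pos hlam
      have h2 : IntegrableOn (fun x : ℝ => x * Real.exp (-(lam * x))) (Set.Ioi 0) volume := by
        refine h1.congr_fun (fun x hx => ?_) measurableSet_Ioi
        dsimp only; rw [Real.rpow_one, neg_mul]
      exact h2.const_mul lam
    have hlt : C < ⊤ := by
      calc C = ∫⁻ x, exponentialPDF lam x * ENNReal.ofReal x ∂volume := hCeq
        _ ≤ ∫⁻ x, (Set.Ioi (0:ℝ)).indicator
              (fun x => ENNReal.ofReal (lam * (x * Real.exp (-(lam * x))))) x ∂volume :=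
            lintegral_mono hbound
        _ = ∫⁻ x in Set.Ioi (0:ℝ), ENNReal.ofReal (lam * (x * Real.exp (-(lam * x)))) ∂volume :=
            lintegral_indicator measurableSet_Ioi _
        _ < ⊤ := hint.lintegral_lt_top
    exact hlt.ne
  -- choice of N
  obtain ⟨N₀, hN₀⟩ := exists_nat_ge (2 / m)
  set N : ℕ := max N₀ 1 with hNdef
  have hNpos : 0 < N := lt_of_lt_of_le one_pos (le_max_right _ _)
  have hNge : (2 / m) ≤ (N : ℝ) := le_trans hN₀ (by exact_mod_cast le_max_left _ _)
  have hmpos : 0 < m := hZmean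
  have hdivle : ∀ k : ℕ, ((k / N : ℕ) : ℝ) ≤ (m / 2) * k := by
    intro k
    calc ((k / N : ℕ) : ℝ) ≤ (k : ℝ) / N := Nat.cast_div_le
      _ ≤ (m / 2) * k := by
        have hN' : (0:ℝ) < N := by exact_mod_cast hNpos
        have h2m : (0:ℝ) < 2 / m := by positivity
        have h1 : ((N : ℝ))⁻¹ ≤ m / 2 := by
          have := inv_anti₀ h2m hNge
          rwa [inv_div] at this
        rw [div_eq_mul_inv]
        calc (k : ℝ) * (N : ℝ)⁻¹ ≤ (k : ℝ) * (m / 2) :=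
              mul_le_mul_of_nonneg_left h1 (Nat.cast_nonneg k)
          _ = (m / 2) * k := mul_comm _ _
  -- summability of g at naturals
  have hgnat : Summable (fun j : ℕ => g j) := by
    rw [← summable_nat_add_iff 1]
    exact hgsum.congr fun n => by push_cast; ring_nf
  set A : ENNReal := ∑' j : ℕ, ENNReal.ofReal (g j) with hAdef
  have hAfin : A ≠ ⊤ := by
    rw [hAdef, ← ENNReal.ofReal_tsum_of_nonneg (fun j => hgnn _) hgnat]
    exact ENNReal.ofReal_ne_top
  have haA : ∑' k : ℕ, ENNReal.ofReal (g ((k / N : ℕ) : ℝ)) = N * A := by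
    rw [hAdef]
    exact aux_tsum_div N hNpos.ne' (fun j => ENNReal.ofReal (g j))
  -- dominating series
  have hFmeas : ∀ k : ℕ, Measurable
      (fun ω => ENNReal.ofReal (g ((k / N : ℕ) : ℝ)) * ENNReal.ofReal (E k ω)) :=
    fun k => ((hEmeas k).ennreal_ofReal).const_mul _
  have hFlint : ∫⁻ ω, ∑' k : ℕ, ENNReal.ofReal (g ((k / N : ℕ) : ℝ)) *
      ENNReal.ofReal (E k ω) ∂P = (N : ENNReal) * A * C := by
    rw [lintegral_tsum (fun k => (hFmeas k).aemeasurable)]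
    have hterm : ∀ k : ℕ, ∫⁻ ω, ENNReal.ofReal (g ((k / N : ℕ) : ℝ)) *
        ENNReal.ofReal (E k ω) ∂P = ENNReal.ofReal (g ((k / N : ℕ) : ℝ)) * C := fun k => by
      rw [lintegral_const_mul _ ((hEmeas k).ennreal_ofReal), hEint k]
    simp_rw [hterm]
    rw [ENNReal.tsum_mul_right, haA]
  have hFae : ∀ᵐ ω ∂P, (∑' k : ℕ, ENNReal.ofReal (g ((k / N : ℕ) : ℝ)) *
      ENNReal.ofReal (E k ω)) < ⊤ := by
    refine ae_lt_top (Measurable.ennreal_tsum hFmeas) ?_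
    rw [hFlint]
    exact ENNReal.mul_ne_top (ENNReal.mul_ne_top (ENNReal.natCast_ne_top N) hAfin) hCfin
  have hsummA : ∀ᵐ ω ∂P, Summable (fun k : ℕ => g ((k / N : ℕ) : ℝ) * E k ω) := by
    filter_upwards [hFae, hEnnall] with ω hω hE
    apply aux_summable_of_ne_top (fun k => mul_nonneg (hgnn _) (hE k))
    rw [tsum_congr (fun k => ENNReal.ofReal_mul (hgnn _))]
    exact hω.ne
  -- strong law
  have hident : ∀ i, IdentDistrib (Z i) (Z 0) P P := fun i =>
    ⟨(hZmeas i).aemeasurable, (hZmeas 0).aemeasurable, hZid i⟩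
  have hpair : Pairwise (Function.onFun (fun x1 x2 => IndepFun x1 x2 P) Z) := by
    intro i j hij
    exact hIndep.indepFun (show (Sum.inl i : ℕ ⊕ ℕ) ≠ Sum.inl j by simpa using hij)
  have hlln := strong_law_ae Z hZint hpair hident
  -- PART 1
  have part1 : ∀ᵐ ω ∂P, Summable fun k : ℕ => g (S k ω) * E k ω := by
    filter_upwards [hlln, hsummA, hEnnall] with ω hlw hsw hEw
    have hev : ∀ᶠ (n : ℕ) in Filter.atTop,
        m / 2 < (n : ℝ)⁻¹ • ∑ i ∈ Finset.range n, Z i ω :=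
      hlw.eventually (eventually_gt_nhds (by linarith : m / 2 < m))
    obtain ⟨N1, hN1⟩ := Filter.eventually_atTop.mp hev
    rw [← summable_nat_add_iff (N1 + 1)]
    refine Summable.of_nonneg_of_le (fun n => mul_nonneg (hgnn _) (hEw _)) (fun n => ?_)
      ((summable_nat_add_iff (N1 + 1)).mpr hsw)
    set k := n + (N1 + 1) with hk
    have hkN1 : N1 ≤ k := by omega
    have hkpos : (0:ℝ) < (k : ℝ) := by
      have : 0 < k := by omega
      exact_mod_cast this
    have hSk : (m / 2) * k ≤ S k ω := by
      have h := hN1 k hkN1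
      rw [smul_eq_mul, ← hS k ω, inv_mul_eq_div] at h
      exact ((lt_div_iff₀ hkpos).mp h).le
    have hterm : g (S k ω) ≤ g ((k / N : ℕ) : ℝ) :=
      hganti (Set.mem_Ici.mpr (Nat.cast_nonneg _)) (Set.mem_Ici.mpr (hSnn k ω))
        (le_trans (hdivle k) hSk)
    exact mul_le_mul_of_nonneg_right hterm (hEw k)
  -- PART 2
  have part2 : ∀ᵐ ω ∂P, Ig ω = g 0 * E 0 ω + L ω := by
    filter_upwards [part1] with ω hω
    have h0 : S 0 ω = 0 := by rw [hS]; simp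
    rw [hIg, hL]
    rw [Summable.tsum_eq_zero_add hω]
    rw [h0]
  -- PART 3
  have h_le : ∀ j : ℕ ⊕ ℕ,
      MeasurableSpace.comap (Sum.elim Z E j) inferInstance ≤ ‹MeasurableSpace Ω› :=
    fun j => (hSEmeas j).comap_le
  have hMle : (⨆ j ∈ ({Sum.inr 0}ᶜ : Set (ℕ ⊕ ℕ)),
      MeasurableSpace.comap (Sum.elim Z E j) inferInstance) ≤ ‹MeasurableSpace Ω› :=
    iSup₂_le fun j _ => h_le j
  have hZM : ∀ i, Measurable[⨆ j ∈ ({Sum.inr 0}ᶜ : Set (ℕ ⊕ ℕ)),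
      MeasurableSpace.comap (Sum.elim Z E j) inferInstance] (Z i) := fun i =>
    measurable_iff_comap_le.mpr (le_biSup
      (fun j => MeasurableSpace.comap (Sum.elim Z E j) inferInstance)
      (i := Sum.inl i) (by simp))
  have hEM : ∀ k : ℕ, Measurable[⨆ j ∈ ({Sum.inr 0}ᶜ : Set (ℕ ⊕ ℕ)),
      MeasurableSpace.comap (Sum.elim Z E j) inferInstance] (E (k + 1)) := fun k =>
    measurable_iff_comap_le.mpr (le_biSup
      (fun j => MeasurableSpace.comap (Sum.elim Z E j) inferInstance)
      (i := Sum.inr (k + 1)) (by simp))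
  have hSM : ∀ k, Measurable[⨆ j ∈ ({Sum.inr 0}ᶜ : Set (ℕ ⊕ ℕ)),
      MeasurableSpace.comap (Sum.elim Z E j) inferInstance] (S k) := fun k => by
    have hh : S k = fun ω => ∑ i ∈ Finset.range k, Z i ω := funext fun ω => hS k ω
    rw [hh]; exact Finset.measurable_sum _ fun i _ => hZM i
  set L' : Ω → ℝ := fun ω => (∑' k : ℕ, ENNReal.ofReal (g (max (S (k + 1) ω) 0)) *
      ENNReal.ofReal (E (k + 1) ω)).toReal with hL'
  have hL'M : Measurable[⨆ j ∈ ({Sum.inr 0}ᶜ : Set (ℕ ⊕ ℕ)),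
      MeasurableSpace.comap (Sum.elim Z E j) inferInstance] L' := by
    apply Measurable.ennreal_toReal
    apply Measurable.ennreal_tsum
    intro k
    exact ((hgmmeas.comp (hSM (k + 1))).ennreal_ofReal).mul ((hEM k).ennreal_ofReal)
  have hLL' : L =ᵐ[P] L' := by
    filter_upwards [hEnnall] with ω hE
    rw [hL, hL']
    rw [aux_tsum_toReal (fun k => mul_nonneg (hgnn _) (hE _))]
    congr 1
    refine tsum_congr fun k => ?_
    rw [ENNReal.ofReal_mul (hgnn _), hgmS]
  have hL'meas : Measurable L' := hL'M.mono hMle le_rfl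
  have hbiSup := indep_biSup_compl h_le hIndep.iIndep ({Sum.inr 0}ᶜ : Set (ℕ ⊕ ℕ))
  have hTc : (⨆ j ∈ (({Sum.inr 0}ᶜ : Set (ℕ ⊕ ℕ)))ᶜ,
      MeasurableSpace.comap (Sum.elim Z E j) inferInstance) =
      MeasurableSpace.comap (E 0) inferInstance := by
    rw [compl_compl]
    exact iSup_singleton
  rw [hTc] at hbiSup
  have hIndepL'E0 : IndepFun L' (E 0) P :=
    indep_of_indep_of_le_left hbiSup (measurable_iff_comap_le.mp hL'M)
  have part3 : IndepFun L (E 0) P :=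
    IndepFun.congr hIndepL'E0 hLL'.symm Filter.EventuallyEq.rfl
  -- PART 4
  set X : Ω → ℝ := fun ω => g 0 * E 0 ω with hX
  have hXmeas : Measurable X := (hEmeas 0).const_mul _
  have hIgX : Ig =ᵐ[P] fun ω => L' ω + X ω := by
    filter_upwards [part2, hLL'] with ω h2 hL2
    rw [h2, hL2, hX]; ring
  have hIndepLX : IndepFun L' X P :=
    hIndepL'E0.comp measurable_id (measurable_const_mul (g 0))
  have hmapprod : Measure.map (fun ω => (L' ω, X ω)) P =
      (Measure.map L' P).prod (Measure.map X P) :=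
    (indepFun_iff_map_prod_eq_prod_map_map hL'meas.aemeasurable hXmeas.aemeasurable).mp hIndepLX
  have hmapIg : Measure.map Ig P = Measure.map (fun p : ℝ × ℝ => p.1 + p.2)
      ((Measure.map L' P).prod (Measure.map X P)) := by
    rw [← hmapprod, Measure.map_map measurable_add (hL'meas.prodMk hXmeas)]
    exact Measure.map_congr hIgX
  have hmapE0 : Measure.map (E 0) P ≪ (volume : Measure ℝ) := by
    rw [hEexp 0]
    exact withDensity_absolutelyContinuous volume _
  have hmapX : Measure.map X P ≪ (volume : Measure ℝ) := by
    have hXc : Measure.map X P = Measure.map (fun x => g 0 * x) (Measure.map (E 0) P) := by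
      rw [Measure.map_map (measurable_const_mul (g 0)) (hEmeas 0)]
      rfl
    rw [hXc]
    refine Measure.AbsolutelyContinuous.mk fun s hs hvs => ?_
    rw [Measure.map_apply (measurable_const_mul (g 0)) hs]
    apply hmapE0
    have h1 : volume ((fun x => g 0 * x) ⁻¹' s) =
        Measure.map (fun x => g 0 * x) volume s :=
      (Measure.map_apply (measurable_const_mul (g 0)) hs).symm
    rw [h1, Real.map_volume_mul_left hg0.ne', Measure.smul_apply, hvs]
    simp
  refine ⟨part1, part2, part3, ?_⟩
  rw [hmapIg]
  refine Measure.AbsolutelyContinuous.mk fun s hs hvs => ?_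
  rw [Measure.map_apply measurable_add hs, Measure.prod_apply (measurable_add hs)]
  have hz : ∀ l : ℝ, (Measure.map X P) ((fun y => l + y) ⁻¹' s) = 0 := fun l =>
    hmapX (by rw [measure_preimage_add]; exact hvs)
  have hzz : (fun l : ℝ => (Measure.map X P)
      (Prod.mk l ⁻¹' ((fun p : ℝ × ℝ => p.1 + p.2) ⁻¹' s))) = fun _ => 0 :=
    funext fun l => hz l
  rw [hzz, lintegral_zero]
end

section
/- For every real u ≥ 0, the Laplace transform of the random series I_q := ∑_{k=0}^∞ q^k E_{k+1} satisfies E[e^{−u I_q}] = ∏_{j=0}^∞ ( 1 + (u/λ) q^j )^{−1}, where the infinite product converges; in the q-Pochhammer notation, E[e^{−u I_q}] = 1/(−u/λ; q)_∞. -/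
open MeasureTheory ProbabilityTheory
open Real Set
open scoped ENNReal NNReal



lemma expPDFReal_eq (r x : ℝ) :
    exponentialPDFReal r x = if 0 ≤ x then r * Real.exp (-(r * x)) else 0 := by
  rw [exponentialPDFReal, gammaPDFReal]
  simp [Real.Gamma_one]

lemma expMeasure_eq (lam : ℝ) :
    expMeasure lam = volume.withDensity (exponentialPDF lam) := rfl

lemma integral_expMeasure (lam : ℝ) (hlam : 0 < lam) (g : ℝ → ℝ) :
    ∫ x, g x ∂(expMeasure lam) = ∫ x, exponentialPDFReal lam x * g x := by
  have hd : expMeasure lam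
      = volume.withDensity (fun x => ((exponentialPDFReal lam x).toNNReal : ℝ≥0∞)) := rfl
  rw [hd, integral_withDensity_eq_integral_smul
    (measurable_exponentialPDFReal lam).real_toNNReal g]
  congr 1
  funext x
  rw [NNReal.smul_def, smul_eq_mul, Real.coe_toNNReal _ (exponentialPDFReal_nonneg hlam x)]


lemma integral_exp_neg_mul_Ioi {b : ℝ} (hb : 0 < b) :
    ∫ x in Ioi (0:ℝ), Real.exp (-(b * x)) = 1 / b := by
  have h := integral_rpow_mul_exp_neg_mul_Ioi (one_pos) hb
  simpa [Real.Gamma_one] using h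

lemma laplace_expMeasure {lam s : ℝ} (hlam : 0 < lam) (hs : 0 ≤ s) :
    ∫ x, Real.exp (-(s * x)) ∂(expMeasure lam) = (1 + s / lam)⁻¹ := by
  have hd : expMeasure lam
      = volume.withDensity (fun x => ((exponentialPDFReal lam x).toNNReal : ℝ≥0∞)) := rfl
  rw [hd, integral_withDensity_eq_integral_smul
    (measurable_exponentialPDFReal lam).real_toNNReal _]
  have h1 : (fun x => ((exponentialPDFReal lam x).toNNReal : ℝ≥0) • Real.exp (-(s * x)))
      = (Ici (0:ℝ)).indicator (fun x => lam * Real.exp (-((lam + s) * x))) := by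
    funext x
    rw [NNReal.smul_def, smul_eq_mul, Real.coe_toNNReal _ (exponentialPDFReal_nonneg hlam x),
      expPDFReal_eq]
    by_cases hx : 0 ≤ x
    · simp only [if_pos hx, indicator_of_mem (mem_Ici.2 hx)]
      rw [mul_assoc, ← Real.exp_add]
      ring_nf
    · simp [if_neg hx, indicator_of_notMem (fun h => hx (mem_Ici.1 h))]
  rw [h1, integral_indicator measurableSet_Ici, integral_Ici_eq_integral_Ioi,
    integral_const_mul, integral_exp_neg_mul_Ioi (by linarith)]
  field_simp

lemma integrableOn_mul_exp {lam : ℝ} (hlam : 0 < lam) :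
    IntegrableOn (fun x : ℝ => lam * Real.exp (-(lam * x)) * x) (Ioi 0) := by
  have h0 : IntegrableOn (fun x : ℝ => Real.exp (-x) * x ^ ((2:ℝ) - 1)) (Ioi 0) :=
    Real.GammaIntegral_convergent (by norm_num)
  have h1 : IntegrableOn (fun x : ℝ => Real.exp (-x) * x) (Ioi 0) := by
    refine h0.congr_fun (fun x hx => ?_) measurableSet_Ioi
    norm_num
  have h2 : IntegrableOn (fun x : ℝ => Real.exp (-(lam * x)) * (lam * x)) (Ioi 0) := by
    have := (integrableOn_Ioi_comp_mul_left_iff (fun x : ℝ => Real.exp (-x) * x) 0 hlam).2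
    simp only [mul_zero] at this
    exact this h1
  refine h2.congr_fun (fun x _ => ?_) measurableSet_Ioi
  ring

lemma lintegral_id_expMeasure_lt_top {lam : ℝ} (hlam : 0 < lam) :
    ∫⁻ x, ENNReal.ofReal x ∂(expMeasure lam) < ⊤ := by
  have hd : expMeasure lam = volume.withDensity (exponentialPDF lam) := rfl
  rw [hd, show exponentialPDF lam = fun x => ENNReal.ofReal (exponentialPDFReal lam x) from rfl,
    lintegral_withDensity_eq_lintegral_mul _
    ((measurable_exponentialPDFReal lam).ennreal_ofReal) ENNReal.measurable_ofReal]
  have hfun : ∀ x, ((fun x => ENNReal.ofReal (exponentialPDFReal lam x)) * ENNReal.ofReal) x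
      = ENNReal.ofReal (exponentialPDFReal lam x * x) := by
    intro x
    simp only [Pi.mul_apply]
    by_cases hx : 0 ≤ x
    · rw [ENNReal.ofReal_mul (exponentialPDFReal_nonneg hlam x)]
    · simp [expPDFReal_eq, if_neg hx]
  rw [lintegral_congr hfun]
  have hint : Integrable (fun x => exponentialPDFReal lam x * x) := by
    have heq : (fun x => exponentialPDFReal lam x * x)
        = (Ici (0:ℝ)).indicator (fun x => lam * Real.exp (-(lam * x)) * x) := by
      funext x
      rw [expPDFReal_eq]
      by_cases hx : 0 ≤ x
      · simp [indicator_of_mem (mem_Ici.2 hx), if_pos hx]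
      · simp [if_neg hx, indicator_of_notMem (fun h => hx (mem_Ici.1 h))]
    rw [heq, integrable_indicator_iff measurableSet_Ici, integrableOn_Ici_iff_integrableOn_Ioi]
    exact integrableOn_mul_exp hlam
  have hnn : 0 ≤ᵐ[(volume : Measure ℝ)] fun x => exponentialPDFReal lam x * x := by
    filter_upwards with x
    rw [Pi.zero_apply, expPDFReal_eq]
    by_cases hx : 0 ≤ x
    · rw [if_pos hx]; positivity
    · rw [if_neg hx, zero_mul]
  exact (hasFiniteIntegral_iff_ofReal hnn).1 hint.2

/-- for every `u ≥ 0`, the Laplace transform of the exponential Poisson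
functional `I_q = ∑ₖ q^k E_{k+1}` satisfies
`E[e^{-u I_q}] = (∏_j (1 + (u/λ) q^j))⁻¹ = 1/(-u/λ; q)_∞`, the infinite product
converging. -/
theorem stmt19
    {Ω : Type*} [MeasurableSpace Ω] (P : Measure Ω) [IsProbabilityMeasure P]
    (lam q : ℝ) (hlam : 0 < lam) (hq0 : 0 < q) (hq1 : q < 1)
    (E : ℕ → Ω → ℝ)
    (hEmeas : ∀ k, Measurable (E k))
    (hEexp : ∀ k, Measure.map (E k) P = expMeasure lam)
    (hIndep : iIndepFun E P)
    (Iq : Ω → ℝ) (hIq : ∀ ω, Iq ω = ∑' k : ℕ, q ^ k * E k ω) :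
    ∀ u : ℝ, 0 ≤ u →
      Multipliable (fun j : ℕ => 1 + (u / lam) * q ^ j) ∧
      ∫ ω, Real.exp (-(u * Iq ω)) ∂P = (∏' j : ℕ, (1 + (u / lam) * q ^ j))⁻¹ := by
  intro u hu
  set c : ℕ → ℝ := fun j => u / lam * q ^ j with hc
  have hc0 : ∀ j, 0 ≤ c j := fun j => mul_nonneg (div_nonneg hu hlam.le) (pow_nonneg hq0.le j)
  have hg : Summable (fun j : ℕ => q ^ j) := summable_geometric_of_lt_one hq0.le hq1
  have hcs : Summable c := hg.mul_left _
  have hmult : Multipliable (fun j : ℕ => 1 + c j) := by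
    refine Real.multipliable_of_summable_log
      (fun n => lt_of_lt_of_le one_pos (le_add_of_nonneg_right (hc0 n))) ?_
    refine Summable.of_nonneg_of_le
      (fun n => Real.log_nonneg (le_add_of_nonneg_right (hc0 n))) (fun n => ?_) hcs
    have h := Real.log_le_sub_one_of_pos (x := 1 + c n) (by have := hc0 n; linarith)
    linarith
  refine ⟨hmult, ?_⟩
  have htendP : Filter.Tendsto (fun n => ∏ k ∈ Finset.range n, (1 + c k)) Filter.atTop
      (nhds (∏' j, (1 + c j))) := hmult.hasProd.tendsto_prod_nat
  have htp1 : 1 ≤ ∏' j, (1 + c j) := by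
    refine ge_of_tendsto' htendP fun n => ?_
    calc (1:ℝ) = ∏ k ∈ Finset.range n, 1 := (Finset.prod_const_one).symm
      _ ≤ ∏ k ∈ Finset.range n, (1 + c k) :=
        Finset.prod_le_prod (fun k _ => zero_le_one)
          (fun k _ => le_add_of_nonneg_right (hc0 k))
  have htpos : (0:ℝ) < ∏' j, (1 + c j) := lt_of_lt_of_le one_pos htp1
  set X : ℕ → Ω → ℝ := fun k ω => q ^ k * E k ω with hX
  have hXmeas : ∀ k, Measurable (X k) := fun k => (hEmeas k).const_mul _
  have hXindep : iIndepFun X P :=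
    hIndep.comp (fun k (x : ℝ) => q ^ k * x) (fun k => measurable_id.const_mul _)
  have hmgf : ∀ k : ℕ, mgf (X k) P (-u) = (1 + c k)⁻¹ := by
    intro k
    have h1 : mgf (X k) P (-u) = ∫ ω, Real.exp (-((u * q ^ k) * E k ω)) ∂P := by
      simp only [mgf, hX]
      congr 1; funext ω; congr 1; ring
    have h2 : ∫ ω, Real.exp (-((u * q ^ k) * E k ω)) ∂P
        = ∫ x, Real.exp (-((u * q ^ k) * x)) ∂(expMeasure lam) := by
      have hsm : AEStronglyMeasurable (fun x : ℝ => Real.exp (-(u * q ^ k * x)))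
          (Measure.map (E k) P) :=
        ((measurable_id.const_mul (u * q ^ k)).neg.exp).aestronglyMeasurable
      rw [← hEexp k]
      exact (integral_map (hEmeas k).aemeasurable hsm).symm
    have h3 := laplace_expMeasure hlam (mul_nonneg hu (pow_nonneg hq0.le k))
    rw [h1, h2, h3]
    congr 1
    rw [hc]
    ring
  have hSn : ∀ n : ℕ, ∫ ω, Real.exp (-(u * ∑ k ∈ Finset.range n, q ^ k * E k ω)) ∂P
      = (∏ k ∈ Finset.range n, (1 + c k))⁻¹ := by
    intro n
    have h := hXindep.mgf_sum hXmeas (Finset.range n) (t := -u)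
    have hL : mgf (∑ k ∈ Finset.range n, X k) P (-u)
        = ∫ ω, Real.exp (-(u * ∑ k ∈ Finset.range n, q ^ k * E k ω)) ∂P := by
      simp only [mgf, Finset.sum_apply, hX, neg_mul]
    rw [← hL, h, ← Finset.prod_inv_distrib]
    exact Finset.prod_congr rfl fun k _ => hmgf k
  have hnneg : ∀ᵐ ω ∂P, ∀ k, 0 ≤ E k ω := by
    rw [MeasureTheory.ae_all_iff]
    intro k
    have hmeas0 : Measure.map (E k) P (Set.Iio 0) = 0 := by
      rw [hEexp k, show expMeasure lam = volume.withDensity (exponentialPDF lam) from rfl,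
        withDensity_apply _ measurableSet_Iio]
      exact lintegral_exponentialPDF_of_nonpos le_rfl
    refine ae_iff.2 ?_
    have hset : {ω | ¬ 0 ≤ E k ω} = E k ⁻¹' Set.Iio 0 := by ext ω; simp [not_le]
    rw [hset, ← Measure.map_apply (hEmeas k) measurableSet_Iio, hmeas0]
  have hfin : ∫⁻ ω, ∑' k, ENNReal.ofReal (q ^ k * E k ω) ∂P < ⊤ := by
    rw [lintegral_tsum (fun k => ((hEmeas k).const_mul _).ennreal_ofReal.aemeasurable)]
    have hk : ∀ k : ℕ, ∫⁻ ω, ENNReal.ofReal (q ^ k * E k ω) ∂P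
        = ENNReal.ofReal (q ^ k) * ∫⁻ x, ENNReal.ofReal x ∂(expMeasure lam) := by
      intro k
      simp_rw [ENNReal.ofReal_mul (pow_nonneg hq0.le k)]
      rw [lintegral_const_mul _ (hEmeas k).ennreal_ofReal]
      rw [← lintegral_map ENNReal.measurable_ofReal (hEmeas k), hEexp k]
    simp_rw [hk]
    rw [ENNReal.tsum_mul_right]
    have hne1 : ∑' k : ℕ, ENNReal.ofReal (q ^ k) ≠ ⊤ := by
      rw [← ENNReal.ofReal_tsum_of_nonneg (fun n => pow_nonneg hq0.le n) hg]
      exact ENNReal.ofReal_ne_top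
    exact ENNReal.mul_lt_top hne1.lt_top (lintegral_id_expMeasure_lt_top hlam)
  have hsummable : ∀ᵐ ω ∂P, Summable (fun k => q ^ k * E k ω) := by
    have hmeasf : Measurable fun ω => ∑' k, ENNReal.ofReal (q ^ k * E k ω) :=
      Measurable.ennreal_tsum fun k => ((hEmeas k).const_mul _).ennreal_ofReal
    filter_upwards [ae_lt_top hmeasf hfin.ne, hnneg] with ω hω hpos
    have h3 : Summable (fun k => (q ^ k * E k ω).toNNReal) := by
      rw [← ENNReal.tsum_coe_ne_top_iff_summable]
      exact hω.ne
    refine (NNReal.summable_coe.2 h3).congr fun k => ?_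
    exact Real.coe_toNNReal _ (mul_nonneg (pow_nonneg hq0.le k) (hpos k))
  have htends : ∀ᵐ ω ∂P, Filter.Tendsto
      (fun n => Real.exp (-(u * ∑ k ∈ Finset.range n, q ^ k * E k ω))) Filter.atTop
      (nhds (Real.exp (-(u * Iq ω)))) := by
    filter_upwards [hsummable] with ω hω
    have h1 : Filter.Tendsto (fun n => ∑ k ∈ Finset.range n, q ^ k * E k ω) Filter.atTop
        (nhds (Iq ω)) := by
      rw [hIq ω]; exact hω.hasSum.tendsto_sum_nat
    exact ((Real.continuous_exp.comp
      ((continuous_const.mul continuous_id).neg)).tendsto (Iq ω)).comp h1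
  have hbound : ∀ n : ℕ, ∀ᵐ ω ∂P,
      ‖Real.exp (-(u * ∑ k ∈ Finset.range n, q ^ k * E k ω))‖ ≤ (1:ℝ) := by
    intro n
    filter_upwards [hnneg] with ω hω
    have hS : 0 ≤ ∑ k ∈ Finset.range n, q ^ k * E k ω :=
      Finset.sum_nonneg fun k _ => mul_nonneg (pow_nonneg hq0.le k) (hω k)
    rw [Real.norm_eq_abs, Real.abs_exp]
    calc Real.exp (-(u * ∑ k ∈ Finset.range n, q ^ k * E k ω)) ≤ Real.exp 0 :=
          Real.exp_le_exp.2 (neg_nonpos.2 (mul_nonneg hu hS))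
      _ = 1 := Real.exp_zero
  have hmeasF : ∀ n : ℕ, AEStronglyMeasurable
      (fun ω => Real.exp (-(u * ∑ k ∈ Finset.range n, q ^ k * E k ω))) P := fun n =>
    (((Finset.measurable_sum _ fun k _ => (hEmeas k).const_mul _).const_mul
      u).neg.exp).aestronglyMeasurable
  have hlim := tendsto_integral_of_dominated_convergence (fun _ => (1:ℝ)) hmeasF
      (integrable_const 1) hbound htends
  have hlim' : Filter.Tendsto (fun n => (∏ k ∈ Finset.range n, (1 + c k))⁻¹) Filter.atTop
      (nhds (∫ ω, Real.exp (-(u * Iq ω)) ∂P)) := hlim.congr fun n => hSn n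
  have hlim2 : Filter.Tendsto (fun n => (∏ k ∈ Finset.range n, (1 + c k))⁻¹) Filter.atTop
      (nhds ((∏' j, (1 + c j))⁻¹)) := htendP.inv₀ htpos.ne'
  exact tendsto_nhds_unique hlim' hlim2
end
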